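/- arXiv:2107.01169 — 13 statements merged into one kernel-verified Lean document; each statement's English description precedes it below -/
import Mathlib

section
/- Let X be a finite set of size s, let k ≥ 2, and let 𝔓 be a k-partial packing of X of order r. Then there exists a k-server PIR [r+s, s]-code. -/
/-- `G` is the generator matrix of a `k`-server PIR `[m,s]`-code: for every `i : Fin s`
there exist `k` pairwise disjoint recovery sets of columns, each of which sums to the
`i`-th standard basis vector of `(ZMod 2)^s`. -/
def IsPIRMatrix (s m k : ℕ) (G : Matrix (Fin s) (Fin m) (ZMod 2)) : Prop :=
  ∀ i : Fin s, ∃ R : Fin k → Finset (Fin m),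
    (Pairwise fun a b => Disjoint (R a) (R b)) ∧
    ∀ a : Fin k, (∑ j ∈ R a, fun r => G r j) = Pi.single i (1 : ZMod 2)

/-- There exists a `k`-server PIR `[m,s]`-code. -/
def ExistsPIRCode (s m k : ℕ) : Prop :=
  ∃ G : Matrix (Fin s) (Fin m) (ZMod 2), IsPIRMatrix s m k G

/-- A `k`-partial packing of a finite set `X`: a family of `k-1` partitions of `X` such that
every block has at least two elements and two blocks from distinct partitions meet in at
most one element. -/
structure PartialPacking (X : Type*) [DecidableEq X] [Fintype X] (k : ℕ) where
  parts : Fin (k - 1) → Finset (Finset X)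
  partition : ∀ i, ∀ x : X, ∃! B, B ∈ parts i ∧ x ∈ B
  blockSize : ∀ i, ∀ B ∈ parts i, 2 ≤ B.card
  cross : ∀ i j, i ≠ j → ∀ B ∈ parts i, ∀ C ∈ parts j, (B ∩ C).card ≤ 1

/-- The order of a partial packing: the total number of blocks in its partitions. -/
def PartialPacking.order {X : Type*} [DecidableEq X] [Fintype X] {k : ℕ}
    (P : PartialPacking X k) : ℕ :=
  ∑ i, (P.parts i).card

/-- If `X` is a finite set of size `s`, `k ≥ 2`, and `𝔓` is a `k`-partial
packing of `X` of order `r`, then there exists a `k`-server PIR `[r+s, s]`-code. -/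
theorem pir_code_of_partial_packing {X : Type*} [DecidableEq X] [Fintype X]
    (s k r : ℕ) (hs : Fintype.card X = s) (hk : 2 ≤ k)
    (𝔓 : PartialPacking X k) (hr : 𝔓.order = r) :
    ExistsPIRCode s (r + s) k := by
  classical
  subst hr
  set e : X ≃ Fin s := Fintype.equivFinOfCardEq hs with he
  let ι := (Σ a : Fin (k-1), {B // B ∈ 𝔓.parts a}) ⊕ X
  have hcard : Fintype.card ι = 𝔓.order + s := by
    simp [ι, PartialPacking.order, Fintype.card_sigma, Fintype.card_coe, hs]
  let φ : ι ≃ Fin (𝔓.order + s) := Fintype.equivFinOfCardEq hcard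
  refine ⟨fun i j => Sum.elim
      (fun p : Σ a : Fin (k-1), {B // B ∈ 𝔓.parts a} =>
        if e.symm i ∈ p.2.1 then (1 : ZMod 2) else 0)
      (fun y => if e y = i then 1 else 0) (φ.symm j), ?_⟩
  intro i
  set x := e.symm i with hx
  have hblk : ∀ a : Fin (k-1), ∃ B, B ∈ 𝔓.parts a ∧ x ∈ B := fun a =>
    ((𝔓.partition a x).exists).imp fun B h => h
  choose blk hblk1 hblk2 using hblk
  let idx : Fin k → Fin (k-1) := fun a => ⟨a.val - 1, by have := a.isLt; omega⟩
  let R' : Fin k → Finset ι := fun a =>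
    if a.val = 0 then {Sum.inr x}
    else insert (Sum.inl ⟨idx a, ⟨blk (idx a), hblk1 _⟩⟩)
        (((blk (idx a)).erase x).map .inr)
  have hcross : ∀ a b : Fin (k-1), a ≠ b → ∀ y, y ∈ (blk a).erase x →
      y ∉ (blk b).erase x := by
    intro a b hab y hya hyb
    have h1 := 𝔓.cross a b hab _ (hblk1 a) _ (hblk1 b)
    have hsub : ({x, y} : Finset X) ⊆ blk a ∩ blk b := by
      intro z hz
      simp only [Finset.mem_insert, Finset.mem_singleton] at hz
      rcases hz with rfl | rfl
      · exact Finset.mem_inter.2 ⟨hblk2 a, hblk2 b⟩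
      · exact Finset.mem_inter.2 ⟨Finset.mem_of_mem_erase hya, Finset.mem_of_mem_erase hyb⟩
    have hy : y ≠ x := Finset.ne_of_mem_erase hya
    have : 2 ≤ (blk a ∩ blk b).card := by
      calc 2 = ({x, y} : Finset X).card := by
              rw [Finset.card_insert_of_notMem (by simp [Ne.symm hy]), Finset.card_singleton]
           _ ≤ _ := Finset.card_le_card hsub
    omega
  refine ⟨fun a => (R' a).map φ.toEmbedding, ?_, ?_⟩
  · intro a b hab
    rw [Finset.disjoint_map, Finset.disjoint_left]
    intro j hja hjb
    by_cases ha : a.val = 0 <;> by_cases hb : b.val = 0 <;>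
      simp only [R', ha, hb, if_true, if_false, if_neg, Finset.mem_singleton,
        Finset.mem_insert, Finset.mem_map, Function.Embedding.inr, Function.Embedding.coeFn_mk] at hja hjb
    · exact hab (Fin.ext (ha.trans hb.symm))
    · subst hja
      rcases hjb with h | ⟨y, hy, h⟩
      · exact absurd h (by simp)
      · obtain rfl : y = x := by injection h with h'
        exact Finset.notMem_erase x _ hy
    · subst hjb
      rcases hja with h | ⟨y, hy, h⟩
      · exact absurd h (by simp)
      · obtain rfl : y = x := by injection h with h'
        exact Finset.notMem_erase x _ hy
    · have hidx : idx a ≠ idx b := by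
        intro h
        apply hab
        have : a.val - 1 = b.val - 1 := congrArg Fin.val h
        exact Fin.ext (by omega)
      rcases hja with rfl | ⟨y, hy, rfl⟩
      · rcases hjb with h | ⟨y, hy, h⟩
        · have h1 : (⟨idx a, ⟨blk (idx a), hblk1 _⟩⟩ : Σ a : Fin (k-1), {B // B ∈ 𝔓.parts a})
              = ⟨idx b, ⟨blk (idx b), hblk1 _⟩⟩ := by injection h with h'
          exact hidx (congrArg Sigma.fst h1)
        · exact absurd h (by simp)
      · rcases hjb with h | ⟨z, hz, h⟩
        · exact absurd h (by simp)
        · obtain rfl : z = y := by injection h with h'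
          exact hcross _ _ hidx _ hy hz
  · intro a
    rw [Finset.sum_map]
    by_cases ha : a.val = 0
    · simp only [R', ha, if_true, Finset.sum_singleton, Equiv.coe_toEmbedding,
        Equiv.symm_apply_apply, Sum.elim_inr]
      funext rr
      have : e x = i := by rw [hx, Equiv.apply_symm_apply]
      simp [this, Pi.single_apply, eq_comm]
    · simp only [R', ha, if_false]
      rw [Finset.sum_insert (by simp [Function.Embedding.inr])]
      simp only [Equiv.coe_toEmbedding, Equiv.symm_apply_apply, Sum.elim_inl]
      rw [Finset.sum_map]
      simp only [Function.Embedding.inr, Function.Embedding.coeFn_mk, Equiv.symm_apply_apply, Sum.elim_inr]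
      funext rr
      simp only [Pi.add_apply, Finset.sum_apply, Pi.single_apply]
      have h1 : ∀ y, (if e y = rr then (1 : ZMod 2) else 0)
          = if y = e.symm rr then 1 else 0 := by
        intro y
        by_cases hy : e y = rr
        · rw [if_pos hy, if_pos (by rw [← hy, Equiv.symm_apply_apply])]
        · rw [if_neg hy, if_neg (fun h => hy (by rw [h, Equiv.apply_symm_apply]))]
      have hsum : (∑ y ∈ (blk (idx a)).erase x, if e y = rr then (1 : ZMod 2) else 0)
          = if e.symm rr ∈ (blk (idx a)).erase x then 1 else 0 := by
        simp only [h1]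
        rw [Finset.sum_ite_eq' ((blk (idx a)).erase x) (e.symm rr) (fun _ => (1 : ZMod 2))]
      change (if e.symm rr ∈ blk (idx a) then (1 : ZMod 2) else 0) +
          (∑ y ∈ (blk (idx a)).erase x, if e y = rr then (1 : ZMod 2) else 0) = _
      rw [hsum]
      have hrr : (rr = i) ↔ (e.symm rr = x) := by
        rw [hx]
        exact ⟨fun h => by rw [h], fun h => e.symm.injective h⟩
      by_cases hc : e.symm rr = x
      · rw [if_pos (show e.symm rr ∈ blk (idx a) by rw [hc]; exact hblk2 (idx a)),
          if_neg (show e.symm rr ∉ (blk (idx a)).erase x by simp [hc]),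
          if_pos (hrr.2 hc)]
        ring
      · have hri : ¬ rr = i := fun h => hc (hrr.1 h)
        by_cases hm : e.symm rr ∈ blk (idx a)
        · rw [if_pos hm, if_pos (Finset.mem_erase.2 ⟨hc, hm⟩), if_neg hri]
          decide
        · rw [if_neg hm, if_neg (fun h => hm (Finset.mem_of_mem_erase h)), if_neg hri]
          ring
end

section
/- Let k ≥ 2 and s = a_1 · a_2 ⋯ a_{k−1} with each a_i ≥ 2 an integer. Then for each integer w with 1 ≤ w ≤ k−1 there exists a (w+1)-server PIR [m,s]-code with m = s + s/a_1 + s/a_2 + ⋯ + s/a_w. In particular, if s = h^{k−1} for an integer h ≥ 2, then for each w with 1 ≤ w ≤ k−1 there exists a (w+1)-server PIR [s + w·(s/h), s]-code. -/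
lemma existsPIR_aux {s m k : ℕ} {κ : Type} [Fintype κ] [DecidableEq κ]
    (e : κ ≃ Fin m) (G : Fin s → κ → ZMod 2)
    (h : ∀ i : Fin s, ∃ R : Fin k → Finset κ,
      (Pairwise fun a b => Disjoint (R a) (R b)) ∧
      ∀ a, (∑ j ∈ R a, fun r => G r j) = Pi.single i (1 : ZMod 2)) :
    ExistsPIRCode s m k := by
  refine ⟨fun r j => G r (e.symm j), fun i => ?_⟩
  obtain ⟨R, hdis, hsum⟩ := h i
  refine ⟨fun a => (R a).map e.toEmbedding, fun a b hab => ?_, fun a => ?_⟩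
  · simpa [Finset.disjoint_map] using hdis hab
  · rw [Finset.sum_map]
    simpa using hsum a

lemma pir_core (s w : ℕ) (β : Fin w → Type) [∀ i, Fintype (β i)] [∀ i, DecidableEq (β i)]
    (f : ∀ i, Fin s → β i)
    (hf : ∀ i j : Fin w, i ≠ j → ∀ x y : Fin s, f i x = f i y → f j x = f j y → x = y) :
    ExistsPIRCode s (s + ∑ i, Fintype.card (β i)) (w + 1) := by
  classical
  have ecard : Fintype.card (Fin s ⊕ Σ i, β i) = s + ∑ i, Fintype.card (β i) := by simp
  refine existsPIR_aux (Fintype.equivFinOfCardEq ecard)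
    (fun r => Sum.elim (fun y => if r = y then 1 else 0)
      (fun p => if f p.1 r = p.2 then 1 else 0)) ?_
  intro x
  refine ⟨Fin.cases {Sum.inl x} (fun i => insert (Sum.inr ⟨i, f i x⟩)
      ((Finset.univ.filter (fun y => f i y = f i x ∧ y ≠ x)).image Sum.inl)), ?_, ?_⟩
  · have h1 : ∀ i : Fin w, Disjoint ({Sum.inl x} : Finset (Fin s ⊕ Σ i, β i))
        (insert (Sum.inr ⟨i, f i x⟩)
          ((Finset.univ.filter (fun y => f i y = f i x ∧ y ≠ x)).image Sum.inl)) := by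
      intro i
      simp [Finset.disjoint_left]
    have h2 : ∀ i i' : Fin w, i ≠ i' →
        Disjoint (insert (Sum.inr (⟨i, f i x⟩ : Σ i, β i))
          ((Finset.univ.filter (fun y => f i y = f i x ∧ y ≠ x)).image
            (Sum.inl : Fin s → Fin s ⊕ Σ i, β i)))
        (insert (Sum.inr (⟨i', f i' x⟩ : Σ i, β i))
          ((Finset.univ.filter (fun y => f i' y = f i' x ∧ y ≠ x)).image Sum.inl)) := by
      intro i i' hne
      rw [Finset.disjoint_left]
      intro c hc hc'
      simp only [Finset.mem_insert, Finset.mem_image, Finset.mem_filter, Finset.mem_univ,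
        true_and] at hc hc'
      rcases hc with rfl | ⟨y, ⟨hy1, hy2⟩, rfl⟩
      · rcases hc' with h | ⟨y, _, h⟩
        · exact hne (congrArg Sigma.fst (Sum.inr_injective h))
        · exact Sum.inr_ne_inl h.symm
      · rcases hc' with h | ⟨y', ⟨hy1', hy2'⟩, h⟩
        · exact Sum.inl_ne_inr h
        · obtain rfl : y = y' := Sum.inl_injective h.symm
          exact hy2 (hf i i' hne y x hy1 hy1')
    intro a b hab
    induction a using Fin.cases with
    | zero =>
      induction b using Fin.cases with
      | zero => exact absurd rfl hab
      | succ j => simpa using h1 j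
    | succ i =>
      induction b using Fin.cases with
      | zero => simpa using (h1 i).symm
      | succ j =>
        have hij : i ≠ j := fun h => hab (by rw [h])
        simpa using h2 i j hij
  · intro a
    induction a using Fin.cases with
    | zero =>
      funext r
      simp [Pi.single_apply]
    | succ i =>
      simp only [Fin.cases_succ]
      rw [Finset.sum_insert (by simp)]
      funext r
      rw [Pi.add_apply, Finset.sum_apply, Finset.sum_image (fun a _ b _ h => Sum.inl_injective h)]
      simp only [Sum.elim_inl, Sum.elim_inr]
      rw [Finset.sum_ite_eq]
      simp only [Finset.mem_filter, Finset.mem_univ, true_and]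
      rcases eq_or_ne r x with rfl | hrx
      · simp [Pi.single_apply]
      · by_cases hfr : f i r = f i x
        · simp [hfr, hrx, Pi.single_apply]
          rfl
        · simp [hfr, hrx, Pi.single_apply]

/-- If `k ≥ 2` and `s = a_1 ⋯ a_{k-1}` with each `a_i ≥ 2`, then for each
`1 ≤ w ≤ k-1` there is a `(w+1)`-server PIR `[s + s/a_1 + ⋯ + s/a_w, s]`-code; in
particular, if `s = h^{k-1}` with `h ≥ 2`, then for each `1 ≤ w ≤ k-1` there is a
`(w+1)`-server PIR `[s + w·(s/h), s]`-code. -/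
theorem pir_code_of_product (k : ℕ) (hk : 2 ≤ k) :
    (∀ (a : Fin (k - 1) → ℕ), (∀ i, 2 ≤ a i) → ∀ s : ℕ, s = ∏ i, a i →
      ∀ w : ℕ, 1 ≤ w → ∀ (hw : w ≤ k - 1),
        ExistsPIRCode s (s + ∑ i : Fin w, s / a (Fin.castLE hw i)) (w + 1)) ∧
    (∀ h s : ℕ, 2 ≤ h → s = h ^ (k - 1) →
      ∀ w : ℕ, 1 ≤ w → w ≤ k - 1 → ExistsPIRCode s (s + w * (s / h)) (w + 1)) := by
  have part1 : ∀ (a : Fin (k - 1) → ℕ), (∀ i, 2 ≤ a i) → ∀ s : ℕ, s = ∏ i, a i →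
      ∀ w : ℕ, 1 ≤ w → ∀ (hw : w ≤ k - 1),
        ExistsPIRCode s (s + ∑ i : Fin w, s / a (Fin.castLE hw i)) (w + 1) := by
    intro a ha s hs w _ hw
    subst hs
    classical
    set c : Fin w → Fin (k - 1) := Fin.castLE hw with hc
    have hcinj : Function.Injective c := Fin.castLE_injective hw
    let β : Fin w → Type := fun i => ∀ j : Fin (k - 1), Fin (if j = c i then 1 else a j)
    let E : (∀ j : Fin (k - 1), Fin (a j)) ≃ Fin (∏ j, a j) := finPiFinEquiv
    let f : ∀ i : Fin w, Fin (∏ j, a j) → β i := fun i x j =>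
      if h : j = c i then Fin.cast (by simp [h]) (0 : Fin 1)
      else Fin.cast (by simp [h]) (E.symm x j)
    have key : ∀ (i : Fin w) (x y : Fin (∏ j, a j)), f i x = f i y →
        ∀ j, j ≠ c i → E.symm x j = E.symm y j := by
      intro i x y hxy j hj
      have h := congrFun hxy j
      simp only [f, dif_neg hj] at h
      exact Fin.cast_injective _ h
    have hf : ∀ i j : Fin w, i ≠ j → ∀ x y, f i x = f i y → f j x = f j y → x = y := by
      intro i i' hne x y hx hy
      apply E.symm.injective
      funext j
      by_cases hj : j = c i
      · have hj' : j ≠ c i' := by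
          rw [hj]; intro h; exact hne (hcinj h)
        exact key i' x y hy j hj'
      · exact key i x y hx j hj
    have hcard : ∀ i : Fin w, Fintype.card (β i) = (∏ j, a j) / a (c i) := by
      intro i
      have h1 : a (c i) * ∏ j ∈ Finset.univ.erase (c i), a j = ∏ j, a j :=
        Finset.mul_prod_erase _ _ (Finset.mem_univ _)
      have h2 : Fintype.card (β i) = ∏ j ∈ Finset.univ.erase (c i), a j := by
        simp only [β, Fintype.card_pi, Fintype.card_fin]
        rw [← Finset.mul_prod_erase Finset.univ _ (Finset.mem_univ (c i)), if_pos rfl, one_mul]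
        exact Finset.prod_congr rfl fun j hj => if_neg (Finset.ne_of_mem_erase hj)
      rw [h2, ← h1, Nat.mul_div_cancel_left _ (by linarith [ha (c i)])]
    have := pir_core (∏ j, a j) w β f hf
    rwa [Finset.sum_congr rfl (fun i _ => hcard i)] at this
  refine ⟨part1, fun h s hh hs w hw1 hw => ?_⟩
  have := part1 (fun _ => h) (fun _ => hh) s (by
    rw [hs, Finset.prod_const, Finset.card_univ, Fintype.card_fin]) w hw1 hw
  simpa [Finset.sum_const, mul_comm] using this
end

section
/- Let q be a prime power, let N ≥ 3, and set s = (q^{N+1}−1)/(q−1), the number of points of the projective space PG(N,q). Suppose that the set of lines of PG(N,q) admits a packing, i.e., a partition of the set of all lines into resolution classes. Then for every integer k with 2 ≤ k ≤ 1 + (q^N−1)/(q−1) there exists a k-server PIR [m,s]-code with m = s + (k−1)·s/(q+1). -/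
/-- The lines of `PG(N,q)`, modeled as the two-dimensional linear subspaces of `F^{N+1}`. -/
abbrev ProjLine (F : Type*) [Field F] (N : ℕ) :=
  {W : Submodule F (Fin (N + 1) → F) // Module.finrank F W = 2}

/-- A point of `PG(N,q)` lies on a line iff its underlying one-dimensional subspace is
contained in the corresponding two-dimensional subspace. -/
def projPointOnLine {F : Type*} [Field F] {N : ℕ}
    (P : Projectivization F (Fin (N + 1) → F)) (L : ProjLine F N) : Prop :=
  P.submodule ≤ L.1

/-- A resolution class: a set of lines such that every point lies on exactly one of them. -/
def IsResolutionClass {F : Type*} [Field F] {N : ℕ} (C : Set (ProjLine F N)) : Prop :=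
  ∀ P : Projectivization F (Fin (N + 1) → F), ∃! L, L ∈ C ∧ projPointOnLine P L

/-- A packing of the lines of `PG(N,q)`: a partition of the set of all lines into
resolution classes. -/
def IsLinePacking {F : Type*} [Field F] {N : ℕ} (Pk : Set (Set (ProjLine F N))) : Prop :=
  (∀ C ∈ Pk, IsResolutionClass C) ∧ ∀ L : ProjLine F N, ∃! C, C ∈ Pk ∧ L ∈ C


set_option linter.unusedSectionVars false
set_option linter.unnecessarySimpa false
open Module


section Counting

/-- Fiber-counting: if every fiber of `f` has `n` elements, `card α = card β * n`. -/
lemma nat_card_of_fibers {α β : Type*} [Finite α] [Finite β] (f : α → β) (n : ℕ)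
    (h : ∀ b, Nat.card {a // f a = b} = n) : Nat.card α = Nat.card β * n := by
  classical
  cases nonempty_fintype α
  cases nonempty_fintype β
  calc Nat.card α = Nat.card ((b : β) × {a // f a = b}) :=
        (Nat.card_congr (Equiv.sigmaFiberEquiv f)).symm
    _ = Nat.card β * n := by
        rw [Nat.card_eq_fintype_card, Fintype.card_sigma]
        have : ∀ b : β, Fintype.card {a // f a = b} = n := by
          intro b; rw [← Nat.card_eq_fintype_card]; exact h b
        simp [this, Finset.sum_const, Finset.card_univ, Nat.card_eq_fintype_card, mul_comm]

lemma nat_card_subtype_ne {α : Type*} [Finite α] (a : α) :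
    Nat.card {x // x ≠ a} = Nat.card α - 1 := by
  classical
  cases nonempty_fintype α
  simp only [Nat.card_eq_fintype_card]
  have : Fintype.card {x // ¬ (x = a)} = Fintype.card α - Fintype.card {x // x = a} :=
    Fintype.card_subtype_compl _
  simpa [Fintype.card_subtype_eq] using this

lemma nat_card_subtype_and_ne {α : Type*} [Finite α] (p : α → Prop) (a : α) (ha : p a) :
    Nat.card {x // p x ∧ x ≠ a} = Nat.card {x // p x} - 1 := by
  have e : {x // p x ∧ x ≠ a} ≃ {y : {x // p x} // y ≠ ⟨a, ha⟩} :=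
    { toFun := fun x => ⟨⟨x.1, x.2.1⟩, fun h => x.2.2 (congrArg Subtype.val h)⟩
      invFun := fun y => ⟨y.1.1, y.1.2, fun h => y.2 (Subtype.ext h)⟩
      left_inv := fun x => rfl
      right_inv := fun y => rfl }
  rw [Nat.card_congr e, nat_card_subtype_ne]

end Counting

section Proj

variable {F V : Type*} [Field F] [Fintype F] [AddCommGroup V] [Module F V] [Fintype V]
  [DecidableEq V]

instance : Finite (Projectivization F V) :=
  Finite.of_surjective (fun v : {v : V // v ≠ 0} => Projectivization.mk F v.1 v.2)
    (fun P => ⟨⟨P.rep, P.rep_nonzero⟩, P.mk_rep⟩)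

lemma proj_mk_eq_iff (P : Projectivization F V) (v : V) (hv : v ≠ 0) :
    Projectivization.mk F v hv = P ↔ v ∈ P.submodule := by
  constructor
  · rintro rfl
    rw [Projectivization.submodule_mk]
    exact Submodule.mem_span_singleton_self v
  · intro h
    apply Projectivization.submodule_injective
    rw [Projectivization.submodule_mk]
    refine Submodule.eq_of_le_of_finrank_eq ((Submodule.span_singleton_le_iff_mem v _).2 h) ?_
    rw [finrank_span_singleton hv, Projectivization.finrank_submodule]

/-- nonzero vectors of a submodule, counted. -/
lemma nat_card_nonzero_mem (W : Submodule F V) :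
    Nat.card {v : V // v ∈ W ∧ v ≠ 0} = Fintype.card F ^ finrank F W - 1 := by
  classical
  have e : {v : V // v ∈ W ∧ v ≠ 0} ≃ {w : W // w ≠ 0} :=
    { toFun := fun v => ⟨⟨v.1, v.2.1⟩, fun h => v.2.2 (congrArg Subtype.val h)⟩
      invFun := fun w => ⟨w.1.1, w.1.2, fun h => w.2 (Subtype.ext h)⟩
      left_inv := fun v => rfl
      right_inv := fun w => rfl }
  rw [Nat.card_congr e, nat_card_subtype_ne, Nat.card_eq_fintype_card,
    card_eq_pow_finrank (K := F)]

/-- The number of projective points inside a subspace `W`. -/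
lemma nat_card_points_le (W : Submodule F V) :
    Nat.card {P : Projectivization F V // P.submodule ≤ W} * (Fintype.card F - 1)
      = Fintype.card F ^ finrank F W - 1 := by
  classical
  set β := {P : Projectivization F V // P.submodule ≤ W}
  have hf : ∀ (v : {v : V // v ∈ W ∧ v ≠ 0}),
      (Projectivization.mk F v.1 v.2.2).submodule ≤ W := by
    intro v
    rw [Projectivization.submodule_mk]
    exact (Submodule.span_singleton_le_iff_mem _ _).2 v.2.1
  set f : {v : V // v ∈ W ∧ v ≠ 0} → β := fun v => ⟨Projectivization.mk F v.1 v.2.2, hf v⟩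
  have hfib : ∀ b : β, Nat.card {a // f a = b} = Fintype.card F - 1 := by
    intro b
    have e : {a // f a = b} ≃ {v : V // v ∈ b.1.submodule ∧ v ≠ 0} :=
      { toFun := fun a => ⟨a.1.1, by
          have := congrArg Subtype.val a.2
          exact (proj_mk_eq_iff b.1 a.1.1 a.1.2.2).1 this, a.1.2.2⟩
        invFun := fun v => ⟨⟨v.1, b.2 v.2.1, v.2.2⟩,
          Subtype.ext ((proj_mk_eq_iff b.1 v.1 v.2.2).2 v.2.1)⟩
        left_inv := fun a => by ext; rfl
        right_inv := fun v => by ext; rfl }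
    rw [Nat.card_congr e, nat_card_nonzero_mem, Projectivization.finrank_submodule, pow_one]
  have := nat_card_of_fibers f (Fintype.card F - 1) hfib
  rw [nat_card_nonzero_mem] at this
  omega

end Proj


set_option linter.unusedSectionVars false

section Geom
variable {F V : Type*} [Field F] [AddCommGroup V] [Module F V] [FiniteDimensional F V]

lemma finrank_sup_eq_two (P Q : Projectivization F V) (h : P ≠ Q) :
    finrank F ↥(P.submodule ⊔ Q.submodule) = 2 := by
  have hinf : P.submodule ⊓ Q.submodule = ⊥ := by
    by_contra hne
    obtain ⟨v, hv, hv0⟩ := Submodule.exists_mem_ne_zero_of_ne_bot hne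
    have e1 : Submodule.span F {v} = P.submodule :=
      Submodule.eq_of_le_of_finrank_eq
        ((Submodule.span_singleton_le_iff_mem v _).2 hv.1)
        (by rw [finrank_span_singleton hv0, Projectivization.finrank_submodule])
    have e2 : Submodule.span F {v} = Q.submodule :=
      Submodule.eq_of_le_of_finrank_eq
        ((Submodule.span_singleton_le_iff_mem v _).2 hv.2)
        (by rw [finrank_span_singleton hv0, Projectivization.finrank_submodule])
    exact h (Projectivization.submodule_injective (e1.symm.trans e2))
  have h2 := Submodule.finrank_sup_add_finrank_inf_eq P.submodule Q.submodule
  rw [hinf, Projectivization.finrank_submodule, Projectivization.finrank_submodule] at h2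
  simpa using h2

lemma line_unique {W W' : Submodule F V} (hW : finrank F W = 2) (hW' : finrank F W' = 2)
    {P Q : Projectivization F V} (hPQ : P ≠ Q)
    (h1 : P.submodule ≤ W) (h2 : Q.submodule ≤ W)
    (h3 : P.submodule ≤ W') (h4 : Q.submodule ≤ W') : W = W' := by
  have hr := finrank_sup_eq_two P Q hPQ
  have e1 : P.submodule ⊔ Q.submodule = W :=
    Submodule.eq_of_le_of_finrank_eq (sup_le h1 h2) (by rw [hr, hW])
  have e2 : P.submodule ⊔ Q.submodule = W' :=
    Submodule.eq_of_le_of_finrank_eq (sup_le h3 h4) (by rw [hr, hW'])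
  exact e1.symm.trans e2

end Geom

section Main

lemma main_construction {F : Type*} [Field F] [Fintype F] {N : ℕ} (s t k' : ℕ)
    (pt : Fin s ≃ Projectivization F (Fin (N + 1) → F))
    (Ct : Fin k' → Set (ProjLine F N))
    (hCt : ∀ c, IsResolutionClass (Ct c))
    (hCtdisj : ∀ c c', c ≠ c' → ∀ L, L ∈ Ct c → L ∈ Ct c' → False)
    (clsE : ∀ c, ↥(Ct c) ≃ Fin t) :
    ExistsPIRCode s (s + k' * t) (k' + 1) := by
  classical
  obtain ⟨eJ⟩ : Nonempty ((Fin s ⊕ Fin k' × Fin t) ≃ Fin (s + k' * t)) :=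
    ⟨Fintype.equivFinOfCardEq (by simp)⟩
  have h := fun (i : Fin s) (c : Fin k') => (hCt c (pt i))
  choose Lc hL hu using h
  -- index of the line `Lc i c` within its class
  refine ⟨fun i j => Sum.elim (fun r : Fin s => if i = r then (1 : ZMod 2) else 0)
    (fun p : Fin k' × Fin t =>
      if projPointOnLine (pt i) ((clsE p.1).symm p.2).1 then 1 else 0) (eJ.symm j), fun i => ?_⟩
  refine ⟨Fin.cases {eJ (Sum.inl i)} (fun c =>
      insert (eJ (Sum.inr (c, clsE c ⟨Lc i c, (hL i c).1⟩)))
        (((Finset.univ.filter fun r => projPointOnLine (pt r) (Lc i c)).erase i).image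
          (fun r => eJ (Sum.inl r)))), ?_, ?_⟩
  · -- pairwise disjointness
    have key : ∀ c c' : Fin k', c ≠ c' → ∀ r : Fin s, r ≠ i →
        projPointOnLine (pt r) (Lc i c) → projPointOnLine (pt r) (Lc i c') → False := by
      intro c c' hcc r hri honc honc'
      have hLcc : Lc i c ≠ Lc i c' := by
        intro hEq
        exact hCtdisj c c' hcc (Lc i c) (hL i c).1 (hEq ▸ (hL i c').1)
      exact hLcc (Subtype.ext (line_unique (Lc i c).2 (Lc i c').2
        (fun hEq => hri (pt.injective hEq) : pt r ≠ pt i)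
        honc (hL i c).2 honc' (hL i c').2))
    intro a b hab
    have sym : ∀ c : Fin k',
        Disjoint ({eJ (Sum.inl i)} : Finset (Fin (s + k' * t)))
          (insert (eJ (Sum.inr (c, clsE c ⟨Lc i c, (hL i c).1⟩)))
            (((Finset.univ.filter fun r => projPointOnLine (pt r) (Lc i c)).erase i).image
              (fun r => eJ (Sum.inl r)))) := by
      intro c
      rw [Finset.disjoint_singleton_left, Finset.mem_insert]
      rintro (hEq | hmem)
      · simpa using eJ.injective hEq
      · obtain ⟨r, hr, hEq⟩ := Finset.mem_image.1 hmem
        exact (Finset.mem_erase.1 hr).1 (by simpa using eJ.injective hEq)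
    induction a using Fin.cases with
    | zero =>
      induction b using Fin.cases with
      | zero => exact absurd rfl hab
      | succ c => simpa using sym c
    | succ c =>
      induction b using Fin.cases with
      | zero => simpa using (sym c).symm
      | succ c' =>
        have hcc : c ≠ c' := fun hEq => hab (by rw [hEq])
        simp only [Fin.cases_succ]
        rw [Finset.disjoint_left]
        
        intro j hj hj'
        rcases Finset.mem_insert.1 hj with hEq | hmem
        · rcases Finset.mem_insert.1 hj' with hEq' | hmem'
          · have h2 := eJ.injective (hEq.symm.trans hEq')
            simp only [Sum.inr.injEq, Prod.mk.injEq] at h2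
            exact hcc h2.1
          · obtain ⟨r, hr, hEq'⟩ := Finset.mem_image.1 hmem'
            exact absurd (eJ.injective (hEq'.trans hEq)) (by simp)
        · obtain ⟨r, hr, hEq⟩ := Finset.mem_image.1 hmem
          rcases Finset.mem_insert.1 hj' with hEq' | hmem'
          · exact absurd (eJ.injective (hEq.trans hEq')) (by simp)
          · obtain ⟨r', hr', hEq'⟩ := Finset.mem_image.1 hmem'
            have hrr : r = r' := by
              have h2 := eJ.injective (hEq.trans hEq'.symm)
              simpa using h2
            subst hrr
            obtain ⟨hri, hra⟩ := Finset.mem_erase.1 hr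
            obtain ⟨_, hrb⟩ := Finset.mem_erase.1 hr'
            exact key c c' hcc r hri (Finset.mem_filter.1 hra).2 (Finset.mem_filter.1 hrb).2
  · -- the sums
    intro a
    induction a using Fin.cases with
    | zero =>
      simp only [Fin.cases_zero]
      rw [Finset.sum_singleton]
      funext r
      simp [Pi.single_apply, eq_comm]
    | succ c =>
      simp only [Fin.cases_succ]
      have hnot : eJ (Sum.inr (c, clsE c ⟨Lc i c, (hL i c).1⟩)) ∉
          (((Finset.univ.filter fun r => projPointOnLine (pt r) (Lc i c)).erase i).image
            (fun r => eJ (Sum.inl r))) := by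
        rw [Finset.mem_image]
        rintro ⟨r, _, hEq⟩
        exact absurd (eJ.injective hEq) (by simp)
      rw [Finset.sum_insert hnot]
      funext r
      rw [Pi.add_apply, Finset.sum_apply]
      have himg : ∀ g : Fin (s + k' * t) → ZMod 2,
          (∑ j ∈ (((Finset.univ.filter fun r => projPointOnLine (pt r) (Lc i c)).erase i).image
            (fun r => eJ (Sum.inl r))), g j)
          = ∑ r' ∈ ((Finset.univ.filter fun r => projPointOnLine (pt r) (Lc i c)).erase i),
              g (eJ (Sum.inl r')) :=
        fun g => Finset.sum_image (fun x _ y _ hxy => by simpa using eJ.injective hxy)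
      rw [himg]
      simp only [Equiv.symm_apply_apply, Sum.elim_inl, Sum.elim_inr, Equiv.symm_apply_apply]
      rw [Finset.sum_ite_eq]
      by_cases hri : r = i
      · subst hri
        rw [Pi.single_apply, if_pos rfl, if_pos (hL r c).2,
          if_neg (Finset.notMem_erase r _), add_zero]
      · rw [Pi.single_apply, if_neg hri]
        by_cases hon : projPointOnLine (pt r) (Lc i c)
        · have hmem : r ∈ (Finset.univ.filter
              fun r' => projPointOnLine (pt r') (Lc i c)).erase i :=
            Finset.mem_erase.2 ⟨hri, Finset.mem_filter.2 ⟨Finset.mem_univ r, hon⟩⟩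
          rw [if_pos hon, if_pos hmem]
          rfl
        · have hmem : r ∉ (Finset.univ.filter
              fun r' => projPointOnLine (pt r') (Lc i c)).erase i :=
            fun hm => hon (Finset.mem_filter.1 (Finset.mem_erase.1 hm).2).2
          rw [if_neg hon, if_neg hmem, add_zero]

end Main

instance {F V : Type*} [Field F] [AddCommGroup V] [Module F V] [Finite V] :
    Finite (Submodule F V) :=
  Finite.of_injective (SetLike.coe) SetLike.coe_injective

/-- Let `q` be a prime power, `N ≥ 3`, and `s = (q^{N+1}-1)/(q-1)` the
number of points of `PG(N,q)`. If the lines of `PG(N,q)` admit a packing, then for every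
`2 ≤ k ≤ 1 + (q^N-1)/(q-1)` there is a `k`-server PIR `[s + (k-1)·s/(q+1), s]`-code. -/
theorem pir_code_of_projective_packing (q N : ℕ) (hq : IsPrimePow q) (hN : 3 ≤ N)
    (F : Type*) [Field F] [Fintype F] (hF : Fintype.card F = q)
    (s : ℕ) (hs : s = (q ^ (N + 1) - 1) / (q - 1))
    (hpack : ∃ Pk : Set (Set (ProjLine F N)), IsLinePacking Pk)
    (k : ℕ) (hk2 : 2 ≤ k) (hk : k ≤ 1 + (q ^ N - 1) / (q - 1)) :
    ExistsPIRCode s (s + (k - 1) * (s / (q + 1))) k := by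
  classical
  have hq2 : 2 ≤ q := hq.two_le
  have hq1pos : 0 < q - 1 := by omega
  obtain ⟨Pk, hres, huniq⟩ := hpack
  haveI : Nontrivial (Fin (N + 1) → F) :=
    ⟨0, Function.const _ 1, fun h => one_ne_zero (congrFun h 0).symm⟩
  -- total number of points
  have hPts : Nat.card (Projectivization F (Fin (N + 1) → F)) * (q - 1) = q ^ (N + 1) - 1 := by
    have h := nat_card_points_le (F := F) (V := Fin (N + 1) → F) ⊤
    rw [finrank_top, Module.finrank_fintype_fun_eq_card, Fintype.card_fin, hF] at h
    rwa [Nat.card_congr (Equiv.subtypeUnivEquiv (fun P => le_top))] at h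
  have hsN : Nat.card (Projectivization F (Fin (N + 1) → F)) = s := by
    rw [hs, ← hPts, Nat.mul_div_cancel _ hq1pos]
  -- number of points on a line
  have honL : ∀ L : ProjLine F N,
      Nat.card {P : Projectivization F (Fin (N + 1) → F) // projPointOnLine P L} = q + 1 := by
    intro L
    have h := nat_card_points_le (F := F) L.1
    rw [L.2, hF] at h
    have hsq : q ^ 2 - 1 = (q + 1) * (q - 1) := by
      obtain ⟨r, rfl⟩ : ∃ r, q = r + 2 := ⟨q - 2, by omega⟩
      have h1 : (r + 2) ^ 2 = r * r + 4 * r + 4 := by ring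
      have h2 : (r + 2 + 1) * (r + 2 - 1) = r * r + 4 * r + 3 := by
        have : r + 2 - 1 = r + 1 := by omega
        rw [this]; ring
      omega
    rw [hsq] at h
    exact Nat.eq_of_mul_eq_mul_right hq1pos h
  -- each resolution class has s / (q+1) lines
  set t := s / (q + 1) with htdef
  have hclass : ∀ C, C ∈ Pk → Nat.card ↥C * (q + 1) = s := by
    intro C hC
    have u' : ∀ P : Projectivization F (Fin (N + 1) → F),
        ∃ L, (L ∈ C ∧ projPointOnLine P L) ∧
          ∀ y, (y ∈ C ∧ projPointOnLine P y) → y = L := hres C hC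
    choose fL h1 h2 using u'
    have hfib : ∀ L : ↥C,
        Nat.card {P // (fun P => (⟨fL P, (h1 P).1⟩ : ↥C)) P = L} = q + 1 := by
      intro L
      have e : {P // (fun P => (⟨fL P, (h1 P).1⟩ : ↥C)) P = L} ≃
          {P : Projectivization F (Fin (N + 1) → F) // projPointOnLine P L.1} :=
        { toFun := fun a => ⟨a.1, by
            have h3 : fL a.1 = L.1 := congrArg Subtype.val a.2
            rw [← h3]; exact (h1 a.1).2⟩
          invFun := fun b => ⟨b.1, Subtype.ext (h2 b.1 L.1 ⟨L.2, b.2⟩).symm⟩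
          left_inv := fun a => rfl
          right_inv := fun b => rfl }
      rw [Nat.card_congr e, honL]
    have h := nat_card_of_fibers _ (q + 1) hfib
    rw [hsN] at h
    exact h.symm
  have ht : ∀ C, C ∈ Pk → Nat.card ↥C = t := by
    intro C hC
    rw [htdef, ← hclass C hC, Nat.mul_div_cancel _ (by omega : 0 < q + 1)]
  -- number of classes = number of lines through a fixed point
  obtain ⟨P0⟩ : Nonempty (Projectivization F (Fin (N + 1) → F)) := inferInstance
  have hβ : Nat.card ↥Pk =
      Nat.card {L : ProjLine F N // projPointOnLine P0 L} := by
    have w : ∀ C : ↥Pk, ∃ L, (L ∈ C.1 ∧ projPointOnLine P0 L) ∧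
        ∀ y, (y ∈ C.1 ∧ projPointOnLine P0 y) → y = L := fun C => hres C.1 C.2 P0
    choose gL hg1 hg2 using w
    refine Nat.card_congr (Equiv.ofBijective
      (fun C => ⟨gL C, (hg1 C).2⟩) ⟨?_, ?_⟩)
    · intro C C' hEq
      have hv : gL C = gL C' := congrArg Subtype.val hEq
      obtain ⟨D, _, hDu⟩ := huniq (gL C)
      have e1 : C.1 = D := hDu C.1 ⟨C.2, (hg1 C).1⟩
      have e2 : C'.1 = D := hDu C'.1 ⟨C'.2, hv ▸ (hg1 C').1⟩
      exact Subtype.ext (e1.trans e2.symm)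
    · intro L
      obtain ⟨D, ⟨hD, hLD⟩, _⟩ := huniq L.1
      exact ⟨⟨D, hD⟩, Subtype.ext (hg2 ⟨D, hD⟩ L.1 ⟨hLD, L.2⟩).symm⟩
  -- lines through P0, counted via the other points
  have hjoin : Nat.card {P : Projectivization F (Fin (N + 1) → F) // P ≠ P0} =
      Nat.card {L : ProjLine F N // projPointOnLine P0 L} * q := by
    refine nat_card_of_fibers (fun P : {P // P ≠ P0} =>
      (⟨⟨P0.submodule ⊔ P.1.submodule, finrank_sup_eq_two P0 P.1 (Ne.symm P.2)⟩,
        le_sup_left⟩ : {L : ProjLine F N // projPointOnLine P0 L})) q ?_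
    intro L
    have e : {a : {P // P ≠ P0} // (fun P : {P // P ≠ P0} =>
        (⟨⟨P0.submodule ⊔ P.1.submodule, finrank_sup_eq_two P0 P.1 (Ne.symm P.2)⟩,
          le_sup_left⟩ : {L : ProjLine F N // projPointOnLine P0 L})) a = L} ≃
        {P : Projectivization F (Fin (N + 1) → F) // projPointOnLine P L.1 ∧ P ≠ P0} :=
      { toFun := fun a => ⟨a.1.1, by
          have h3 : P0.submodule ⊔ a.1.1.submodule = L.1.1 :=
            congrArg (fun x : {L : ProjLine F N // projPointOnLine P0 L} => x.1.1) a.2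
          exact ⟨le_trans le_sup_right (le_of_eq h3), a.1.2⟩⟩
        invFun := fun b => ⟨⟨b.1, b.2.2⟩, Subtype.ext (Subtype.ext
          (Submodule.eq_of_le_of_finrank_eq (sup_le L.2 b.2.1)
            (by rw [finrank_sup_eq_two P0 b.1 (Ne.symm b.2.2), L.1.2])))⟩
        left_inv := fun a => rfl
        right_inv := fun b => rfl }
    rw [Nat.card_congr e,
      nat_card_subtype_and_ne (fun P => projPointOnLine P L.1) P0 L.2, honL]
    omega
  -- the number of classes
  have hPkcard : Nat.card ↥Pk * (q - 1) = q ^ N - 1 := by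
    have h1 : s - 1 = Nat.card ↥Pk * q := by
      rw [hβ, ← hjoin, nat_card_subtype_ne P0, hsN]
    have h2 : s * (q - 1) = q ^ (N + 1) - 1 := by rw [← hsN]; exact hPts
    have hpow : q ^ (N + 1) = q ^ N * q := pow_succ q N
    have hqa : 1 ≤ q ^ N := Nat.one_le_pow _ _ (by omega)
    have hqb : q ≤ q ^ N * q := Nat.le_mul_of_pos_left q (by omega)
    have e1 : Nat.card ↥Pk * q * (q - 1) = (s - 1) * (q - 1) := by rw [h1]
    have e2 : (s - 1) * (q - 1) = s * (q - 1) - (q - 1) := Nat.sub_one_mul s (q - 1)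
    have e3 : (q ^ N - 1) * q = q ^ N * q - q := Nat.sub_one_mul _ q
    have e4 : Nat.card ↥Pk * q * (q - 1) = (q ^ N - 1) * q := by
      rw [e1, e2, h2, hpow, e3]; omega
    have e5 : Nat.card ↥Pk * (q - 1) * q = (q ^ N - 1) * q := by
      rw [← e4]; ring
    exact Nat.eq_of_mul_eq_mul_right (by omega : 0 < q) e5
  have hdiv : (q ^ N - 1) / (q - 1) = Nat.card ↥Pk := by
    rw [← hPkcard, Nat.mul_div_cancel _ hq1pos]
  obtain ⟨k', rfl⟩ : ∃ k', k = k' + 1 := ⟨k - 1, by omega⟩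
  simp only [Nat.add_sub_cancel]
  rw [hdiv] at hk
  haveI : Fintype ↥Pk := Fintype.ofFinite _
  obtain ⟨cls⟩ : Nonempty (Fin k' ↪ ↥Pk) :=
    Function.Embedding.nonempty_iff_card_le.2
      (by rw [Fintype.card_fin, ← Nat.card_eq_fintype_card]; omega)
  haveI : Fintype (Projectivization F (Fin (N + 1) → F)) := Fintype.ofFinite _
  refine main_construction s t k'
    (Fintype.equivFinOfCardEq (by rw [← Nat.card_eq_fintype_card, hsN])).symm
    (fun c => (cls c).1) (fun c => hres _ (cls c).2) ?_ ?_
  · intro c c' hcc L hLc hLc'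
    obtain ⟨D, _, hDu⟩ := huniq L
    have e1 : (cls c).1 = D := hDu _ ⟨(cls c).2, hLc⟩
    have e2 : (cls c').1 = D := hDu _ ⟨(cls c').2, hLc'⟩
    exact hcc (cls.injective (Subtype.ext (e1.trans e2.symm)))
  · intro c
    letI : Fintype ↥((cls c).1) := Fintype.ofFinite _
    exact Fintype.equivFinOfCardEq
      (by rw [← Nat.card_eq_fintype_card]; exact ht _ (cls c).2)
end

section
/- Let q be a prime power and N ≥ 2 an integer, and set s = q^N. Then for every integer k with 2 ≤ k ≤ 1 + (q^N−1)/(q−1) there exists a k-server PIR [m,s]-code with m = s + (k−1)·q^{N−1}. -/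
open scoped Classical

/-- General (type-polymorphic) version of `IsPIRMatrix`. -/
def IsPIRMatrixG {ρ ι : Type*} (k : ℕ) (G : Matrix ρ ι (ZMod 2)) : Prop :=
  ∀ i : ρ, ∃ R : Fin k → Finset ι,
    (Pairwise fun a b => Disjoint (R a) (R b)) ∧
    ∀ a : Fin k, (∑ j ∈ R a, fun r => G r j) = Pi.single i (1 : ZMod 2)

lemma existsPIRCode_of_equiv {ρ ι : Type*} [Fintype ρ] [Fintype ι] {s m k : ℕ}
    (eρ : ρ ≃ Fin s) (eι : ι ≃ Fin m) (G : Matrix ρ ι (ZMod 2))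
    (h : IsPIRMatrixG k G) : ExistsPIRCode s m k := by
  refine ⟨fun r j => G (eρ.symm r) (eι.symm j), fun i => ?_⟩
  obtain ⟨R, hdisj, hsum⟩ := h (eρ.symm i)
  refine ⟨fun a => (R a).map eι.toEmbedding, ?_, ?_⟩
  · intro a b hab
    simpa [Finset.disjoint_map] using hdisj hab
  · intro a
    funext r
    have h1 := congrFun (hsum a) (eρ.symm r)
    simp only [Finset.sum_apply] at h1 ⊢
    rw [Finset.sum_map]
    simp only [Equiv.coe_toEmbedding, Equiv.symm_apply_apply]
    rw [h1]
    simp [Pi.single_apply, eρ.symm.injective.eq_iff]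

section Core

variable {F : Type*} [Field F] {V : Type*} [AddCommGroup V] [Module F V]
  [Fintype V]

/-- Core construction: identity block plus, for each direction, indicator columns of
the lines (cosets) in the corresponding parallelism class. -/
lemma core (k' : ℕ) (d : Fin k' → V) (hd0 : ∀ t, d t ≠ 0)
    (hdind : ∀ t t' : Fin k', ∀ c : F, c • d t = d t' → t = t') :
    IsPIRMatrixG (k' + 1)
      (fun (r : V) (j : V ⊕ (Σ t : Fin k', V ⧸ Submodule.span F {d t})) =>
        match j with
        | Sum.inl y => if r = y then (1 : ZMod 2) else 0
        | Sum.inr ⟨t, c⟩ => if (Submodule.Quotient.mk r : V ⧸ Submodule.span F {d t}) = c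
            then 1 else 0) := by
  intro i
  set L : ∀ t : Fin k', Finset V :=
    fun t => Finset.univ.filter
      (fun y => (Submodule.Quotient.mk y : V ⧸ Submodule.span F {d t})
        = Submodule.Quotient.mk i) with hL
  have memL : ∀ t y, y ∈ L t ↔ y - i ∈ Submodule.span F {d t} := by
    intro t y
    simp [hL, Submodule.Quotient.eq]
  refine ⟨Fin.cases {Sum.inl i}
      (fun t => insert (Sum.inr ⟨t, Submodule.Quotient.mk i⟩)
        (((L t).erase i).map ⟨Sum.inl, Sum.inl_injective⟩)), ?_, ?_⟩
  · -- disjointness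
    intro a b hab
    induction a using Fin.cases with
    | zero =>
      induction b using Fin.cases with
      | zero => exact absurd rfl hab
      | succ t =>
        simp only [Fin.cases_zero, Fin.cases_succ]
        rw [Finset.disjoint_left]
        rintro x hx hx'
        simp only [Finset.mem_singleton] at hx
        subst hx
        simp only [Finset.mem_insert, Finset.mem_map, Finset.mem_erase,
          Function.Embedding.coeFn_mk] at hx'
        rcases hx' with h | ⟨y, ⟨hyne, _⟩, h⟩
        · exact absurd h (by simp)
        · exact hyne (Sum.inl_injective h)
    | succ t =>
      induction b using Fin.cases with
      | zero =>
        simp only [Fin.cases_zero, Fin.cases_succ]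
        rw [Finset.disjoint_left]
        rintro x hx hx'
        simp only [Finset.mem_singleton] at hx'
        subst hx'
        simp only [Finset.mem_insert, Finset.mem_map, Finset.mem_erase,
          Function.Embedding.coeFn_mk] at hx
        rcases hx with h | ⟨y, ⟨hyne, _⟩, h⟩
        · exact absurd h (by simp)
        · exact hyne (Sum.inl_injective h)
      | succ t' =>
        have htt' : t ≠ t' := fun h => hab (by rw [h])
        simp only [Fin.cases_succ]
        rw [Finset.disjoint_left]
        rintro x hx hx'
        simp only [Finset.mem_insert, Finset.mem_map, Finset.mem_erase,
          Function.Embedding.coeFn_mk] at hx hx'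
        rcases hx with rfl | ⟨y, ⟨hyne, hyL⟩, rfl⟩
        · rcases hx' with h | ⟨z, hz, h⟩
          · exact htt' (congrArg Sigma.fst (Sum.inr_injective h))
          · exact absurd h.symm (by simp)
        · rcases hx' with h | ⟨y', ⟨hy'ne, hy'L⟩, h⟩
          · exact absurd h (by simp)
          · have hyy : y' = y := Sum.inl_injective h
            rw [hyy] at hy'L
            rw [memL] at hyL hy'L
            obtain ⟨c, hc⟩ := Submodule.mem_span_singleton.mp hyL
            obtain ⟨c', hc'⟩ := Submodule.mem_span_singleton.mp hy'L
            have hy0 : y - i ≠ 0 := sub_ne_zero.mpr hyne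
            have hcc : c' • d t' = c • d t := by rw [hc, hc']
            have hc'0 : c' ≠ 0 := by
              rintro rfl; rw [zero_smul] at hc'; exact hy0 hc'.symm
            have : (c'⁻¹ * c) • d t = d t' := by
              rw [mul_smul, ← hcc, ← mul_smul, inv_mul_cancel₀ hc'0, one_smul]
            exact htt' (hdind t t' _ this)
  · -- sums
    intro a
    induction a using Fin.cases with
    | zero =>
      simp only [Fin.cases_zero]
      funext r
      simp [Pi.single_apply]
    | succ t =>
      simp only [Fin.cases_succ]
      funext r
      rw [Finset.sum_apply]
      have hnotmem : (Sum.inr (⟨t, Submodule.Quotient.mk i⟩ :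
          Σ t : Fin k', V ⧸ Submodule.span F {d t}) :
          V ⊕ (Σ t : Fin k', V ⧸ Submodule.span F {d t})) ∉
          ((L t).erase i).map ⟨Sum.inl, Sum.inl_injective⟩ := by
        simp
      rw [Finset.sum_insert hnotmem, Finset.sum_map]
      simp only [Function.Embedding.coeFn_mk]
      have hsum2 : (∑ y ∈ (L t).erase i,
          (if r = y then (1 : ZMod 2) else 0)) =
          if r ∈ (L t).erase i then 1 else 0 := by
        rw [Finset.sum_ite_eq ((L t).erase i) r (fun _ => (1 : ZMod 2))]
      rw [hsum2]
      by_cases hri : r = i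
      · subst hri
        simp [Pi.single_apply]
      · rw [Pi.single_apply]
        rw [if_neg hri]
        by_cases hrL : (Submodule.Quotient.mk r : V ⧸ Submodule.span F {d t})
            = Submodule.Quotient.mk i
        · rw [if_pos hrL, if_pos (by simp [Finset.mem_erase, hri, hL, hrL])]
          decide
        · rw [if_neg hrL, if_neg (by simp [Finset.mem_erase, hri, hL, hrL])]
          simp

end Core

/-- Let `q` be a prime power and `N ≥ 2`, and set `s = q^N`. Then for
every `2 ≤ k ≤ 1 + (q^N - 1)/(q - 1)` there exists a `k`-server PIR `[m,s]`-code with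
`m = s + (k-1)·q^{N-1}` (from the parallelism classes of lines of `AG(N,q)`). -/
theorem pir_code_of_affine_space (q N : ℕ) (hq : IsPrimePow q) (hN : 2 ≤ N)
    (s : ℕ) (hs : s = q ^ N)
    (k : ℕ) (hk2 : 2 ≤ k) (hk : k ≤ 1 + (q ^ N - 1) / (q - 1)) :
    ExistsPIRCode s (s + (k - 1) * q ^ (N - 1)) k := by
  obtain ⟨p, n, hp, hn, hpq⟩ := hq
  haveI : Fact p.Prime := ⟨hp.nat_prime⟩
  let F := GaloisField p n
  haveI : Fintype F := Fintype.ofFinite F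
  have hcardF : Fintype.card F = q := by
    have h1 := GaloisField.card p n hn.ne'
    rw [Nat.card_eq_fintype_card] at h1
    rw [show Fintype.card F = Fintype.card (GaloisField p n) from rfl, h1, hpq]
  have hq2 : 2 ≤ q := by
    rw [← hpq]
    calc 2 ≤ p := hp.nat_prime.two_le
    _ = p ^ 1 := (pow_one p).symm
    _ ≤ p ^ n := Nat.pow_le_pow_right hp.nat_prime.pos hn
  let V := Fin N → F
  haveI : Fintype V := inferInstanceAs (Fintype (Fin N → F))
  have hfinrankV : Module.finrank F V = N := by
    rw [show Module.finrank F V = Module.finrank F (Fin N → F) from rfl]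
    simp [Module.finrank_pi]
  have hcardV : Fintype.card V = q ^ N := by
    rw [Module.card_eq_pow_finrank (K := F) (V := V), hfinrankV, hcardF]
  -- the nonzero vectors with the scalar action of Fˣ
  let X := {v : V // v ≠ 0}
  haveI : Fintype X := inferInstanceAs (Fintype {v : V // v ≠ 0})
  letI : MulAction Fˣ X :=
    { smul := fun c v => ⟨(c : F) • v.1, by
        simp [smul_ne_zero_iff, v.2, Units.ne_zero c]⟩
      one_smul := fun v => Subtype.ext (by
        show ((1 : Fˣ) : F) • v.1 = v.1; simp)
      mul_smul := fun c c' v => Subtype.ext (by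
        show ((c * c' : Fˣ) : F) • v.1 = (c : F) • ((c' : F) • v.1)
        rw [Units.val_mul, mul_smul]) }
  have hsmul_val : ∀ (c : Fˣ) (v : X), (c • v).1 = (c : F) • v.1 := fun _ _ => rfl
  let Q := MulAction.orbitRel.Quotient Fˣ X
  haveI : Fintype Q := inferInstanceAs (Fintype (MulAction.orbitRel.Quotient Fˣ X))
  -- card of orbits
  have hcardX : Fintype.card X = q ^ N - 1 := by
    rw [show Fintype.card X = Fintype.card {v : V // v ≠ 0} from rfl]
    rw [Fintype.card_subtype_compl]
    simp [hcardV]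
  have horb : ∀ ω : Q, Fintype.card (MulAction.orbit Fˣ (Quotient.out ω)) = q - 1 := by
    intro ω
    have hstab : MulAction.stabilizer Fˣ (Quotient.out ω) = ⊥ := by
      rw [eq_bot_iff]
      intro c hc
      have hcv : (c : F) • (Quotient.out ω).1 = (Quotient.out ω).1 := by
        have h2 := MulAction.mem_stabilizer_iff.mp hc
        rw [← hsmul_val]
        exact congrArg Subtype.val h2
      have h3 : ((c : F) - 1) • (Quotient.out ω).1 = 0 := by
        rw [sub_smul, one_smul, sub_eq_zero]
        exact hcv
      rcases smul_eq_zero.mp h3 with h' | h'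
      · have : (c : F) = 1 := by rwa [sub_eq_zero] at h'
        exact Subgroup.mem_bot.mpr (Units.ext this)
      · exact absurd h' (Quotient.out ω).2
    calc Fintype.card (MulAction.orbit Fˣ (Quotient.out ω))
        = Fintype.card Fˣ :=
          Fintype.card_congr ((MulAction.orbitEquivQuotientStabilizer Fˣ _).trans
            (((QuotientGroup.quotientMulEquivOfEq hstab).trans
              QuotientGroup.quotientBot).toEquiv))
      _ = q - 1 := by rw [Fintype.card_units, hcardF]
  have hcardQmul : Fintype.card Q * (q - 1) = q ^ N - 1 := by
    have h4 := Fintype.card_congr (MulAction.selfEquivSigmaOrbits Fˣ X)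
    rw [hcardX, Fintype.card_sigma] at h4
    calc Fintype.card Q * (q - 1) = ∑ _ω : Q, (q - 1) := by
          rw [Finset.sum_const, Finset.card_univ, smul_eq_mul]
      _ = ∑ ω : Q, Fintype.card (MulAction.orbit Fˣ (Quotient.out ω)) :=
          Finset.sum_congr rfl (fun ω _ => (horb ω).symm)
      _ = q ^ N - 1 := h4.symm
  have hcardQ : Fintype.card Q = (q ^ N - 1) / (q - 1) :=
    (Nat.div_eq_of_eq_mul_left (by omega) hcardQmul.symm).symm
  -- pick k - 1 pairwise independent directions
  obtain ⟨f⟩ : Nonempty (Fin (k - 1) ↪ Q) := by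
    apply Function.Embedding.nonempty_of_card_le
    rw [Fintype.card_fin, hcardQ]
    omega
  let d : Fin (k - 1) → V := fun t => ((f t).out).1
  have hd0 : ∀ t, d t ≠ 0 := fun t => ((f t).out).2
  have hdind : ∀ t t' : Fin (k - 1), ∀ c : F, c • d t = d t' → t = t' := by
    intro t t' c hc
    have hc0 : c ≠ 0 := by
      rintro rfl
      rw [zero_smul] at hc
      exact hd0 t' hc.symm
    have hrel : (Units.mk0 c hc0) • ((f t).out) = (f t').out := by
      apply Subtype.ext
      rw [hsmul_val]
      exact hc
    have : f t = f t' := by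
      have h5 : ((f t').out : X) ∈ MulAction.orbit Fˣ ((f t).out) :=
        ⟨Units.mk0 c hc0, hrel⟩
      have h6 : (MulAction.orbitRel Fˣ X).r ((f t').out) ((f t).out) := h5
      have h7 : (⟦(f t').out⟧ : Q) = ⟦(f t).out⟧ := Quotient.sound h6
      rw [Quotient.out_eq, Quotient.out_eq] at h7
      exact h7.symm
    exact f.injective this
  -- cardinality of the quotients
  have hcardquot : ∀ t : Fin (k - 1),
      Fintype.card (V ⧸ Submodule.span F {d t}) = q ^ (N - 1) := by
    intro t
    have hfr : Module.finrank F (V ⧸ Submodule.span F {d t}) = N - 1 := by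
      have h8 := Submodule.finrank_quotient_add_finrank (Submodule.span F {d t})
      rw [finrank_span_singleton (hd0 t), hfinrankV] at h8
      omega
    rw [Module.card_eq_pow_finrank (K := F), hfr, hcardF]
  -- assemble
  have hkk : k - 1 + 1 = k := by omega
  have hmain := core (F := F) (k - 1) d hd0 hdind
  rw [hkk] at hmain
  exact existsPIRCode_of_equiv
    (Fintype.equivFinOfCardEq (by rw [hcardV, hs]))
    (Fintype.equivFinOfCardEq (by
      rw [Fintype.card_sum, Fintype.card_sigma, hcardV, hs]
      congr 1
      rw [Finset.sum_congr rfl (fun t _ => hcardquot t)]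
      simp [Finset.sum_const, Finset.card_univ, mul_comm]))
    _ hmain
end

section
/- Let q be a prime power, N ≥ 2 an integer, and h an integer with 2 ≤ h ≤ q; set s = h·q^{N−1}. Then for every integer k with 2 ≤ k ≤ 1 + q^{N−1} there exists a k-server PIR [m,s]-code with m = (h+k−1)·q^{N−1} = s + (k−1)·q^{N−1}. -/
lemma exists_pir_of_equiv {I J : Type*} [Fintype I] [Fintype J] [DecidableEq I] (s m k : ℕ)
    (eI : Fin s ≃ I) (eJ : Fin m ≃ J) (G : Matrix I J (ZMod 2))
    (H : ∀ i : I, ∃ R : Fin k → Finset J,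
      (Pairwise fun a b => Disjoint (R a) (R b)) ∧
      ∀ a, (∑ j ∈ R a, fun r => G r j) = Pi.single i (1 : ZMod 2)) :
    ExistsPIRCode s m k := by
  classical
  refine ⟨fun r c => G (eI r) (eJ c), fun i => ?_⟩
  obtain ⟨R, hdisj, hsum⟩ := H (eI i)
  refine ⟨fun a => (R a).map eJ.symm.toEmbedding, fun a b hab =>
    (Finset.disjoint_map _).mpr (hdisj hab), fun a => ?_⟩
  funext r
  have h1 := congrFun (hsum a) (eI r)
  simp only [Finset.sum_apply] at h1 ⊢
  rw [Finset.sum_map]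
  simp only [Equiv.coe_toEmbedding, Equiv.apply_symm_apply] at h1 ⊢
  rw [h1, Pi.single_apply, Pi.single_apply]
  simp [eI.apply_eq_iff_eq]

open Finset in
lemma pir_aux {F : Type*} [Field F] [Fintype F] [DecidableEq F] (h K : ℕ)
    (β : Fin h ↪ F) (d : Fin K ↪ F) :
    ∃ G : Matrix (Fin h × F) ((Fin h × F) ⊕ (Fin K × F)) (ZMod 2),
      ∀ i : Fin h × F, ∃ R : Fin (K + 1) → Finset ((Fin h × F) ⊕ (Fin K × F)),
        (Pairwise fun a b => Disjoint (R a) (R b)) ∧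
        ∀ a, (∑ j ∈ R a, fun r => G r j) = Pi.single i (1 : ZMod 2) := by
  classical
  refine ⟨fun i => Sum.elim (fun i' => if i = i' then 1 else 0)
    (fun au => if i.2 = au.2 + β i.1 * d au.1 then 1 else 0), ?_⟩
  rintro ⟨b, t⟩
  refine ⟨Fin.cases {Sum.inl (b, t)}
    (fun a => insert (Sum.inr (a, t - β b * d a))
      ((Finset.univ.erase b).image fun b' => Sum.inl (b', t + (β b' - β b) * d a))), ?_, ?_⟩
  · -- pairwise disjoint
    have key : ∀ (a a' : Fin K), a ≠ a' → Disjoint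
        (insert (Sum.inr (a, t - β b * d a))
          ((Finset.univ.erase b).image fun b' => Sum.inl (b', t + (β b' - β b) * d a) : Finset ((Fin h × F) ⊕ (Fin K × F))))
        (insert (Sum.inr (a', t - β b * d a'))
          ((Finset.univ.erase b).image fun b' => Sum.inl (b', t + (β b' - β b) * d a'))) := by
      intro a a' haa
      rw [Finset.disjoint_left]
      intro x hx hx'
      simp only [Finset.mem_insert, Finset.mem_image, Finset.mem_erase, Finset.mem_univ,
        and_true] at hx hx'
      rcases hx with rfl | ⟨b1, hb1, rfl⟩
      · rcases hx' with hx' | ⟨b1, hb1, hx'⟩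
        · simp only [Sum.inr.injEq, Prod.mk.injEq] at hx'
          exact haa hx'.1
        · simp at hx'
      · rcases hx' with hx' | ⟨b2, hb2, hx'⟩
        · simp at hx'
        · simp only [Sum.inl.injEq, Prod.mk.injEq] at hx'
          obtain ⟨e1, e2⟩ := hx'
          rw [e1] at e2
          have h3 : (β b1 - β b) * (d a' - d a) = 0 := by linear_combination e2
          rcases mul_eq_zero.mp h3 with h4 | h4
          · exact hb1 (β.injective (sub_eq_zero.mp h4))
          · exact haa ((d.injective (sub_eq_zero.mp h4)).symm)
    have base : ∀ (a : Fin K), Disjoint ({Sum.inl (b, t)} : Finset ((Fin h × F) ⊕ (Fin K × F)))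
        (insert (Sum.inr (a, t - β b * d a))
          ((Finset.univ.erase b).image fun b' => Sum.inl (b', t + (β b' - β b) * d a))) := by
      intro a
      rw [Finset.disjoint_left]
      intro x hx hx'
      simp only [Finset.mem_singleton] at hx
      subst hx
      simp only [Finset.mem_insert, Finset.mem_image, Finset.mem_erase, Finset.mem_univ,
        and_true] at hx'
      rcases hx' with hx' | ⟨b1, hb1, hx'⟩
      · simp at hx'
      · simp only [Sum.inl.injEq, Prod.mk.injEq] at hx'
        exact hb1 hx'.1
    intro a a' haa
    induction a using Fin.cases with
    | zero => induction a' using Fin.cases with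
      | zero => exact absurd rfl haa
      | succ a' => simpa using base a'
    | succ a => induction a' using Fin.cases with
      | zero => simpa using (base a).symm
      | succ a' =>
        simp only [Fin.cases_succ]
        exact key a a' (fun hh => haa (by rw [hh]))
  · -- sums
    intro a
    induction a using Fin.cases with
    | zero =>
      funext r
      simp only [Fin.cases_zero, Finset.sum_singleton, Sum.elim_inl, Pi.single_apply]
    | succ a =>
      funext r
      obtain ⟨c, w⟩ := r
      simp only [Fin.cases_succ, Finset.sum_apply]
      rw [Finset.sum_insert (by simp)]
      rw [Finset.sum_image (by intro x _ y _ hxy; exact congrArg Prod.fst (Sum.inl.inj hxy))]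
      simp only [Sum.elim_inr, Sum.elim_inl]
      have step : ∀ b' ∈ Finset.univ.erase b,
          (if (c, w) = (b', t + (β b' - β b) * d a) then (1 : ZMod 2) else 0)
          = if b' = c then (if w = t + (β c - β b) * d a then 1 else 0) else 0 := by
        intro b' _
        by_cases hb : b' = c
        · subst hb; simp [Prod.ext_iff]
        · simp [Prod.ext_iff, show ¬ c = b' from fun hh => hb hh.symm, hb]
      rw [Finset.sum_congr rfl step, Finset.sum_ite_eq' (Finset.univ.erase b) c]
      simp only [Finset.mem_erase, Finset.mem_univ, and_true]
      by_cases hcb : c = b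
      · subst hcb
        simp only [ne_eq, not_true_eq_false, if_false, add_zero]
        have hrw : t - β c * d a + β c * d a = t := by ring
        rw [hrw, Pi.single_apply]
        by_cases hw : w = t <;> simp [Prod.ext_iff, hw]
      · simp only [ne_eq, hcb, not_false_eq_true, if_true]
        have h2 : t - β b * d a + β c * d a = t + (β c - β b) * d a := by ring
        rw [h2, Pi.single_apply]
        have hne : ¬ ((c, w) = (b, t)) := by simp [Prod.ext_iff, hcb]
        simp only [hne, if_false]
        by_cases hw : w = t + (β c - β b) * d a <;>
          simp [hw, CharTwo.add_self_eq_zero]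

/-- Let `q` be a prime power, `N ≥ 2`, and `2 ≤ h ≤ q`; set
`s = h·q^{N-1}`. Then for every `2 ≤ k ≤ 1 + q^{N-1}` there exists a `k`-server PIR
`[m,s]`-code with `m = (h+k-1)·q^{N-1} = s + (k-1)·q^{N-1}` (from `h` parallel
hyperplanes of `AG(N,q)`). -/
theorem pir_code_of_parallel_hyperplanes (q N h : ℕ) (hq : IsPrimePow q) (hN : 2 ≤ N)
    (hh2 : 2 ≤ h) (hhq : h ≤ q) (s : ℕ) (hs : s = h * q ^ (N - 1))
    (k : ℕ) (hk2 : 2 ≤ k) (hk : k ≤ 1 + q ^ (N - 1)) :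
    (h + k - 1) * q ^ (N - 1) = s + (k - 1) * q ^ (N - 1) ∧
      ExistsPIRCode s ((h + k - 1) * q ^ (N - 1)) k := by
  classical
  obtain ⟨p, e, hp, he, rfl⟩ := hq
  have hp' : Nat.Prime p := Nat.prime_iff.mpr hp
  haveI := Fact.mk hp'
  set Q := (p ^ e) ^ (N - 1) with hQ
  obtain ⟨k', rfl⟩ : ∃ k', k = k' + 1 := ⟨k - 1, by omega⟩
  have e1 : h + (k' + 1) - 1 = h + k' := by omega
  have e2 : (k' + 1) - 1 = k' := by omega
  refine ⟨by rw [e1, e2, add_mul, hs], ?_⟩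
  rw [e1]
  set F := GaloisField p (e * (N - 1)) with hF
  letI : Fintype F := Fintype.ofFinite F
  have hcard : Fintype.card F = Q := by
    rw [← Nat.card_eq_fintype_card, GaloisField.card p (e * (N - 1)) (Nat.mul_ne_zero (by omega) (by omega)), hQ, pow_mul]
  have hq2 : 2 ≤ p ^ e := hp'.two_le.trans (Nat.le_self_pow (by omega) p)
  have hQq : p ^ e ≤ Q := by
    calc p ^ e = (p ^ e) ^ 1 := (pow_one _).symm
    _ ≤ Q := Nat.pow_le_pow_right (by omega) (by omega)
  have hβ : Nonempty (Fin h ↪ F) := by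
    rw [Function.Embedding.nonempty_iff_card_le, hcard, Fintype.card_fin]
    omega
  have hd : Nonempty (Fin k' ↪ F) := by
    rw [Function.Embedding.nonempty_iff_card_le, hcard, Fintype.card_fin]
    omega
  obtain ⟨G, H⟩ := pir_aux h k' hβ.some hd.some
  exact exists_pir_of_equiv s ((h + k') * Q) (k' + 1)
    (Fintype.equivOfCardEq (by simp [hcard, hs]))
    (Fintype.equivOfCardEq (by simp [hcard, add_mul]))
    G H
end

section
/- Let n and n' be integers with 1 ≤ n' ≤ n, and set s = 2^{n+n'} − 2^n + 2^{n'}. Then for every integer k with 2 ≤ k ≤ 2^n + 2 there exists a k-server PIR [m,s]-code with m = s + (k−1)·s/2^{n'}. -/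
open Finset

section PIRAux

set_option linter.unusedSectionVars false


lemma two_to_one_count {F β : Type*} [AddGroup F] [DecidableEq F] [DecidableEq β]
    (S : Finset F) (f : F → β) (a : F) (ha : a ≠ 0)
    (hS : ∀ x ∈ S, x + a ∈ S)
    (hf : ∀ x y : F, f x = f y ↔ (y = x ∨ y = x + a)) :
    (S.image f).card * 2 = S.card := by
  have key : ∀ b ∈ S.image f, (S.filter (fun y => f y = b)).card = 2 := by
    intro b hb
    obtain ⟨x, hxS, rfl⟩ := Finset.mem_image.mp hb
    have hfil : S.filter (fun y => f y = f x) = {x, x + a} := by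
      ext y
      simp only [mem_filter, mem_insert, mem_singleton]
      constructor
      · rintro ⟨-, hy⟩; exact (hf x y).mp hy.symm
      · rintro (rfl | rfl)
        · exact ⟨hxS, rfl⟩
        · exact ⟨hS x hxS, ((hf x (x + a)).mpr (Or.inr rfl)).symm⟩
    rw [hfil, Finset.card_insert_of_notMem, Finset.card_singleton]
    simp only [mem_singleton]
    intro h
    exact ha (left_eq_add.mp h)
  rw [Finset.card_eq_sum_card_image f S, Finset.sum_congr rfl key, Finset.sum_const,
    smul_eq_mul, mul_comm]

lemma coset_key {F : Type*} [AddCommGroup F] [Fintype F] [DecidableEq F]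
    (hneg : ∀ x : F, -x = x)
    (P : Finset F) (hadd : ∀ x ∈ P, ∀ y ∈ P, x + y ∈ P)
    (hcard : P.card * 2 = Fintype.card F)
    {x y : F} (hx : x ∉ P) (hy : y ∉ P) : x + y ∈ P := by
  classical
  have hself : ∀ z : F, z + z = 0 := fun z => by nth_rewrite 1 [← hneg z]; exact neg_add_cancel z
  set xP := P.image (fun p => x + p) with hxP
  have hdisj : Disjoint P xP := by
    rw [Finset.disjoint_right]
    rintro z hz hzP
    obtain ⟨p, hp, rfl⟩ := Finset.mem_image.mp hz
    apply hx
    have hxx : x = (x + p) + p := by rw [add_assoc, hself p, add_zero]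
    rw [hxx]; exact hadd _ hzP _ hp
  have hcardxP : xP.card = P.card := Finset.card_image_of_injective _ (add_right_injective x)
  have huniv : P ∪ xP = univ := by
    apply Finset.eq_univ_of_card
    rw [Finset.card_union_of_disjoint hdisj, hcardxP]
    omega
  have hyu : y ∈ P ∪ xP := huniv ▸ Finset.mem_univ y
  rcases Finset.mem_union.mp hyu with h | h
  · exact absurd h hy
  · obtain ⟨p, hp, rfl⟩ := Finset.mem_image.mp h
    have : x + (x + p) = p := by rw [← add_assoc, hself x, zero_add]
    rw [this]; exact hp


lemma count_preimage_bij {F : Type*} [Fintype F] [DecidableEq F] (g : F → F)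
    (hg : Function.Injective g) (H : Finset F) :
    (univ.filter fun t => g t ∈ H).card = H.card := by
  have hgs : Function.Surjective g := Finite.surjective_of_injective hg
  have himg : (univ.filter fun t => g t ∈ H).image g = H := by
    ext y
    simp only [Finset.mem_image, mem_filter, mem_univ, true_and]
    constructor
    · rintro ⟨t, ht, rfl⟩; exact ht
    · intro hy; obtain ⟨t, rfl⟩ := hgs y; exact ⟨t, hy, rfl⟩
  rw [← Finset.card_image_of_injective (univ.filter fun t => g t ∈ H) hg, himg]

lemma core_count {F : Type*} [Field F] [Fintype F] [DecidableEq F] [CharP F 2]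
    (H : Finset F) (hadd : ∀ x ∈ H, ∀ y ∈ H, x + y ∈ H)
    (c0 c1 c2 : F) (hc2 : c2 ≠ 0)
    (hroot : ∀ t : F, c0 + (c1 * t + c2 * t ^ 2) = 0 → c1 = 0) :
    (univ.filter fun t => c0 + (c1 * t + c2 * t ^ 2) ∈ H) = ∅ ∨
    (univ.filter fun t => c0 + (c1 * t + c2 * t ^ 2) ∈ H).card = H.card := by
  have h2 : (2 : F) = 0 := by
    have := CharP.cast_eq_zero F 2; simpa using this
  have hself : ∀ z : F, z + z = 0 := fun z => CharTwo.add_self_eq_zero z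
  by_cases hc1 : c1 = 0
  · right
    subst hc1
    apply count_preimage_bij
    intro a b hab
    simp only [zero_mul, zero_add] at hab
    have h3 : c2 * a ^ 2 = c2 * b ^ 2 := by linear_combination hab
    have h4 : a ^ 2 = b ^ 2 := mul_left_cancel₀ hc2 h3
    have h5 : (a + b) ^ 2 = 0 := by rw [CharTwo.add_sq, h4]; exact hself _
    have hab0 : a + b = 0 := by
      exact pow_eq_zero_iff (two_ne_zero) |>.mp h5
    linear_combination hab0 - b * h2
  · set L : F → F := fun t => c1 * t + c2 * t ^ 2 with hLdef
    set κ : F := c1 * c2⁻¹ with hκdef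
    have hκ : κ ≠ 0 := mul_ne_zero hc1 (inv_ne_zero hc2)
    have hcκ : c2 * κ = c1 := by rw [hκdef]; field_simp
    have hL2 : ∀ t t' : F, L t = L t' ↔ (t' = t ∨ t' = t + κ) := by
      intro t t'
      constructor
      · intro h
        have e : (t + t') * (c1 + c2 * (t + t')) = 0 := by
          linear_combination h + (c1 * t' + c2 * t' ^ 2 + c2 * t * t') * h2
        rcases mul_eq_zero.mp e with h' | h'
        · left; linear_combination h' - t * h2
        · right
          have h5 : t + t' = κ := mul_left_cancel₀ hc2 (by linear_combination h' - hcκ - c1 * h2)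
          linear_combination h5 - t * h2
      · rintro (rfl | rfl)
        · rfl
        · show c1 * t + c2 * t ^ 2 = c1 * (t + κ) + c2 * (t + κ) ^ 2
          linear_combination (-κ) * hcκ + (-(c1 * κ) - c2 * t * κ) * h2
    have hLadd : ∀ t t' : F, L t + L t' = L (t + t') := by
      intro t t'
      show c1 * t + c2 * t ^ 2 + (c1 * t' + c2 * t' ^ 2) = c1 * (t + t') + c2 * (t + t') ^ 2
      rw [CharTwo.add_sq]; ring
    set S := univ.filter (fun t => c0 + L t ∈ H) with hSdef
    by_cases hSe : S = ∅
    · left; exact hSe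
    · right
      obtain ⟨t0, ht0⟩ := Finset.nonempty_iff_ne_empty.mpr hSe
      have ht0H : c0 + L t0 ∈ H := (Finset.mem_filter.mp ht0).2
      set P : Finset F := univ.image L with hPdef
      have hPcard : P.card * 2 = Fintype.card F := by
        rw [← Finset.card_univ]
        exact two_to_one_count univ L κ hκ (fun x _ => mem_univ _) hL2
      have hPadd : ∀ x ∈ P, ∀ y ∈ P, x + y ∈ P := by
        rintro x hx y hy
        obtain ⟨t, -, rfl⟩ := Finset.mem_image.mp hx
        obtain ⟨t', -, rfl⟩ := Finset.mem_image.mp hy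
        rw [hLadd]; exact Finset.mem_image_of_mem _ (mem_univ _)
      have hc0P : c0 ∉ P := by
        intro hc0
        obtain ⟨t, -, ht⟩ := Finset.mem_image.mp hc0
        have h6 : c0 + L t = 0 := by rw [ht]; exact hself c0
        exact hc1 (hroot t h6)
      set η0 : F := c0 + L t0 with hη0def
      have hη0P : η0 ∉ P := by
        intro hmem
        obtain ⟨u, -, hu⟩ := Finset.mem_image.mp hmem
        apply hc0P
        have h7 : c0 = L (u + t0) := by
          rw [← hLadd]
          linear_combination (-1) * hu - (L t0) * h2
        rw [h7]; exact Finset.mem_image_of_mem _ (mem_univ _)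
      have key : ∀ x y : F, x ∉ P → y ∉ P → x + y ∈ P :=
        fun x y hx hy => coset_key (fun z => CharTwo.neg_eq z) P hPadd hPcard hx hy
      set T := H.filter (fun η => c0 + η ∈ P) with hTdef
      have hTcc : T.card + T.card = H.card := by
        have hbij : T.card = (H.filter (fun η => ¬ (c0 + η ∈ P))).card := by
          apply Finset.card_bij' (fun η _ => η + η0) (fun η _ => η + η0)
          · rintro η hη
            rw [hTdef, Finset.mem_filter] at hη
            rw [Finset.mem_filter]
            refine ⟨hadd _ hη.1 _ ht0H, ?_⟩
            intro hmem
            have hsum : (c0 + η) + (c0 + (η + η0)) ∈ P := hPadd _ hη.2 _ hmem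
            have heq : (c0 + η) + (c0 + (η + η0)) = η0 := by
              linear_combination (c0 + η) * h2
            rw [heq] at hsum; exact hη0P hsum
          · rintro η hη
            rw [Finset.mem_filter] at hη
            rw [hTdef, Finset.mem_filter]
            refine ⟨hadd _ hη.1 _ ht0H, ?_⟩
            have heq : c0 + (η + η0) = (c0 + η) + η0 := by ring
            rw [heq]
            exact key _ _ hη.2 hη0P
          · intro η hη; linear_combination η0 * h2
          · intro η hη; linear_combination η0 * h2
        have := Finset.card_filter_add_card_filter_not (s := H)
          (p := fun η => c0 + η ∈ P)
        rw [← hTdef] at this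
        omega
      have himgθ : S.image (fun t => c0 + L t) = T := by
        ext η
        constructor
        · intro hmem
          obtain ⟨t, htS, rfl⟩ := Finset.mem_image.mp hmem
          rw [hSdef, Finset.mem_filter] at htS
          rw [hTdef, Finset.mem_filter]
          refine ⟨htS.2, ?_⟩
          have heq : c0 + (c0 + L t) = L t := by linear_combination c0 * h2
          rw [heq]; exact Finset.mem_image_of_mem _ (mem_univ t)
        · intro hmem
          rw [hTdef, Finset.mem_filter] at hmem
          obtain ⟨hηH, hηP⟩ := hmem
          obtain ⟨u, -, hu⟩ := Finset.mem_image.mp hηP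
          have heq : c0 + L u = η := by linear_combination hu + c0 * h2
          apply Finset.mem_image.mpr
          exact ⟨u, by rw [hSdef, Finset.mem_filter]; exact ⟨mem_univ _, by rw [heq]; exact hηH⟩, heq⟩
      have h2to1 : (S.image (fun t => c0 + L t)).card * 2 = S.card := by
        apply two_to_one_count S _ κ hκ
        · intro x hx
          rw [hSdef, Finset.mem_filter] at hx ⊢
          refine ⟨mem_univ _, ?_⟩
          have heq : L (x + κ) = L x := ((hL2 x (x + κ)).mpr (Or.inr rfl)).symm
          rw [heq]; exact hx.2
        · intro x y
          constructor
          · intro hxy; exact (hL2 x y).mp (by linear_combination hxy)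
          · intro hor
            have := (hL2 x y).mpr hor
            rw [this]
      rw [himgθ] at h2to1
      omega


section
variable {F : Type*} [Field F] [Fintype F] [DecidableEq F] [CharP F 2]
omit [Fintype F] [DecidableEq F] in
lemma char_two_eq_of_add_eq_zero {a b : F} (h : a + b = 0) : a = b := by
  have h2 : (2 : F) = 0 := by have := CharP.cast_eq_zero F 2; simpa using this
  linear_combination h - b * h2

omit [Fintype F] [DecidableEq F] in
lemma char_two_sq_injective : Function.Injective (fun x : F => x ^ 2) := by
  intro a b h
  simp only at h
  have h5 : (a + b) ^ 2 = 0 := by rw [CharTwo.add_sq, h]; exact CharTwo.add_self_eq_zero _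
  exact char_two_eq_of_add_eq_zero (pow_eq_zero_iff two_ne_zero |>.mp h5)

lemma arc_card (H : Finset F) (h0 : (0:F) ∈ H)
    (b : F) (hb : ∀ u : F, u ^ 2 + u ≠ b) :
    (univ.filter fun v : F × F => v.1 ^ 2 + v.1 * v.2 + b * v.2 ^ 2 ∈ H).card
      = H.card + Fintype.card F * (H.card - 1) := by
  have h2 : (2 : F) = 0 := by have := CharP.cast_eq_zero F 2; simpa using this
  have hsplit := Finset.card_filter_add_card_filter_not
    (s := univ.filter fun v : F × F => v.1 ^ 2 + v.1 * v.2 + b * v.2 ^ 2 ∈ H)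
    (p := fun v => v.2 = 0)
  rw [Finset.filter_filter, Finset.filter_filter] at hsplit
  have hA0 : (univ.filter fun v : F × F =>
      (v.1 ^ 2 + v.1 * v.2 + b * v.2 ^ 2 ∈ H) ∧ v.2 = 0).card = H.card := by
    have hbij : (univ.filter fun v : F × F =>
        (v.1 ^ 2 + v.1 * v.2 + b * v.2 ^ 2 ∈ H) ∧ v.2 = 0).card
        = (univ.filter fun x : F => x ^ 2 ∈ H).card := by
      refine Finset.card_bij' (fun v _ => v.1) (fun x _ => (x, (0:F))) ?hi ?hj ?hij ?hji
      case hi =>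
        rintro ⟨x, y⟩ hv
        rw [Finset.mem_filter] at hv
        obtain ⟨-, hQ, hy⟩ := hv
        rw [Finset.mem_filter]
        refine ⟨Finset.mem_univ _, ?_⟩
        simp only at hQ hy ⊢
        subst hy
        convert hQ using 1
        ring
      case hj =>
        intro x hx
        rw [Finset.mem_filter] at hx
        rw [Finset.mem_filter]
        refine ⟨Finset.mem_univ _, ?_, rfl⟩
        simp only
        convert hx.2 using 1
        ring
      case hij =>
        rintro ⟨x, y⟩ hv
        rw [Finset.mem_filter] at hv
        have hy : y = 0 := hv.2.2
        subst hy
        rfl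
      case hji =>
        intro x hx
        rfl
    rw [hbij]
    exact count_preimage_bij (fun x => x ^ 2) char_two_sq_injective H
  have hA1 : (univ.filter fun v : F × F =>
      (v.1 ^ 2 + v.1 * v.2 + b * v.2 ^ 2 ∈ H) ∧ ¬ v.2 = 0).card
      = Fintype.card F * (H.card - 1) := by
    have hbij : (univ.filter fun v : F × F =>
        (v.1 ^ 2 + v.1 * v.2 + b * v.2 ^ 2 ∈ H) ∧ ¬ v.2 = 0).card
        = (univ.filter fun w : F × F =>
            ((w.1 ^ 2 + w.1 + b) * w.2 ^ 2 ∈ H) ∧ ¬ w.2 = 0).card := by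
      refine Finset.card_bij' (fun v _ => (v.1 * v.2⁻¹, v.2)) (fun w _ => (w.1 * w.2, w.2))
        ?hi ?hj ?hij ?hji
      case hi =>
        rintro ⟨x, y⟩ hv
        rw [Finset.mem_filter] at hv
        obtain ⟨-, hQ, hy⟩ := hv
        simp only at hQ hy
        rw [Finset.mem_filter]
        refine ⟨Finset.mem_univ _, ?_, hy⟩
        simp only
        have heq : ((x * y⁻¹) ^ 2 + x * y⁻¹ + b) * y ^ 2 = x ^ 2 + x * y + b * y ^ 2 := by
          field_simp
        rw [heq]; exact hQ
      case hj =>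
        rintro ⟨x, y⟩ hw
        rw [Finset.mem_filter] at hw
        obtain ⟨-, hQ, hy⟩ := hw
        simp only at hQ hy
        rw [Finset.mem_filter]
        refine ⟨Finset.mem_univ _, ?_, hy⟩
        simp only
        have heq : (x * y) ^ 2 + (x * y) * y + b * y ^ 2 = (x ^ 2 + x + b) * y ^ 2 := by ring
        rw [heq]; exact hQ
      case hij =>
        rintro ⟨x, y⟩ hv
        rw [Finset.mem_filter] at hv
        have hy : y ≠ 0 := hv.2.2
        simp only [Prod.mk.injEq]
        exact ⟨by field_simp, trivial⟩
      case hji =>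
        rintro ⟨x, y⟩ hw
        rw [Finset.mem_filter] at hw
        have hy : y ≠ 0 := hw.2.2
        simp only [Prod.mk.injEq]
        exact ⟨by field_simp, trivial⟩
    rw [hbij]
    have hfib : (univ.filter fun w : F × F =>
        ((w.1 ^ 2 + w.1 + b) * w.2 ^ 2 ∈ H) ∧ ¬ w.2 = 0).card
        = ∑ u : F, ((univ.filter fun w : F × F =>
            ((w.1 ^ 2 + w.1 + b) * w.2 ^ 2 ∈ H) ∧ ¬ w.2 = 0).filter
            fun w => w.1 = u).card :=
      Finset.card_eq_sum_card_fiberwise (fun w _ => Finset.mem_univ w.1)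
    have hper : ∀ u : F, ((univ.filter fun w : F × F =>
            ((w.1 ^ 2 + w.1 + b) * w.2 ^ 2 ∈ H) ∧ ¬ w.2 = 0).filter
            fun w => w.1 = u).card = H.card - 1 := by
      intro u
      have hβ : u ^ 2 + u + b ≠ 0 := by
        intro hβ0
        exact hb u (by linear_combination hβ0 - b * h2)
      have hbij2 : ((univ.filter fun w : F × F =>
            ((w.1 ^ 2 + w.1 + b) * w.2 ^ 2 ∈ H) ∧ ¬ w.2 = 0).filter
            fun w => w.1 = u).card
          = (univ.filter fun y : F => ((u ^ 2 + u + b) * y ^ 2 ∈ H) ∧ ¬ y = 0).card := by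
        refine Finset.card_bij' (fun w _ => w.2) (fun y _ => (u, y)) ?hi ?hj ?hij ?hji
        case hi =>
          rintro ⟨x, y⟩ hw
          rw [Finset.mem_filter, Finset.mem_filter] at hw
          obtain ⟨⟨-, hQ, hy⟩, hx⟩ := hw
          simp only at hQ hy hx
          subst hx
          rw [Finset.mem_filter]
          exact ⟨Finset.mem_univ _, hQ, hy⟩
        case hj =>
          intro y hy
          rw [Finset.mem_filter] at hy
          rw [Finset.mem_filter, Finset.mem_filter]
          exact ⟨⟨Finset.mem_univ _, hy.2.1, hy.2.2⟩, rfl⟩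
        case hij =>
          rintro ⟨x, y⟩ hw
          rw [Finset.mem_filter, Finset.mem_filter] at hw
          have hx : x = u := hw.2
          subst hx
          rfl
        case hji =>
          intro y hy
          rfl
      rw [hbij2]
      have herase : (univ.filter fun y : F => ((u ^ 2 + u + b) * y ^ 2 ∈ H) ∧ ¬ y = 0)
          = (univ.filter fun y : F => (u ^ 2 + u + b) * y ^ 2 ∈ H).erase 0 := by
        ext y
        simp only [Finset.mem_filter, Finset.mem_univ, true_and, Finset.mem_erase]
        tauto
      rw [herase, Finset.card_erase_of_mem]
      · rw [count_preimage_bij (fun y => (u ^ 2 + u + b) * y ^ 2)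
          (fun a c h => char_two_sq_injective (mul_left_cancel₀ hβ h)) H]
      · rw [Finset.mem_filter]
        refine ⟨Finset.mem_univ _, ?_⟩
        simpa using h0
    rw [hfib, Finset.sum_congr rfl (fun u _ => hper u), Finset.sum_const, Finset.card_univ,
      smul_eq_mul]
  omega

lemma exists_arc_b : ∃ b : F, ∀ u : F, u ^ 2 + u ≠ b := by
  by_contra hcon
  push_neg at hcon
  have hsurj : Function.Surjective (fun u : F => u ^ 2 + u) := by
    intro y; obtain ⟨u, hu⟩ := hcon y; exact ⟨u, hu⟩
  have hinj : Function.Injective (fun u : F => u ^ 2 + u) :=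
    Finite.injective_iff_surjective.mpr hsurj
  have h01 : (0:F) = 1 := by
    apply hinj
    simp only
    have h2 : (2:F) = 0 := by have := CharP.cast_eq_zero F 2; simpa using this
    linear_combination -h2
  exact one_ne_zero h01.symm

lemma exists_subgroup_two_pow (j : ℕ) :
    ∀ S : Finset F, (0:F) ∈ S → (∀ x ∈ S, ∀ y ∈ S, x + y ∈ S) →
      2 ^ j ∣ S.card → ∃ T : Finset F, (0:F) ∈ T ∧ (∀ x ∈ T, ∀ y ∈ T, x + y ∈ T) ∧
        T.card * 2 ^ j = S.card := by
  induction j with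
  | zero => intro S h0 hadd _; exact ⟨S, h0, hadd, by simp⟩
  | succ j ih =>
    intro S h0 hadd hdvd
    have h2 : (2 : F) = 0 := by have := CharP.cast_eq_zero F 2; simpa using this
    have hcard2 : 1 < S.card := by
      have hpos : 0 < S.card := Finset.card_pos.mpr ⟨0, h0⟩
      have h2dvd : 2 ∣ S.card := dvd_trans (dvd_pow_self 2 (Nat.succ_ne_zero j)) hdvd
      obtain ⟨c, hc⟩ := h2dvd
      omega
    obtain ⟨a, haS, ha⟩ := Finset.exists_mem_ne hcard2 0
    set φ : F → F := fun x => x ^ 2 + a * x with hφdef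
    have hφadd : ∀ x y : F, φ x + φ y = φ (x + y) := by
      intro x y
      simp only [hφdef, CharTwo.add_sq]
      ring
    have hf : ∀ x y : F, φ x = φ y ↔ (y = x ∨ y = x + a) := by
      intro x y
      constructor
      · intro h
        have e : (x + y) * ((x + y) + a) = 0 := by
          simp only [hφdef] at h
          linear_combination h + (y ^ 2 + a * y + x * y) * h2
        rcases mul_eq_zero.mp e with h' | h'
        · left; exact (char_two_eq_of_add_eq_zero h').symm
        · right
          have : x + y = a := char_two_eq_of_add_eq_zero h'
          linear_combination this - x * h2
      · rintro (rfl | rfl)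
        · rfl
        · simp only [hφdef]
          linear_combination (- (a*a) - a*x) * h2
    have himg : (S.image φ).card * 2 = S.card :=
      two_to_one_count S φ a ha (fun x hx => hadd x hx a haS) hf
    have h0' : (0:F) ∈ S.image φ := by
      apply Finset.mem_image.mpr
      exact ⟨0, h0, by simp [hφdef]⟩
    have hadd' : ∀ x ∈ S.image φ, ∀ y ∈ S.image φ, x + y ∈ S.image φ := by
      rintro x hx y hy
      obtain ⟨t, ht, rfl⟩ := Finset.mem_image.mp hx
      obtain ⟨t', ht', rfl⟩ := Finset.mem_image.mp hy
      rw [hφadd]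
      exact Finset.mem_image_of_mem _ (hadd t ht t' ht')
    have hdvd' : 2 ^ j ∣ (S.image φ).card := by
      have : 2 ^ (j+1) ∣ (S.image φ).card * 2 := by rw [himg]; exact hdvd
      rw [pow_succ] at this
      exact (Nat.mul_dvd_mul_iff_right (by norm_num)).mp this
    obtain ⟨T, hT0, hTadd, hTcard⟩ := ih (S.image φ) h0' hadd' hdvd'
    refine ⟨T, hT0, hTadd, ?_⟩
    rw [pow_succ, ← mul_assoc, hTcard, himg]

-- anisotropy
lemma arc_aniso (b : F) (hb : ∀ u : F, u ^ 2 + u ≠ b) :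
    ∀ v : F × F, v.1 ^ 2 + v.1 * v.2 + b * v.2 ^ 2 = 0 → v = 0 := by
  have h2 : (2 : F) = 0 := by have := CharP.cast_eq_zero F 2; simpa using this
  rintro ⟨x, y⟩ h
  simp only at h
  by_cases hy : y = 0
  · subst hy
    have hx2 : x ^ 2 = 0 := by linear_combination h
    have hx : x = 0 := pow_eq_zero_iff two_ne_zero |>.mp hx2
    simp [hx, Prod.ext_iff]
  · exfalso
    apply hb (x * y⁻¹)
    have key : ((x * y⁻¹) ^ 2 + x * y⁻¹) * y ^ 2 = b * y ^ 2 := by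
      have h1 : ((x * y⁻¹) ^ 2 + x * y⁻¹) * y ^ 2 = x ^ 2 + x * y := by
        field_simp
      rw [h1]
      linear_combination h - b * y ^ 2 * h2
    exact mul_right_cancel₀ (pow_ne_zero 2 hy) key

-- expansion of Q along a line
lemma arc_expand (b : F) (p d : F × F) (t : F) :
    (p.1 + t * d.1) ^ 2 + (p.1 + t * d.1) * (p.2 + t * d.2) + b * (p.2 + t * d.2) ^ 2
      = (p.1 ^ 2 + p.1 * p.2 + b * p.2 ^ 2)
        + ((p.1 * d.2 + p.2 * d.1) * t + (d.1 ^ 2 + d.1 * d.2 + b * d.2 ^ 2) * t ^ 2) := by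
  rw [CharTwo.add_sq p.1 (t * d.1), CharTwo.add_sq p.2 (t * d.2)]
  ring

-- the fiber lemma
lemma arc_fiber (H : Finset F) (hadd : ∀ x ∈ H, ∀ y ∈ H, x + y ∈ H)
    (b : F) (hb : ∀ u : F, u ^ 2 + u ≠ b)
    (d : F × F) (hd : d ≠ 0) (p : F × F)
    (hp : p ∈ univ.filter fun v : F × F => v.1 ^ 2 + v.1 * v.2 + b * v.2 ^ 2 ∈ H) :
    ((univ.filter fun v : F × F => v.1 ^ 2 + v.1 * v.2 + b * v.2 ^ 2 ∈ H).filter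
      fun a => d.2 * a.1 + d.1 * a.2 = d.2 * p.1 + d.1 * p.2).card = H.card := by
  have h2 : (2 : F) = 0 := by have := CharP.cast_eq_zero F 2; simpa using this
  have hd' : d.1 ≠ 0 ∨ d.2 ≠ 0 := by
    by_contra hcon
    push_neg at hcon
    exact hd (Prod.ext hcon.1 hcon.2)
  have hQp : p.1 ^ 2 + p.1 * p.2 + b * p.2 ^ 2 ∈ H := (Finset.mem_filter.mp hp).2
  have hQd : d.1 ^ 2 + d.1 * d.2 + b * d.2 ^ 2 ≠ 0 := by
    intro h
    exact hd (arc_aniso b hb d h)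
  have himg : ((univ.filter fun v : F × F => v.1 ^ 2 + v.1 * v.2 + b * v.2 ^ 2 ∈ H).filter
      fun a => d.2 * a.1 + d.1 * a.2 = d.2 * p.1 + d.1 * p.2)
      = (univ.filter fun t : F => (p.1 ^ 2 + p.1 * p.2 + b * p.2 ^ 2)
          + ((p.1 * d.2 + p.2 * d.1) * t + (d.1 ^ 2 + d.1 * d.2 + b * d.2 ^ 2) * t ^ 2) ∈ H).image
          (fun t => (p.1 + t * d.1, p.2 + t * d.2)) := by
    ext a
    rw [Finset.mem_filter, Finset.mem_filter, Finset.mem_image]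
    constructor
    · rintro ⟨⟨-, hQa⟩, hψ⟩
      have hw : d.2 * (a.1 + p.1) + d.1 * (a.2 + p.2) = 0 := by
        linear_combination hψ + (d.2 * p.1 + d.1 * p.2) * h2
      have hrearr : d.2 * (a.1 + p.1) = d.1 * (a.2 + p.2) := char_two_eq_of_add_eq_zero hw
      obtain ⟨t, hteq⟩ : ∃ t : F, a = (p.1 + t * d.1, p.2 + t * d.2) := by
        rcases hd' with hd1 | hd2'
        · refine ⟨(a.1 + p.1) * d.1⁻¹, Prod.ext ?_ ?_⟩
          · have ht : (a.1 + p.1) * d.1⁻¹ * d.1 = a.1 + p.1 := by field_simp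
            simp only
            rw [ht]
            linear_combination (-p.1) * h2
          · have ht : (a.1 + p.1) * d.1⁻¹ * d.2 = a.2 + p.2 := by
              field_simp
              linear_combination hrearr
            simp only
            rw [ht]
            linear_combination (-p.2) * h2
        · by_cases hd1 : d.1 = 0
          · have h11 : a.1 = p.1 := by
              apply char_two_eq_of_add_eq_zero
              have : d.2 * (a.1 + p.1) = 0 := by rw [hrearr, hd1]; ring
              rcases mul_eq_zero.mp this with h | h
              · exact absurd h hd2'
              · exact h
            refine ⟨(a.2 + p.2) * d.2⁻¹, Prod.ext ?_ ?_⟩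
            · simp only
              rw [hd1, h11]
              ring
            · have ht : (a.2 + p.2) * d.2⁻¹ * d.2 = a.2 + p.2 := by field_simp
              simp only
              rw [ht]
              linear_combination (-p.2) * h2
          · refine ⟨(a.1 + p.1) * d.1⁻¹, Prod.ext ?_ ?_⟩
            · have ht : (a.1 + p.1) * d.1⁻¹ * d.1 = a.1 + p.1 := by field_simp
              simp only
              rw [ht]
              linear_combination (-p.1) * h2
            · have ht : (a.1 + p.1) * d.1⁻¹ * d.2 = a.2 + p.2 := by
                field_simp
                linear_combination hrearr
              simp only
              rw [ht]
              linear_combination (-p.2) * h2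
      refine ⟨t, ?_, hteq.symm⟩
      rw [Finset.mem_filter]
      refine ⟨Finset.mem_univ _, ?_⟩
      rw [← arc_expand b p d t]
      rw [hteq] at hQa
      exact hQa
    · rintro ⟨t, ht, rfl⟩
      rw [Finset.mem_filter] at ht
      refine ⟨⟨Finset.mem_univ _, ?_⟩, ?_⟩
      · rw [arc_expand b p d t]
        exact ht.2
      · simp only
        linear_combination (d.1 * d.2 * t) * h2
  have hinj : Function.Injective (fun t : F => ((p.1 + t * d.1, p.2 + t * d.2) : F × F)) := by
    intro t t' h
    rw [Prod.ext_iff] at h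
    simp only at h
    rcases hd' with hd1 | hd2
    · exact mul_right_cancel₀ hd1 (by linear_combination h.1)
    · exact mul_right_cancel₀ hd2 (by linear_combination h.2)
  rw [himg, Finset.card_image_of_injective _ hinj]
  have hroot : ∀ t : F, (p.1 ^ 2 + p.1 * p.2 + b * p.2 ^ 2)
      + ((p.1 * d.2 + p.2 * d.1) * t + (d.1 ^ 2 + d.1 * d.2 + b * d.2 ^ 2) * t ^ 2) = 0 →
      p.1 * d.2 + p.2 * d.1 = 0 := by
    intro t hteq
    have hQz : (p.1 + t * d.1) ^ 2 + (p.1 + t * d.1) * (p.2 + t * d.2)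
        + b * (p.2 + t * d.2) ^ 2 = 0 := by
      rw [arc_expand b p d t]
      exact hteq
    have hz := arc_aniso b hb ((p.1 + t * d.1, p.2 + t * d.2) : F × F) hQz
    rw [Prod.ext_iff] at hz
    simp only at hz
    have hp1 : p.1 = t * d.1 := char_two_eq_of_add_eq_zero hz.1
    have hp2 : p.2 = t * d.2 := char_two_eq_of_add_eq_zero hz.2
    rw [hp1, hp2]
    linear_combination (t * d.1 * d.2) * h2
  rcases core_count H hadd (p.1 ^ 2 + p.1 * p.2 + b * p.2 ^ 2) (p.1 * d.2 + p.2 * d.1)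
      (d.1 ^ 2 + d.1 * d.2 + b * d.2 ^ 2) hQd hroot with hempty | hcard
  · exfalso
    have h0mem : (0 : F) ∈ univ.filter fun t : F => (p.1 ^ 2 + p.1 * p.2 + b * p.2 ^ 2)
        + ((p.1 * d.2 + p.2 * d.1) * t + (d.1 ^ 2 + d.1 * d.2 + b * d.2 ^ 2) * t ^ 2) ∈ H := by
      rw [Finset.mem_filter]
      refine ⟨Finset.mem_univ _, ?_⟩
      have heq : (p.1 ^ 2 + p.1 * p.2 + b * p.2 ^ 2)
          + ((p.1 * d.2 + p.2 * d.1) * 0 + (d.1 ^ 2 + d.1 * d.2 + b * d.2 ^ 2) * 0 ^ 2)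
          = p.1 ^ 2 + p.1 * p.2 + b * p.2 ^ 2 := by ring
      rw [heq]
      exact hQp
    rw [hempty] at h0mem
    exact absurd h0mem (Finset.notMem_empty 0)
  · exact hcard

end
end PIRAux

lemma reindex_pir {s k : ℕ} {ι : Type} [Fintype ι] [DecidableEq ι] {m : ℕ}
    (hm : Fintype.card ι = m) (G : Matrix (Fin s) ι (ZMod 2))
    (h : ∀ i : Fin s, ∃ R : Fin k → Finset ι,
      (Pairwise fun a b => Disjoint (R a) (R b)) ∧
      ∀ a : Fin k, (∑ j ∈ R a, fun r => G r j) = Pi.single i (1 : ZMod 2)) :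
    ExistsPIRCode s m k := by
  let e : ι ≃ Fin m := Fintype.equivFinOfCardEq hm
  refine ⟨fun r j => G r (e.symm j), fun i => ?_⟩
  obtain ⟨R, hdisj, hsum⟩ := h i
  refine ⟨fun a => (R a).image e,
    fun a b hab => (Finset.disjoint_image e.injective).mpr (hdisj hab), fun a => ?_⟩
  rw [Finset.sum_image (fun x _ y _ h => e.injective h)]
  simpa using hsum a

lemma pir_helper {F : Type} [Field F] [Fintype F] [DecidableEq F] [CharP F 2]
    (H : Finset F) (h0 : (0:F) ∈ H) (hadd : ∀ x ∈ H, ∀ y ∈ H, x + y ∈ H)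
    (b : F) (hb : ∀ u : F, u ^ 2 + u ≠ b)
    (s k' : ℕ) (hk' : k' ≤ Fintype.card F + 1)
    (hs : s = H.card + Fintype.card F * (H.card - 1)) :
    ExistsPIRCode s (s + k' * (s / H.card)) (k' + 1) := by
  have h2 : (2 : F) = 0 := by have := CharP.cast_eq_zero F 2; simpa using this
  set A := univ.filter (fun v : F × F => v.1 ^ 2 + v.1 * v.2 + b * v.2 ^ 2 ∈ H) with hAdef
  have hA : A.card = s := by rw [hs, hAdef]; exact arc_card H h0 b hb
  -- directions
  have hcard_opt : k' ≤ Fintype.card (Option F) := by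
    rw [Fintype.card_option]; exact hk'
  set dm : Fin k' → Option F :=
    fun c => (Fintype.equivFin (Option F)).symm (Fin.castLE hcard_opt c) with hdmdef
  have hdm : Function.Injective dm := by
    intro c c' h
    have := (Fintype.equivFin (Option F)).symm.injective h
    exact Fin.castLE_injective hcard_opt this
  set d : Fin k' → F × F := fun c => (dm c).elim ((0:F), (1:F)) (fun x => ((1:F), x)) with hddef
  have hd0 : ∀ c, d c ≠ 0 := by
    intro c h
    rcases hc : dm c with _ | x
    · rw [hddef] at h; simp only [hc, Option.elim] at h
      have := congrArg Prod.snd h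
      simpa using this
    · rw [hddef] at h; simp only [hc, Option.elim] at h
      have := congrArg Prod.fst h
      simpa using this
  have hdneq : ∀ c c', c ≠ c' → (d c).1 * (d c').2 ≠ (d c').1 * (d c).2 := by
    intro c c' hne
    have hne' : dm c ≠ dm c' := fun h => hne (hdm h)
    rcases hc : dm c with _ | x <;> rcases hc' : dm c' with _ | x' <;>
      simp only [hddef, hc, hc', Option.elim]
    · exact absurd (hc ▸ hc' ▸ rfl : dm c = dm c') hne'
    · simp
    · simp
    · simp only [one_mul]
      intro h
      exact hne' (by rw [hc, hc', h])
  -- cross-class uniqueness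
  have hcross : ∀ c c' : Fin k', c ≠ c' → ∀ a a' : F × F,
      (d c).2 * a.1 + (d c).1 * a.2 = (d c).2 * a'.1 + (d c).1 * a'.2 →
      (d c').2 * a.1 + (d c').1 * a.2 = (d c').2 * a'.1 + (d c').1 * a'.2 →
      a = a' := by
    intro c c' hne a a' e1 e2
    have hdet : (d c).1 * (d c').2 + (d c').1 * (d c).2 ≠ 0 := by
      intro h
      exact hdneq c c' hne (char_two_eq_of_add_eq_zero h)
    have h1 : ((d c).1 * (d c').2 + (d c').1 * (d c).2) * (a.1 + a'.1) = 0 := by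
      linear_combination (d c').1 * e1 - (d c).1 * e2
        + (a.1 * (d c).1 * (d c').2 + a'.1 * (d c').1 * (d c).2) * h2
    have h2' : ((d c).1 * (d c').2 + (d c').1 * (d c).2) * (a.2 + a'.2) = 0 := by
      linear_combination (d c').2 * e1 - (d c).2 * e2
        + (a.2 * (d c).2 * (d c').1 + a'.2 * (d c').2 * (d c).1) * h2
    have e11 : a.1 = a'.1 := char_two_eq_of_add_eq_zero
      ((mul_eq_zero.mp h1).resolve_left hdet)
    have e22 : a.2 = a'.2 := char_two_eq_of_add_eq_zero
      ((mul_eq_zero.mp h2').resolve_left hdet)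
    exact Prod.ext e11 e22
  -- fiber counts
  have hfib : ∀ c : Fin k', ∀ p ∈ A,
      (A.filter fun a => (d c).2 * a.1 + (d c).1 * a.2
        = (d c).2 * p.1 + (d c).1 * p.2).card = H.card := by
    intro c p hp
    exact arc_fiber H hadd b hb (d c) (hd0 c) p hp
  -- image counts
  have hHpos : 0 < H.card := Finset.card_pos.mpr ⟨0, h0⟩
  set ψ : Fin k' → F × F → F := fun c v => (d c).2 * v.1 + (d c).1 * v.2 with hψdef
  have hIcount : ∀ c : Fin k', (A.image (ψ c)).card * H.card = s := by
    intro c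
    have hsum := Finset.card_eq_sum_card_image (ψ c) A
    have heach : ∀ w ∈ A.image (ψ c), (A.filter fun a => ψ c a = w).card = H.card := by
      intro w hw
      obtain ⟨p, hp, rfl⟩ := Finset.mem_image.mp hw
      exact hfib c p hp
    rw [Finset.sum_congr rfl heach, Finset.sum_const, smul_eq_mul, hA] at hsum
    exact hsum.symm
  set t := s / H.card with htdef
  have hIt : ∀ c, (A.image (ψ c)).card = t := by
    intro c
    rw [htdef, ← hIcount c, Nat.mul_div_cancel _ hHpos]
  -- row equivalence
  set eA : {v // v ∈ A} ≃ Fin s := A.equivFinOfCardEq hA with heAdef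
  set pt : Fin s → F × F := fun r => (eA.symm r : F × F) with hptdef
  have hptA : ∀ r, pt r ∈ A := fun r => (eA.symm r).2
  have hptinj : Function.Injective pt :=
    fun r r' h => eA.symm.injective (Subtype.ext h)
  set eI : (c : Fin k') → {w // w ∈ A.image (ψ c)} ≃ Fin t :=
    fun c => (A.image (ψ c)).equivFinOfCardEq (hIt c) with heIdef
  -- the matrix
  apply reindex_pir (ι := Fin s ⊕ Fin k' × Fin t)
    (G := fun r j => Sum.elim (fun r' => if r = r' then (1 : ZMod 2) else 0)
      (fun cw => if ψ cw.1 (pt r) = ((eI cw.1).symm cw.2 : F) then 1 else 0) j)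
  · simp [mul_comm]
  · intro i
    set p : F × F := pt i with hpdef
    have hpA : p ∈ A := hptA i
    have hwmem : ∀ c : Fin k', ψ c p ∈ A.image (ψ c) := fun c => Finset.mem_image_of_mem _ hpA
    set Rc : Fin k' → Finset (Fin s ⊕ Fin k' × Fin t) := fun c =>
      insert (Sum.inr (c, eI c ⟨ψ c p, hwmem c⟩))
        ((univ.filter fun r : Fin s => ψ c (pt r) = ψ c p ∧ r ≠ i).image Sum.inl) with hRcdef
    refine ⟨Fin.cases {Sum.inl i} Rc, ?_, ?_⟩
    · -- pairwise disjoint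
      have key : ∀ c : Fin k', Disjoint ({Sum.inl i} : Finset (Fin s ⊕ Fin k' × Fin t)) (Rc c) := by
        intro c
        rw [Finset.disjoint_left]
        intro x hx hx'
        rw [Finset.mem_singleton] at hx
        subst hx
        rw [hRcdef, Finset.mem_insert] at hx'
        rcases hx' with h | h
        · exact absurd h (by simp)
        · obtain ⟨r, hr, hreq⟩ := Finset.mem_image.mp h
          rw [Finset.mem_filter] at hr
          exact hr.2.2 (Sum.inl_injective hreq)
      have key2 : ∀ c c' : Fin k', c ≠ c' → Disjoint (Rc c) (Rc c') := by
        intro c c' hne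
        rw [Finset.disjoint_left]
        intro x hx hx'
        rw [hRcdef, Finset.mem_insert] at hx hx'
        rcases hx with rfl | hx
        · rcases hx' with h | h
          · have := (Sum.inr_injective h : (c, eI c _) = (c', eI c' _))
            exact hne (congrArg Prod.fst this)
          · obtain ⟨r, -, hreq⟩ := Finset.mem_image.mp h
            exact absurd hreq (by simp)
        · obtain ⟨r, hr, rfl⟩ := Finset.mem_image.mp hx
          rw [Finset.mem_filter] at hr
          rcases hx' with h | h
          · exact absurd h.symm (by simp)
          · obtain ⟨r', hr', hreq⟩ := Finset.mem_image.mp h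
            rw [Finset.mem_filter] at hr'
            have hrr : r' = r := Sum.inl_injective hreq
            subst hrr
            have : pt r' = p := hcross c c' hne (pt r') p hr.2.1 hr'.2.1
            exact hr.2.2 (hptinj (by rw [this, hpdef]))
      intro a a' hne
      rcases Fin.eq_zero_or_eq_succ a with rfl | ⟨c, rfl⟩ <;>
        rcases Fin.eq_zero_or_eq_succ a' with rfl | ⟨c', rfl⟩
      · exact absurd rfl hne
      · simpa using key c'
      · simpa using (key c).symm
      · have hcc : c ≠ c' := fun h => hne (by rw [h])
        simpa using key2 c c' hcc
    · -- sums
      intro a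
      rcases Fin.eq_zero_or_eq_succ a with rfl | ⟨c, rfl⟩
      · simp only [Fin.cases_zero]
        rw [Finset.sum_singleton]
        funext r
        rw [Pi.single_apply]
        simp only [Sum.elim_inl]
      · simp only [Fin.cases_succ, hRcdef]
        rw [Finset.sum_insert (by simp)]
        rw [Finset.sum_image (fun x _ y _ h => Sum.inl_injective h)]
        funext r
        rw [Pi.add_apply, Finset.sum_apply, Pi.single_apply]
        simp only [Sum.elim_inr, Sum.elim_inl, Equiv.symm_apply_apply]
        rw [Finset.sum_ite_eq (univ.filter fun r' : Fin s => ψ c (pt r') = ψ c p ∧ r' ≠ i) r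
          (fun _ => (1 : ZMod 2))]
        simp only [Finset.mem_filter, Finset.mem_univ, true_and]
        by_cases hri : r = i
        · subst hri
          simp [← hpdef]
        · by_cases hψr : ψ c (pt r) = ψ c p
          · simp only [hψr, hri, if_true, ne_eq, not_false_iff, and_self, if_pos, if_neg hri]
            rw [if_neg not_false]; exact (by decide : (1 + 1 : ZMod 2) = 0)
          · simp [hψr, hri]

/-- Let `1 ≤ n' ≤ n` and `s = 2^{n+n'} - 2^n + 2^{n'}` (the size of a
maximal arc in `PG(2, 2^n)`). Then for every `2 ≤ k ≤ 2^n + 2` there exists a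
`k`-server PIR `[m,s]`-code with `m = s + (k-1)·s/2^{n'}`. -/
theorem pir_code_of_maximal_arc (n n' : ℕ) (hn'1 : 1 ≤ n') (hn' : n' ≤ n)
    (s : ℕ) (hs : s = 2 ^ (n + n') - 2 ^ n + 2 ^ n')
    (k : ℕ) (hk2 : 2 ≤ k) (hk : k ≤ 2 ^ n + 2) :
    ExistsPIRCode s (s + (k - 1) * (s / 2 ^ n')) k := by
  obtain ⟨k', rfl⟩ : ∃ k', k = k' + 1 := ⟨k - 1, by omega⟩
  haveI : Fact (Nat.Prime 2) := ⟨Nat.prime_two⟩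
  set F := GaloisField 2 n with hF
  letI : Fintype F := Fintype.ofFinite F
  letI : DecidableEq F := Classical.decEq F
  have hq : Fintype.card F = 2 ^ n := by
    rw [← Nat.card_eq_fintype_card]
    exact GaloisField.card 2 n (by omega)
  obtain ⟨H, h0, haddH, hHcard⟩ := exists_subgroup_two_pow (F := F) (n - n') univ
    (Finset.mem_univ _) (fun x _ y _ => Finset.mem_univ _)
    (by rw [Finset.card_univ, hq]; exact pow_dvd_pow 2 (by omega))
  have hH : H.card = 2 ^ n' := by
    have h1 : H.card * 2 ^ (n - n') = 2 ^ n := by rw [hHcard, Finset.card_univ, hq]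
    have h2 : (2:ℕ) ^ n' * 2 ^ (n - n') = 2 ^ n := by rw [← pow_add]; congr 1; omega
    have hpos : 0 < 2 ^ (n - n') := Nat.pow_pos (by norm_num)
    exact Nat.eq_of_mul_eq_mul_right hpos (h1.trans h2.symm)
  obtain ⟨b, hb⟩ := exists_arc_b (F := F)
  have hs' : s = H.card + Fintype.card F * (H.card - 1) := by
    rw [hH, hq, hs]
    have e1 : (2:ℕ) ^ (n + n') = 2 ^ n * 2 ^ n' := pow_add 2 n n'
    have h1 : (1:ℕ) ≤ 2 ^ n' := Nat.one_le_two_pow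
    have e2 : (2:ℕ) ^ n * 2 ^ n' = 2 ^ n * (2 ^ n' - 1) + 2 ^ n := by
      calc (2:ℕ) ^ n * 2 ^ n' = 2 ^ n * ((2 ^ n' - 1) + 1) := by rw [Nat.sub_add_cancel h1]
      _ = 2 ^ n * (2 ^ n' - 1) + 2 ^ n := by ring
    have e3 : (2:ℕ) ^ n' ≤ 2 ^ n := Nat.pow_le_pow_right (by norm_num) hn'
    rw [e1]
    generalize hX : (2:ℕ) ^ n * (2 ^ n' - 1) = X at e2 ⊢
    generalize hY : (2:ℕ) ^ n * 2 ^ n' = Y at e2 ⊢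
    omega
  have hk'le : k' ≤ Fintype.card F + 1 := by rw [hq]; omega
  have hmain := pir_helper H h0 haddH b hb s k' hk'le hs'
  rw [hH] at hmain
  simpa using hmain
end

section
/- Let q ≥ 2 be a prime power and set s = q³ + 1. Then for every integer k with 2 ≤ k ≤ q² + 1 there exists a k-server PIR [m,s]-code with m = s + (k−1)·s/(q+1) = s + (k−1)(q² − q + 1). -/
lemma abstract_code (s t k : ℕ)
    (Λ : Fin (k-1) → Fin s → Fin t)
    (hsuit : ∀ a b : Fin (k-1), a ≠ b → ∀ i j : Fin s, i ≠ j →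
      Λ a i = Λ a j → Λ b i ≠ Λ b j) :
    ExistsPIRCode s (s + (k-1)*t) k := by
  classical
  set m := s + (k-1)*t with hm
  let E : (Fin s ⊕ Fin (k-1) × Fin t) ≃ Fin m :=
    ((Equiv.refl (Fin s)).sumCongr finProdFinEquiv).trans finSumFinEquiv
  let G0 : Fin s → (Fin s ⊕ Fin (k-1) × Fin t) → ZMod 2 := fun r x =>
    match x with
    | Sum.inl j => if r = j then 1 else 0
    | Sum.inr (a, c) => if Λ a r = c then 1 else 0
  refine ⟨fun r j => G0 r (E.symm j), fun i => ?_⟩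
  let S : Fin k → Finset (Fin s ⊕ Fin (k-1) × Fin t) := fun b =>
    if h : (b : ℕ) = 0 then {Sum.inl i}
    else
      ((Finset.univ.filter (fun j : Fin s =>
          j ≠ i ∧ Λ ⟨(b:ℕ)-1, by have := b.isLt; omega⟩ j = Λ ⟨(b:ℕ)-1, by have := b.isLt; omega⟩ i)).image Sum.inl)
        ∪ {Sum.inr (⟨(b:ℕ)-1, by have := b.isLt; omega⟩, Λ ⟨(b:ℕ)-1, by have := b.isLt; omega⟩ i)}
  refine ⟨fun b => (S b).map E.toEmbedding, ?_, ?_⟩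
  · intro b b' hne
    rw [Finset.disjoint_map, Finset.disjoint_left]
    intro x hx hx'
    by_cases hb : (b : ℕ) = 0 <;> by_cases hb' : (b' : ℕ) = 0
    · exact hne (Fin.ext (by omega))
    · simp only [S, dif_pos hb, dif_neg hb', Finset.mem_singleton] at hx hx'
      subst hx
      simp only [Finset.mem_union, Finset.mem_image, Finset.mem_filter, Finset.mem_singleton,
        Finset.mem_univ, true_and] at hx'
      rcases hx' with ⟨j, hj, hj2⟩ | h
      · exact hj.1 (Sum.inl_injective hj2)
      · exact nomatch h
    · simp only [S, dif_pos hb', dif_neg hb, Finset.mem_singleton] at hx hx'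
      subst hx'
      simp only [Finset.mem_union, Finset.mem_image, Finset.mem_filter, Finset.mem_singleton,
        Finset.mem_univ, true_and] at hx
      rcases hx with ⟨j, hj, hj2⟩ | h
      · exact hj.1 (Sum.inl_injective hj2)
      · exact nomatch h
    · simp only [S, dif_neg hb, dif_neg hb', Finset.mem_union, Finset.mem_image,
        Finset.mem_filter, Finset.mem_singleton, Finset.mem_univ, true_and] at hx hx'
      have hbb : (b:ℕ) ≠ (b':ℕ) := fun h => hne (Fin.ext h)
      have hvne : (b:ℕ) - 1 ≠ (b':ℕ) - 1 := fun h => hbb (by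
        have h1 := Nat.succ_pred_eq_of_pos (Nat.pos_of_ne_zero hb)
        have h2 := Nat.succ_pred_eq_of_pos (Nat.pos_of_ne_zero hb')
        rw [Nat.pred_eq_sub_one] at h1 h2
        rw [← h1, ← h2, h])
      rcases hx with ⟨j, hj, hj2⟩ | h <;> rcases hx' with ⟨j', hj', hj2'⟩ | h'
      · have hjj : j = j' := Sum.inl_injective (hj2.trans hj2'.symm)
        subst hjj
        exact hsuit _ _ (fun h => hvne (congrArg Fin.val h)) j i hj.1 hj.2 hj'.2
      · exact Sum.inl_ne_inr (hj2.trans h')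
      · exact Sum.inl_ne_inr (hj2'.trans h)
      · exact hvne (congrArg Fin.val (congrArg Prod.fst (Sum.inr_injective (h.symm.trans h'))))
  · intro b
    rw [Finset.sum_map]
    funext r
    rw [Finset.sum_apply]
    simp only [Equiv.coe_toEmbedding, Equiv.symm_apply_apply]
    by_cases hb : (b : ℕ) = 0
    · simp only [S, dif_pos hb, Finset.sum_singleton]
      simp [G0, Pi.single_apply]
    · simp only [S, dif_neg hb]
      rw [Finset.sum_union (by
        simp only [Finset.disjoint_left, Finset.mem_image, Finset.mem_singleton]
        rintro x ⟨j, _, rfl⟩ h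
        exact nomatch h)]
      rw [Finset.sum_image (by intros a _ b _ h; exact Sum.inl_injective h)]
      rw [Finset.sum_singleton]
      set a : Fin (k-1) := ⟨(b:ℕ)-1, by have := b.isLt; omega⟩ with ha
      have h1 : (∑ j ∈ Finset.univ.filter (fun j : Fin s => j ≠ i ∧ Λ a j = Λ a i), G0 r (Sum.inl j))
          = if r ∈ Finset.univ.filter (fun j : Fin s => j ≠ i ∧ Λ a j = Λ a i) then 1 else 0 := by
        show (∑ j ∈ Finset.univ.filter (fun j : Fin s => j ≠ i ∧ Λ a j = Λ a i),
            (if r = j then (1:ZMod 2) else 0)) = _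
        exact Finset.sum_ite_eq _ r (fun _ => 1)
      rw [h1]
      simp only [Finset.mem_filter, Finset.mem_univ, true_and, G0, Pi.single_apply]
      by_cases hri : r = i
      · subst hri
        simp
      · by_cases hΛ : Λ a r = Λ a i
        · simp only [hri, hΛ, ne_eq, not_false_iff, if_true, and_self, if_false]
          decide
        · simp [hri, hΛ]

section FieldPart

variable {F : Type} [Field F] [Fintype F] [DecidableEq F] {q : ℕ}

omit [Fintype F] [DecidableEq F] in
lemma hsub_pow (hfrob : ∀ a b : F, (a+b)^q = a^q + b^q) (a b : F) :
    (a - b)^q = a^q - b^q := by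
  have := hfrob (a - b) b
  rw [sub_add_cancel] at this
  linear_combination -this

omit [DecidableEq F] in
lemma hpow_qq (hcard : Fintype.card F = q^2) (x : F) : x ^ (q*q) = x := by
  have := FiniteField.pow_card x
  rwa [hcard, pow_two] at this

omit [Fintype F] [DecidableEq F] in
lemma hneg_pow (hq0 : q ≠ 0) (hfrob : ∀ a b : F, (a+b)^q = a^q + b^q) (a : F) :
    (-a)^q = -a^q := by
  have := hsub_pow hfrob 0 a
  simpa [zero_pow hq0] using this

omit [Fintype F] [DecidableEq F] in
lemma hpow_inj (hq0 : q ≠ 0) (hfrob : ∀ a b : F, (a+b)^q = a^q + b^q) {a b : F}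
    (h : a^q = b^q) : a = b := by
  have h2 : (a - b)^q = 0 := by rw [hsub_pow hfrob, h, sub_self]
  have := pow_eq_zero_iff hq0 |>.mp h2
  exact sub_eq_zero.mp this

end FieldPart

section Counting

variable {F : Type} [Field F] [Fintype F] [DecidableEq F] {q : ℕ}

omit [Fintype F] in
lemma card_fixed_le (hq2 : 2 ≤ q) [Fintype F] :
    (Finset.univ.filter (fun z : F => z^q = z)).card ≤ q := by
  classical
  set P : Polynomial F := Polynomial.X ^ q - Polynomial.X with hP
  have hdeg : P.natDegree = q := by
    rw [hP, Polynomial.natDegree_sub_eq_left_of_natDegree_lt, Polynomial.natDegree_X_pow]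
    rw [Polynomial.natDegree_X_pow, Polynomial.natDegree_X]
    omega
  have hP0 : P ≠ 0 := by
    intro h
    rw [h, Polynomial.natDegree_zero] at hdeg
    omega
  have hsub : (Finset.univ.filter (fun z : F => z^q = z)) ⊆ P.roots.toFinset := by
    intro z hz
    rw [Finset.mem_filter] at hz
    rw [Multiset.mem_toFinset, Polynomial.mem_roots hP0]
    simp [hP, Polynomial.IsRoot, sub_eq_zero, hz.2]
  calc (Finset.univ.filter (fun z : F => z^q = z)).card
      ≤ P.roots.toFinset.card := Finset.card_le_card hsub
    _ ≤ Multiset.card P.roots := Multiset.toFinset_card_le _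
    _ ≤ P.natDegree := Polynomial.card_roots' P
    _ = q := hdeg

omit [Fintype F] in
lemma card_trzero_le (hq2 : 2 ≤ q) [Fintype F] :
    (Finset.univ.filter (fun z : F => z^q + z = 0)).card ≤ q := by
  classical
  set P : Polynomial F := Polynomial.X ^ q + Polynomial.X with hP
  have hdeg : P.natDegree = q := by
    rw [hP, Polynomial.natDegree_add_eq_left_of_natDegree_lt, Polynomial.natDegree_X_pow]
    rw [Polynomial.natDegree_X_pow, Polynomial.natDegree_X]
    omega
  have hP0 : P ≠ 0 := by
    intro h
    rw [h, Polynomial.natDegree_zero] at hdeg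
    omega
  have hsub : (Finset.univ.filter (fun z : F => z^q + z = 0)) ⊆ P.roots.toFinset := by
    intro z hz
    rw [Finset.mem_filter] at hz
    rw [Multiset.mem_toFinset, Polynomial.mem_roots hP0]
    simp [hP, Polynomial.IsRoot, hz.2]
  calc (Finset.univ.filter (fun z : F => z^q + z = 0)).card
      ≤ P.roots.toFinset.card := Finset.card_le_card hsub
    _ ≤ Multiset.card P.roots := Multiset.toFinset_card_le _
    _ ≤ P.natDegree := Polynomial.card_roots' P
    _ = q := hdeg

/-- every trace value is Frobenius-fixed -/
lemma tr_fixed (hcard : Fintype.card F = q^2) (hfrob : ∀ a b : F, (a+b)^q = a^q + b^q)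
    (c : F) : (c^q + c)^q = c^q + c := by
  rw [hfrob, ← pow_mul, hpow_qq hcard, add_comm]

/-- each nonempty trace fiber has the same size as the kernel fiber -/
lemma tr_fiber_card (hfrob : ∀ a b : F, (a+b)^q = a^q + b^q)
    (c₀ : F) :
    (Finset.univ.filter (fun c : F => c^q + c = c₀^q + c₀)).card
      = (Finset.univ.filter (fun z : F => z^q + z = 0)).card := by
  classical
  apply Finset.card_bij' (fun c _ => c - c₀) (fun z _ => z + c₀)
  · intro c hc
    rw [Finset.mem_filter] at hc ⊢
    refine ⟨Finset.mem_univ _, ?_⟩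
    rw [hsub_pow hfrob]
    linear_combination hc.2
  · intro z hz
    rw [Finset.mem_filter] at hz ⊢
    refine ⟨Finset.mem_univ _, ?_⟩
    rw [hfrob]
    have := hz.2
    linear_combination this
  · intro c hc; ring
  · intro z hz; ring

end Counting

section Counting2
variable {F : Type} [Field F] [Fintype F] [DecidableEq F] {q : ℕ}

lemma tr_fiber_count (hq2 : 2 ≤ q) (hcard : Fintype.card F = q^2)
    (hfrob : ∀ a b : F, (a+b)^q = a^q + b^q) :
    ∀ e : F, e^q = e → (Finset.univ.filter (fun c : F => c^q + c = e)).card = q := by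
  classical
  set img := Finset.univ.image (fun c : F => c^q + c) with himg
  set K := (Finset.univ.filter (fun z : F => z^q + z = 0)).card with hK
  have hsum : (Finset.univ : Finset F).card
      = ∑ e ∈ img, (Finset.univ.filter (fun c : F => c^q + c = e)).card :=
    Finset.card_eq_sum_card_fiberwise (fun x _ => Finset.mem_image_of_mem _ (Finset.mem_univ x))
  have hfib : ∀ e ∈ img, (Finset.univ.filter (fun c : F => c^q + c = e)).card = K := by
    intro e he
    rw [Finset.mem_image] at he
    obtain ⟨c₀, -, rfl⟩ := he
    exact tr_fiber_card hfrob c₀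
  have htot : q*q = img.card * K := by
    rw [← pow_two, ← hcard, ← Finset.card_univ, hsum, Finset.sum_congr rfl hfib,
      Finset.sum_const, smul_eq_mul]
  have himg_sub : img ⊆ Finset.univ.filter (fun z : F => z^q = z) := by
    intro z hz
    rw [Finset.mem_image] at hz
    obtain ⟨c, -, rfl⟩ := hz
    exact Finset.mem_filter.mpr ⟨Finset.mem_univ _, tr_fixed hcard hfrob c⟩
  have h1 : img.card ≤ q := le_trans (Finset.card_le_card himg_sub) (card_fixed_le hq2)
  have h2 : K ≤ q := card_trzero_le hq2
  have hq0 : 0 < q := by omega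
  have ha : q ≤ img.card := by
    have hmm : q*q ≤ img.card * q := by
      calc q*q = img.card * K := htot
        _ ≤ img.card * q := Nat.mul_le_mul_left _ h2
    exact Nat.le_of_mul_le_mul_right hmm hq0
  have hb : q ≤ K := by
    have hmm : q*q ≤ K * q := by
      calc q*q = img.card * K := htot
        _ = K * img.card := Nat.mul_comm _ _
        _ ≤ K * q := Nat.mul_le_mul_left _ h1
    exact Nat.le_of_mul_le_mul_right hmm hq0
  have himgq : img.card = q := le_antisymm h1 ha
  have hKq : K = q := le_antisymm h2 hb
  have heq : img = Finset.univ.filter (fun z : F => z^q = z) :=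
    Finset.eq_of_subset_of_card_le himg_sub (by rw [himgq]; exact card_fixed_le hq2)
  intro e he
  have hemem : e ∈ img := by
    rw [heq, Finset.mem_filter]; exact ⟨Finset.mem_univ _, he⟩
  rw [hfib e hemem, hKq]

lemma tr_cofiber_count (hq2 : 2 ≤ q) (hcard : Fintype.card F = q^2)
    (hfrob : ∀ a b : F, (a+b)^q = a^q + b^q) (e : F) (he : e^q = e) :
    (Finset.univ.filter (fun c : F => ¬ (c^q + c = e))).card = q^2 - q := by
  classical
  have h := Finset.card_filter_add_card_filter_not (s := (Finset.univ : Finset F))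
    (p := fun c : F => c^q + c = e)
  rw [tr_fiber_count hq2 hcard hfrob e he, Finset.card_univ, hcard] at h
  omega

end Counting2

/-- affine points of the Hermitian unital, `∞` will be `none` in `Option (Uaff F q)` -/
def Uaff (F : Type) [Field F] (q : ℕ) : Type := {v : F × F // v.1^(q+1) + (v.2^q + v.2) = 0}

instance UaffFintype (F : Type) [Field F] [Fintype F] [DecidableEq F] (q : ℕ) :
    Fintype (Uaff F q) := by unfold Uaff; infer_instance

/-- the label (= class of the partition attached to `m`) of a point of the unital -/
def lab {F : Type} [Field F] [DecidableEq F] (q : ℕ) (m : F) (u : Option (Uaff F q)) :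
    Option F :=
  match u with
  | none => none
  | some w => if w.1.1 = -m^q then none else some (w.1.2 - m * w.1.1)

section Unital
variable {F : Type} [Field F] [Fintype F] [DecidableEq F] {q : ℕ}

lemma card_unital (hq2 : 2 ≤ q) (hcard : Fintype.card F = q^2)
    (hfrob : ∀ a b : F, (a+b)^q = a^q + b^q) :
    Fintype.card (Option (Uaff F q)) = q^3 + 1 := by
  classical
  rw [Fintype.card_option]
  congr 1
  have hq0 : q ≠ 0 := by omega
  have e := Equiv.subtypeProdEquivSigmaSubtype (fun (x y : F) => x^(q+1) + (y^q + y) = 0)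
  have : Fintype.card (Uaff F q) = ∑ x : F, (Finset.univ.filter
      (fun y : F => x^(q+1) + (y^q + y) = 0)).card := by
    rw [show Fintype.card (Uaff F q) = Fintype.card {v : F × F // v.1^(q+1) + (v.2^q + v.2) = 0} from rfl,
      Fintype.card_congr e, Fintype.card_sigma]
    congr 1
    funext x
    rw [Fintype.card_subtype]
  rw [this]
  have hfix : ∀ x : F, (-(x^(q+1)))^q = -(x^(q+1)) := by
    intro x
    rw [hneg_pow hq0 hfrob, ← pow_mul]
    congr 1
    rw [show (q+1)*q = q*q + q by ring, pow_add, hpow_qq hcard, pow_succ, mul_comm]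
  have hfib : ∀ x : F, (Finset.univ.filter (fun y : F => x^(q+1) + (y^q + y) = 0)).card = q := by
    intro x
    have : (Finset.univ.filter (fun y : F => x^(q+1) + (y^q + y) = 0))
        = (Finset.univ.filter (fun y : F => y^q + y = -(x^(q+1)))) := by
      apply Finset.filter_congr
      intro y _
      constructor
      · intro h; linear_combination h
      · intro h; linear_combination h
    rw [this, tr_fiber_count hq2 hcard hfrob _ (hfix x)]
  rw [Finset.sum_congr rfl (fun x _ => hfib x), Finset.sum_const, smul_eq_mul,
    Finset.card_univ, hcard]
  ring

lemma lab_key (hq2 : 2 ≤ q) (hcard : Fintype.card F = q^2)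
    (hfrob : ∀ a b : F, (a+b)^q = a^q + b^q)
    (m x y : F) (h : x^(q+1) + (y^q + y) = 0) (hx : x ≠ -m^q) :
    ¬ ((y - m*x)^q + (y - m*x) = m^(q+1)) := by
  have hq0 : q ≠ 0 := by omega
  intro heq
  have key : m^(q+1) - ((y-m*x)^q + (y-m*x)) = (x + m^q) * (x^q + m) := by
    rw [hsub_pow hfrob, mul_pow]
    rw [pow_succ, pow_succ] at *
    linear_combination -h
  rw [heq, sub_self] at key
  rcases mul_eq_zero.mp key.symm with h1 | h2
  · exact hx (eq_neg_of_add_eq_zero_left h1)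
  · apply hx
    apply hpow_inj hq0 hfrob
    rw [hneg_pow hq0 hfrob, ← pow_mul, hpow_qq hcard]
    exact eq_neg_of_add_eq_zero_left h2

lemma lab_card (hq2 : 2 ≤ q) (hcard : Fintype.card F = q^2)
    (hfrob : ∀ a b : F, (a+b)^q = a^q + b^q) (m : F) :
    (Finset.univ.image (lab q m)).card ≤ q^2 - q + 1 := by
  classical
  have hfixm : (m^(q+1))^q = m^(q+1) := by
    rw [← pow_mul]
    rw [show (q+1)*q = q*q + q by ring, pow_add, hpow_qq hcard, pow_succ, mul_comm]
  have hsub : Finset.univ.image (lab q m) ⊆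
      insert none ((Finset.univ.filter (fun c : F => ¬ (c^q + c = m^(q+1)))).image some) := by
    intro z hz
    rw [Finset.mem_image] at hz
    obtain ⟨u, -, rfl⟩ := hz
    match u with
    | none => exact Finset.mem_insert_self _ _
    | some w =>
      show (if w.1.1 = -m^q then none else some (w.1.2 - m * w.1.1)) ∈ _
      by_cases hw : w.1.1 = -m^q
      · rw [if_pos hw]; exact Finset.mem_insert_self _ _
      · rw [if_neg hw]
        apply Finset.mem_insert_of_mem
        apply Finset.mem_image_of_mem
        rw [Finset.mem_filter]
        exact ⟨Finset.mem_univ _, lab_key hq2 hcard hfrob m w.1.1 w.1.2 w.2 hw⟩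
  calc (Finset.univ.image (lab q m)).card
      ≤ (insert none ((Finset.univ.filter (fun c : F => ¬ (c^q + c = m^(q+1)))).image some)).card :=
        Finset.card_le_card hsub
    _ ≤ ((Finset.univ.filter (fun c : F => ¬ (c^q + c = m^(q+1)))).image some).card + 1 :=
        Finset.card_insert_le _ _
    _ = (Finset.univ.filter (fun c : F => ¬ (c^q + c = m^(q+1)))).card + 1 := by
        rw [Finset.card_image_of_injective _ (Option.some_injective F)]
    _ = (q^2 - q) + 1 := by rw [tr_cofiber_count hq2 hcard hfrob _ hfixm]

lemma lab_suit (hq2 : 2 ≤ q) (hcard : Fintype.card F = q^2)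
    (hfrob : ∀ a b : F, (a+b)^q = a^q + b^q)
    {m m' : F} (hmm : m ≠ m') {u v : Option (Uaff F q)} (huv : u ≠ v)
    (h1 : lab q m u = lab q m v) (h2 : lab q m' u = lab q m' v) : False := by
  have hq0 : q ≠ 0 := by omega
  have hpowne : -m^q ≠ -m'^q := by
    intro h
    exact hmm (hpow_inj hq0 hfrob (neg_injective h))
  match u, v with
  | none, none => exact huv rfl
  | none, some w =>
    simp only [lab] at h1 h2
    by_cases c1 : w.1.1 = -m^q
    · by_cases c3 : w.1.1 = -m'^q
      · exact hpowne (c1.symm.trans c3)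
      · rw [if_neg c3] at h2
        exact nomatch h2
    · rw [if_neg c1] at h1
      exact nomatch h1
  | some w, none =>
    simp only [lab] at h1 h2
    by_cases c1 : w.1.1 = -m^q
    · by_cases c3 : w.1.1 = -m'^q
      · exact hpowne (c1.symm.trans c3)
      · rw [if_neg c3] at h2
        exact nomatch h2
    · rw [if_neg c1] at h1
      exact nomatch h1
  | some w, some w' =>
    simp only [lab] at h1 h2
    have hne : w ≠ w' := fun h => huv (congrArg some h)
    by_cases c1 : w.1.1 = -m^q <;> by_cases c2 : w'.1.1 = -m^q
    · have hx : w.1.1 = w'.1.1 := c1.trans c2.symm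
      by_cases c3 : w.1.1 = -m'^q
      · exact hpowne (c1.symm.trans c3)
      · have c4 : ¬ w'.1.1 = -m'^q := fun h => hpowne (c2.symm.trans h)
        rw [if_neg c3, if_neg c4] at h2
        have hy2 := Option.some_injective _ h2
        rw [hx] at hy2
        have hy : w.1.2 = w'.1.2 := by linear_combination hy2
        exact hne (Subtype.ext (Prod.ext hx hy))
    · rw [if_pos c1, if_neg c2] at h1
      exact nomatch h1
    · rw [if_neg c1, if_pos c2] at h1
      exact nomatch h1
    · rw [if_neg c1, if_neg c2] at h1
      have hy1 := Option.some_injective _ h1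
      by_cases c3 : w.1.1 = -m'^q <;> by_cases c4 : w'.1.1 = -m'^q
      · have hx : w.1.1 = w'.1.1 := c3.trans c4.symm
        rw [hx] at hy1
        have hy : w.1.2 = w'.1.2 := by linear_combination hy1
        exact hne (Subtype.ext (Prod.ext hx hy))
      · rw [if_pos c3, if_neg c4] at h2
        exact nomatch h2
      · rw [if_neg c3, if_pos c4] at h2
        exact nomatch h2
      · rw [if_neg c3, if_neg c4] at h2
        have hy2 := Option.some_injective _ h2
        have hx : w.1.1 = w'.1.1 := by
          have hsubx : (m' - m) * w.1.1 = (m' - m) * w'.1.1 := by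
            linear_combination hy1 - hy2
          have hm : m' - m ≠ 0 := sub_ne_zero.mpr (Ne.symm hmm)
          exact mul_left_cancel₀ hm hsubx
        rw [hx] at hy1
        have hy : w.1.2 = w'.1.2 := by linear_combination hy1
        exact hne (Subtype.ext (Prod.ext hx hy))
end Unital

lemma exists_suitable {F : Type} [Field F] [Fintype F] [DecidableEq F] {q : ℕ}
    (hq2 : 2 ≤ q) (hcard : Fintype.card F = q^2)
    (hfrob : ∀ a b : F, (a+b)^q = a^q + b^q)
    (k : ℕ) (hk : k ≤ q^2 + 1) :
    ∃ Λ : Fin (k-1) → Fin (q^3+1) → Fin (q^2-q+1),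
      ∀ a b : Fin (k-1), a ≠ b → ∀ i j : Fin (q^3+1), i ≠ j →
        Λ a i = Λ a j → Λ b i ≠ Λ b j := by
  classical
  let eU : Fin (q^3+1) ≃ Option (Uaff F q) :=
    (Fintype.equivFinOfCardEq (card_unital hq2 hcard hfrob)).symm
  have hle : k - 1 ≤ Fintype.card F := by rw [hcard]; omega
  let μ : Fin (k-1) ↪ F := (Fin.castLEEmb hle).trans (Fintype.equivFin F).symm.toEmbedding
  let img : Fin (k-1) → Finset (Option F) := fun a =>
    Finset.univ.image (fun i : Fin (q^3+1) => lab q (μ a) (eU i))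
  have himg : ∀ a, (img a).card ≤ q^2 - q + 1 := by
    intro a
    refine le_trans (Finset.card_le_card ?_) (lab_card hq2 hcard hfrob (μ a))
    intro z hz
    rw [Finset.mem_image] at hz
    obtain ⟨i, -, rfl⟩ := hz
    exact Finset.mem_image_of_mem _ (Finset.mem_univ (eU i))
  let ψ : (a : Fin (k-1)) → ({z // z ∈ img a} ↪ Fin (q^2-q+1)) := fun a =>
    (Fintype.equivFin _).toEmbedding.trans
      (Fin.castLEEmb (by rw [Fintype.card_coe]; exact himg a))
  refine ⟨fun a i => ψ a ⟨lab q (μ a) (eU i),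
    Finset.mem_image_of_mem _ (Finset.mem_univ i)⟩, ?_⟩
  intro a b hab i j hij hA hB
  have hA' : lab q (μ a) (eU i) = lab q (μ a) (eU j) :=
    congrArg Subtype.val ((ψ a).injective hA)
  have hB' : lab q (μ b) (eU i) = lab q (μ b) (eU j) :=
    congrArg Subtype.val ((ψ b).injective hB)
  exact lab_suit hq2 hcard hfrob (fun h => hab (μ.injective h)) (eU.injective.ne hij) hA' hB'


/-- Let `q ≥ 2` be a prime power and `s = q³ + 1` (the size of the
classical unital in `PG(2,q²)`). Then for every `2 ≤ k ≤ q² + 1` there exists a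
`k`-server PIR `[m,s]`-code with `m = s + (k-1)·s/(q+1) = s + (k-1)(q² - q + 1)`. -/
theorem pir_code_of_unital (q : ℕ) (hq2 : 2 ≤ q) (hq : IsPrimePow q)
    (s : ℕ) (hs : s = q ^ 3 + 1)
    (k : ℕ) (hk2 : 2 ≤ k) (hk : k ≤ q ^ 2 + 1) :
    s + (k - 1) * (s / (q + 1)) = s + (k - 1) * (q ^ 2 - q + 1) ∧
      ExistsPIRCode s (s + (k - 1) * (q ^ 2 - q + 1)) k := by
  subst hs
  have hq1 : q ≤ q^2 := Nat.le_self_pow (by norm_num) q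
  have hfac : (q+1) * (q^2 - q + 1) = q^3 + 1 := by zify [hq1]; ring
  constructor
  · have hdiv : (q^3+1) / (q+1) = q^2 - q + 1 := by
      rw [← hfac]
      exact Nat.mul_div_cancel_left _ (by omega : 0 < q+1)
    rw [hdiv]
  · obtain ⟨p, nn, hp, hnn, rfl⟩ := hq
    haveI : Fact p.Prime := ⟨Nat.prime_iff.mpr hp⟩
    set F := GaloisField p (2*nn) with hF
    letI : DecidableEq F := Classical.decEq F
    haveI : Finite F := Nat.finite_of_card_ne_zero (by
      rw [GaloisField.card p (2*nn) (by omega)]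
      exact Nat.pos_iff_ne_zero.mp (pow_pos (Nat.prime_iff.mpr hp).pos _)
      )
    letI : Fintype F := Fintype.ofFinite F
    have hcard : Fintype.card F = (p^nn)^2 := by
      have h := GaloisField.card p (2*nn) (by omega)
      rw [Nat.card_eq_fintype_card] at h
      rw [h, ← pow_mul, mul_comm 2 nn]
    have hfrob : ∀ a b : F, (a+b)^(p^nn) = a^(p^nn)+b^(p^nn) := fun a b =>
      add_pow_char_pow a b p nn
    obtain ⟨Λ, hΛ⟩ := exists_suitable hq2 hcard hfrob k hk
    exact abstract_code _ _ k Λ hΛ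
end

section
/- Let q > 3 be an odd prime power and set s = (q² − q)/2. Then for every integer k with 2 ≤ k ≤ q + 1 there exists a k-server PIR [m,s]-code with m = s + (k−1)(q−1). -/
/-- The set of "internal points" `(S, P)` (coefficients of rootless monic quadratics)
has cardinality `(q² - q)/2`. -/
lemma aux_card_internal (F : Type*) [Field F] [Fintype F] [DecidableEq F] (q : ℕ)
    (hF : Fintype.card F = q) (hodd : Odd q) :
    Fintype.card {x : F × F // ∀ b : F, b * b + x.1 * b + x.2 ≠ 0} = (q ^ 2 - q) / 2 := by
  classical
  -- the map sending an unordered pair of roots to the corresponding quadratic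
  let g : Sym2 F → F × F :=
    Sym2.lift ⟨fun a c => (-(a + c), a * c), fun a c => by
      simp [add_comm, mul_comm]⟩
  have hg : ∀ a c : F, g (Sym2.mk a c) = (-(a + c), a * c) := fun a c => rfl
  have hginj : Function.Injective g := by
    intro z w h
    induction z using Sym2.inductionOn with
    | hf a c =>
      induction w using Sym2.inductionOn with
      | hf a' c' =>
        rw [hg, hg, Prod.mk.injEq, neg_inj] at h
        obtain ⟨h1, h2⟩ := h
        have h3 : (a' - a) * (a' - c) = 0 := by linear_combination h2 - a' * h1
        rcases mul_eq_zero.1 h3 with h4 | h4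
        · have ha : a' = a := sub_eq_zero.1 h4
          have hc : c' = c := by
            have := h1
            rw [ha] at this
            exact (add_left_cancel this).symm
          exact Sym2.eq_iff.2 (Or.inl ⟨ha.symm, hc.symm⟩)
        · have ha : a' = c := sub_eq_zero.1 h4
          have hc : c' = a := by
            have := h1
            rw [ha, add_comm c c'] at this
            exact (add_right_cancel this).symm
          exact Sym2.eq_iff.2 (Or.inr ⟨hc.symm, ha.symm⟩)
  have hgprop : ∀ z : Sym2 F, ¬ ∀ b : F, b * b + (g z).1 * b + (g z).2 ≠ 0 := by
    intro z
    induction z using Sym2.inductionOn with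
    | hf a c =>
      intro hall
      exact hall a (by rw [hg]; ring)
  -- the complement of the internal set is in bijection with `Sym2 F`
  have hcompl : Fintype.card {x : F × F // ¬ ∀ b : F, b * b + x.1 * b + x.2 ≠ 0}
      = (q + 1).choose 2 := by
    have hbij : Function.Bijective
        (fun z : Sym2 F => (⟨g z, hgprop z⟩ :
          {x : F × F // ¬ ∀ b : F, b * b + x.1 * b + x.2 ≠ 0})) := by
      constructor
      · intro z w h
        exact hginj (congrArg Subtype.val h)
      · rintro ⟨x, hx⟩
        push_neg at hx
        obtain ⟨b, hb⟩ := hx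
        refine ⟨Sym2.mk b (-x.1 - b), ?_⟩
        apply Subtype.ext
        show g (Sym2.mk b (-x.1 - b)) = x
        rw [hg]
        exact Prod.ext (by ring) (by linear_combination -hb)
    have := Fintype.card_of_bijective hbij
    rw [← this, Sym2.card, hF]
  have hc2 := Fintype.card_subtype_compl (fun x : F × F => ∀ b : F, b * b + x.1 * b + x.2 ≠ 0)
  have hle := Fintype.card_subtype_le (fun x : F × F => ∀ b : F, b * b + x.1 * b + x.2 ≠ 0)
  have hFF : Fintype.card (F × F) = q * q := by simp [hF]
  rw [hcompl, hFF] at hc2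
  rw [hFF] at hle
  have hch : (q + 1).choose 2 = (q * q + q) / 2 := by
    rw [Nat.choose_two_right]
    congr 1
    simp [Nat.add_sub_cancel]
    ring
  rw [hch] at hc2
  obtain ⟨c, hcq⟩ := hodd
  have hoddq : q * q = 2 * (c * q) + q := by rw [hcq]; ring
  rw [pow_two]
  generalize hE : c * q = E at hoddq
  generalize hA : q * q = A at hc2 hle hoddq ⊢
  omega

/-- Construction of the `k`-server PIR code from a finite field `F` of order `q`. -/
lemma aux_construct_pir (F : Type*) [Field F] [Fintype F] [DecidableEq F]
    (q s k : ℕ) (hF : Fintype.card F = q)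
    (hD : Fintype.card {x : F × F // ∀ b : F, b * b + x.1 * b + x.2 ≠ 0} = s)
    (hk1 : 1 ≤ k) (hk : k ≤ q + 1) :
    ExistsPIRCode s (s + (k - 1) * (q - 1)) k := by
  classical
  obtain ⟨e⟩ : Nonempty (Fin s ≃ {x : F × F // ∀ b : F, b * b + x.1 * b + x.2 ≠ 0}) :=
    ⟨(Fintype.equivFinOfCardEq hD).symm⟩
  obtain ⟨β⟩ : Nonempty (Fin (k - 1) ↪ F) := by
    apply Function.Embedding.nonempty_of_card_le
    rw [Fintype.card_fin, hF]
    omega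
  have hcardv : ∀ cc : F, Fintype.card {v : F // v ≠ cc} = q - 1 := by
    intro cc
    have : Fintype.card {v : F // ¬ v = cc} = Fintype.card F - Fintype.card {v : F // v = cc} :=
      Fintype.card_subtype_compl _
    simpa [Fintype.card_subtype_eq, hF] using this
  let ψ : (cc : F) → {v : F // v ≠ -(cc * cc)} ≃ Fin (q - 1) :=
    fun cc => Fintype.equivFinOfCardEq (hcardv _)
  let f : F → {x : F × F // ∀ b : F, b * b + x.1 * b + x.2 ≠ 0} → F :=
    fun cc x => x.1.2 + cc * x.1.1
  have hfne : ∀ (cc : F) (x : {x : F × F // ∀ b : F, b * b + x.1 * b + x.2 ≠ 0}),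
      f cc x ≠ -(cc * cc) := by
    intro cc x h
    exact x.2 cc (by simp only [f] at h; linear_combination h)
  have hcross : ∀ (c1 c2 : F), c1 ≠ c2 →
      ∀ (x y : {x : F × F // ∀ b : F, b * b + x.1 * b + x.2 ≠ 0}),
        f c1 x = f c1 y → f c2 x = f c2 y → x = y := by
    intro c1 c2 hcc x y h1 h2
    simp only [f] at h1 h2
    have h3 : (c1 - c2) * (x.1.1 - y.1.1) = 0 := by linear_combination h1 - h2
    have hx1 : x.1.1 = y.1.1 := by
      rcases mul_eq_zero.1 h3 with h4 | h4
      · exact absurd (sub_eq_zero.1 h4) hcc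
      · exact sub_eq_zero.1 h4
    have hx2 : x.1.2 = y.1.2 := by linear_combination h1 - c1 * hx1
    exact Subtype.ext (Prod.ext hx1 hx2)
  -- the index type for the columns
  let ι := Fin s ⊕ Fin (k - 1) × Fin (q - 1)
  let eι : ι ≃ Fin (s + (k - 1) * (q - 1)) :=
    (Equiv.sumCongr (Equiv.refl (Fin s)) finProdFinEquiv).trans finSumFinEquiv
  let G' : Fin s → ι → ZMod 2 := fun r =>
    Sum.elim (fun t => if r = t then 1 else 0)
      (fun pr => if f (β pr.1) (e r) = ((ψ (β pr.1)).symm pr.2 : F) then 1 else 0)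
  refine ⟨fun r j => G' r (eι.symm j), ?_⟩
  intro i
  let T : Fin (k - 1) → Finset (Fin s) :=
    fun b => Finset.univ.filter fun j => j ≠ i ∧ f (β b) (e j) = f (β b) (e i)
  let Rb : Fin (k - 1) → Finset ι :=
    fun b => insert (Sum.inr (b, ψ (β b) ⟨f (β b) (e i), hfne _ _⟩)) ((T b).image Sum.inl)
  let R0 : Fin k → Finset ι :=
    fun a => if h : (a : ℕ) = 0 then {Sum.inl i}
      else Rb ⟨(a : ℕ) - 1, by omega⟩
  refine ⟨fun a => (R0 a).map eι.toEmbedding, ?_, ?_⟩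
  · -- pairwise disjointness
    have fact1 : ∀ b : Fin (k - 1), Sum.inl i ∉ Rb b := by
      intro b hmem
      simp only [Rb, Finset.mem_insert, Finset.mem_image, T, Finset.mem_filter] at hmem
      rcases hmem with h | ⟨j, ⟨_, hj1, _⟩, hj2⟩
      · exact Sum.inl_ne_inr h
      · exact hj1 (Sum.inl.inj hj2)
    have fact2 : ∀ b b' : Fin (k - 1), b ≠ b' → Disjoint (Rb b) (Rb b') := by
      intro b b' hbb
      rw [Finset.disjoint_left]
      intro x hx hx'
      simp only [Rb, Finset.mem_insert, Finset.mem_image, T, Finset.mem_filter] at hx hx'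
      rcases hx with h | ⟨j, ⟨_, hj1, hj2⟩, hj3⟩
      · rcases hx' with h' | ⟨j', _, hj3'⟩
        · rw [h] at h'
          exact hbb (Prod.ext_iff.1 (Sum.inr.inj h')).1
        · rw [h] at hj3'
          exact Sum.inl_ne_inr hj3'
      · rcases hx' with h' | ⟨j', ⟨_, hj1', hj2'⟩, hj3'⟩
        · rw [h'] at hj3
          exact Sum.inl_ne_inr hj3
        · have hjj : j = j' := Sum.inl.inj (hj3.trans hj3'.symm)
          rw [← hjj] at hj2'
          have : e j = e i :=
            hcross (β b) (β b') (fun hh => hbb (β.injective hh)) (e j) (e i) hj2 hj2'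
          exact hj1 (e.injective this)
    intro a a' haa
    rw [Finset.disjoint_map]
    by_cases h1 : (a : ℕ) = 0 <;> by_cases h2 : (a' : ℕ) = 0
    · exact absurd (Fin.ext (h1.trans h2.symm)) haa
    · simp only [R0, dif_pos h1, dif_neg h2]
      rw [Finset.disjoint_singleton_left]
      exact fact1 _
    · simp only [R0, dif_neg h1, dif_pos h2]
      rw [Finset.disjoint_singleton_right]
      exact fact1 _
    · simp only [R0, dif_neg h1, dif_neg h2]
      apply fact2
      intro hh
      apply haa
      have := congrArg Fin.val hh
      simp only at this
      exact Fin.ext (by omega)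
  · -- the sums
    intro a
    have hμ : ∀ S : Finset ι,
        (∑ j ∈ S.map eι.toEmbedding, fun r => G' r (eι.symm j)) = ∑ x ∈ S, fun r => G' r x := by
      intro S
      rw [Finset.sum_map]
      apply Finset.sum_congr rfl
      intro x _
      simp
    rw [hμ]
    by_cases h1 : (a : ℕ) = 0
    · simp only [R0, dif_pos h1]
      rw [Finset.sum_singleton]
      funext r
      simp only [G', Sum.elim_inl, Pi.single_apply]
    · simp only [R0, dif_neg h1]
      set b : Fin (k - 1) := ⟨(a : ℕ) - 1, by omega⟩ with hb
      have hnotmem : (Sum.inr (b, ψ (β b) ⟨f (β b) (e i), hfne _ _⟩) : ι) ∉ (T b).image Sum.inl := by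
        intro hmem
        simp only [Finset.mem_image] at hmem
        obtain ⟨j, _, hj⟩ := hmem
        exact Sum.inl_ne_inr hj
      rw [show Rb b = insert (Sum.inr (b, ψ (β b) ⟨f (β b) (e i), hfne _ _⟩)) ((T b).image Sum.inl)
        from rfl]
      rw [Finset.sum_insert hnotmem]
      rw [Finset.sum_image (fun x _ y _ h => Sum.inl.inj h)]
      funext r
      rw [Pi.add_apply, Finset.sum_apply]
      simp only [G', Sum.elim_inr, Sum.elim_inl, Equiv.symm_apply_apply]
      rw [Finset.sum_ite_eq]
      by_cases hr : r = i
      · subst hr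
        have hmem : r ∉ T b := by simp [T]
        rw [if_pos rfl, if_neg hmem, Pi.single_eq_same]
        exact add_zero 1
      · rw [Pi.single_eq_of_ne hr]
        have hmem : r ∈ T b ↔ f (β b) (e r) = f (β b) (e i) := by
          simp [T, hr]
        by_cases hf : f (β b) (e r) = f (β b) (e i)
        · rw [if_pos hf, if_pos (hmem.2 hf)]
          rfl
        · rw [if_neg hf, if_neg (fun hh => hf (hmem.1 hh))]
          rfl

/-- Let `q > 3` be an odd prime power and `s = (q² - q)/2` (the number
of internal points of an irreducible conic in `PG(2,q)`). Then for every `2 ≤ k ≤ q + 1`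
there exists a `k`-server PIR `[m,s]`-code with `m = s + (k-1)(q-1)`. -/
theorem pir_code_of_internal_points (q : ℕ) (hq : IsPrimePow q) (hodd : Odd q)
    (hq3 : 3 < q) (s : ℕ) (hs : s = (q ^ 2 - q) / 2)
    (k : ℕ) (hk2 : 2 ≤ k) (hk : k ≤ q + 1) :
    ExistsPIRCode s (s + (k - 1) * (q - 1)) k := by
  classical
  obtain ⟨p, n, hp, hn, rfl⟩ := hq
  haveI : Fact p.Prime := ⟨Nat.prime_iff.mpr hp⟩
  haveI : Fintype (GaloisField p n) := Fintype.ofFinite _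
  have hF : Fintype.card (GaloisField p n) = p ^ n := by
    rw [← Nat.card_eq_fintype_card, GaloisField.card p n hn.ne']
  have hD := aux_card_internal (GaloisField p n) (p ^ n) hF hodd
  rw [← hs] at hD
  exact aux_construct_pir (GaloisField p n) (p ^ n) s k hF hD (by omega) hk
end

section
/- Let (v_t, b_z) be a resolvable BIBD with z ≥ 2. Then for every integer k with 2 ≤ k ≤ 1 + (v−1)/(z−1) there exists a k-server PIR [m,v]-code with m = v + (k−1)·v/z. -/
/-- A `(v_t, b_z)`-configuration: `v` points, `b` lines (subsets of the point set), each
line has `z` points, each point lies on `t` lines, and two distinct points lie on at most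
one common line. -/
structure CombConfig (X : Type*) [DecidableEq X] [Fintype X] (v b t z : ℕ) where
  lines : Finset (Finset X)
  card_points : Fintype.card X = v
  card_lines : lines.card = b
  line_size : ∀ l ∈ lines, l.card = z
  point_degree : ∀ x : X, (lines.filter fun l => x ∈ l).card = t
  two_points : ∀ x y : X, x ≠ y → (lines.filter fun l => x ∈ l ∧ y ∈ l).card ≤ 1

/-- A parallel class: a set of lines partitioning the point set. -/
def IsParallelClass {X : Type*} [DecidableEq X] [Fintype X]
    (lines C : Finset (Finset X)) : Prop :=
  C ⊆ lines ∧ ∀ x : X, ∃! l, l ∈ C ∧ x ∈ l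

/-- A resolution: a partition of the set of lines into parallel classes. -/
def IsResolution {X : Type*} [DecidableEq X] [Fintype X]
    (lines : Finset (Finset X)) (R : Finset (Finset (Finset X))) : Prop :=
  (∀ C ∈ R, IsParallelClass lines C ∧ C.Nonempty) ∧ ∀ l ∈ lines, ∃! C, C ∈ R ∧ l ∈ C

/-- Let `(v_t, b_z)` be a resolvable BIBD (a configuration in which any
two distinct points lie on exactly one common line) with `z ≥ 2`. Then for every
`2 ≤ k ≤ 1 + (v-1)/(z-1)` there exists a `k`-server PIR `[v + (k-1)·v/z, v]`-code. -/
theorem pir_code_of_resolvable_bibd {X : Type*} [DecidableEq X] [Fintype X]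
    (v b t z : ℕ) (cfg : CombConfig X v b t z) (hz : 2 ≤ z)
    (hbibd : ∀ x y : X, x ≠ y → (cfg.lines.filter fun l => x ∈ l ∧ y ∈ l).card = 1)
    (hres : ∃ R, IsResolution cfg.lines R)
    (k : ℕ) (hk2 : 2 ≤ k) (hk : k ≤ 1 + (v - 1) / (z - 1)) :
    ExistsPIRCode v (v + (k - 1) * (v / z)) k := by
  classical
  obtain ⟨R, hRpar, hRcover⟩ := hres
  have hz0 : 0 < z := by omega
  have hv2 : 2 ≤ v := by
    rcases Nat.lt_or_ge v 2 with h | h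
    · exfalso
      have h0 : v - 1 = 0 := by omega
      rw [h0, Nat.zero_div] at hk
      omega
    · exact h
  set p := v / z with hp
  -- every parallel class in R has card p
  have hclass : ∀ C ∈ R, C.card = p := by
    intro C hC
    obtain ⟨⟨hsub, hpart⟩, -⟩ := hRpar C hC
    have hdisj : ∀ l1 ∈ C, ∀ l2 ∈ C, l1 ≠ l2 → Disjoint (id l1) (id l2) := by
      intro l1 h1 l2 h2 hne
      rw [id, id, Finset.disjoint_left]
      intro y hy1 hy2
      obtain ⟨l, -, hu⟩ := hpart y
      exact hne ((hu l1 ⟨h1, hy1⟩).trans (hu l2 ⟨h2, hy2⟩).symm)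
    have hun : C.biUnion id = Finset.univ := by
      ext y
      simp only [Finset.mem_biUnion, id, Finset.mem_univ, iff_true]
      obtain ⟨l, hl, -⟩ := hpart y
      exact ⟨l, hl.1, hl.2⟩
    have h1 := Finset.card_biUnion hdisj
    rw [hun, Finset.card_univ, cfg.card_points] at h1
    have h2 : ∑ u ∈ C, (id u).card = C.card * z :=
      calc ∑ u ∈ C, (id u).card = ∑ _u ∈ C, z :=
            Finset.sum_congr rfl (fun l hl => cfg.line_size l (hsub hl))
        _ = C.card * z := by rw [Finset.sum_const, smul_eq_mul]
    rw [h2] at h1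
    rw [hp, h1, Nat.mul_div_cancel _ hz0]
  -- a point
  have hx0 : Nonempty X := Fintype.card_pos_iff.mp (by rw [cfg.card_points]; omega)
  obtain ⟨x0⟩ := hx0
  -- t * (z-1) = v-1
  have hcount : t * (z - 1) = v - 1 := by
    have hTdisj : ∀ l1 ∈ cfg.lines.filter (fun l => x0 ∈ l),
        ∀ l2 ∈ cfg.lines.filter (fun l => x0 ∈ l), l1 ≠ l2 →
        Disjoint (l1.erase x0) (l2.erase x0) := by
      intro l1 h1 l2 h2 hne
      rw [Finset.disjoint_left]
      intro y hy1 hy2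
      obtain ⟨hyx, hyl1⟩ := Finset.mem_erase.mp hy1
      obtain ⟨-, hyl2⟩ := Finset.mem_erase.mp hy2
      obtain ⟨hl1, hx1⟩ := Finset.mem_filter.mp h1
      obtain ⟨hl2, hx2⟩ := Finset.mem_filter.mp h2
      have hc := cfg.two_points x0 y (Ne.symm hyx)
      have : 1 < (cfg.lines.filter fun l => x0 ∈ l ∧ y ∈ l).card :=
        Finset.one_lt_card.mpr ⟨l1, Finset.mem_filter.mpr ⟨hl1, hx1, hyl1⟩,
          l2, Finset.mem_filter.mpr ⟨hl2, hx2, hyl2⟩, hne⟩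
      omega
    have hun : (cfg.lines.filter (fun l => x0 ∈ l)).biUnion (fun l => l.erase x0)
        = Finset.univ.erase x0 := by
      ext y
      simp only [Finset.mem_biUnion, Finset.mem_erase, Finset.mem_univ, and_true,
        Finset.mem_filter]
      constructor
      · rintro ⟨l, -, hyx, -⟩
        exact hyx
      · intro hyx
        have hc := hbibd x0 y (Ne.symm hyx)
        obtain ⟨l, hl⟩ := Finset.card_eq_one.mp hc
        have hlm : l ∈ cfg.lines.filter fun l => x0 ∈ l ∧ y ∈ l := by
          rw [hl]; exact Finset.mem_singleton_self l
        obtain ⟨hll, hx0l, hyl⟩ := Finset.mem_filter.mp hlm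
        exact ⟨l, ⟨hll, hx0l⟩, hyx, hyl⟩
    have h1 := Finset.card_biUnion hTdisj
    rw [hun] at h1
    have h2 : (Finset.univ.erase x0).card = v - 1 := by
      rw [Finset.card_erase_of_mem (Finset.mem_univ x0), Finset.card_univ, cfg.card_points]
    have h3 : ∀ l ∈ cfg.lines.filter (fun l => x0 ∈ l), (l.erase x0).card = z - 1 := by
      intro l hl
      rw [Finset.card_erase_of_mem (Finset.mem_filter.mp hl).2,
        cfg.line_size l (Finset.mem_filter.mp hl).1]
    rw [Finset.sum_congr rfl h3, Finset.sum_const, smul_eq_mul, cfg.point_degree x0] at h1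
    omega
  -- t ≤ R.card
  have hclassOf : ∀ l, l ∈ cfg.lines → ∃ C, (C ∈ R ∧ l ∈ C) ∧
      ∀ C', (C' ∈ R ∧ l ∈ C') → C' = C := fun l hl => hRcover l hl
  choose! cOf hcOf hcOfu using hclassOf
  have htR : t ≤ R.card := by
    rw [← cfg.point_degree x0]
    apply Finset.card_le_card_of_injOn cOf
    · intro l hl
      exact (hcOf l (Finset.mem_filter.mp hl).1).1
    · intro l1 h1 l2 h2 heq
      simp only [Finset.coe_filter, Set.mem_setOf_eq] at h1 h2
      have hm1 : l1 ∈ cOf l1 := (hcOf l1 h1.1).2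
      have hm2 : l2 ∈ cOf l1 := heq ▸ (hcOf l2 h2.1).2
      obtain ⟨-, hpart⟩ := (hRpar (cOf l1) (hcOf l1 h1.1).1).1
      obtain ⟨l, -, hu⟩ := hpart x0
      exact (hu l1 ⟨hm1, h1.2⟩).trans (hu l2 ⟨hm2, h2.2⟩).symm
  have hkR : k - 1 ≤ R.card := by
    have hdiv : (v - 1) / (z - 1) = t := by
      rw [← hcount, Nat.mul_div_cancel _ (by omega : 0 < z - 1)]
    omega
  -- choose k-1 distinct classes
  set fC : Fin (k-1) → {C // C ∈ R} := fun j => R.equivFin.symm (Fin.castLE hkR j) with hfC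
  have hfCinj : Function.Injective fC := by
    intro a b h
    have := R.equivFin.symm.injective h
    exact Fin.castLE_injective hkR this
  set Cl : Fin (k-1) → Finset (Finset X) := fun j => (fC j : Finset (Finset X)) with hCl
  have hCmem : ∀ j, Cl j ∈ R := fun j => (fC j).2
  have hClinj : ∀ j j', j ≠ j' → Cl j ≠ Cl j' := by
    intro j j' hne h
    exact hne (hfCinj (Subtype.ext h))
  have hClcard : ∀ j, (Cl j).card = p := fun j => hclass _ (hCmem j)
  have hClsub : ∀ j, Cl j ⊆ cfg.lines := fun j => ((hRpar _ (hCmem j)).1).1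
  have hClpart : ∀ j, ∀ y : X, ∃! l, l ∈ Cl j ∧ y ∈ l := fun j => ((hRpar _ (hCmem j)).1).2
  set eX : X ≃ Fin v := Fintype.equivFinOfCardEq cfg.card_points with heX
  set col : (Fin v ⊕ (Fin (k-1) × Fin p)) → Fin v → ZMod 2 :=
    Sum.elim (fun a r => if r = a then 1 else 0)
      (fun q r =>
        if eX.symm r ∈ ((Cl q.1).equivFin.symm (Fin.cast (hClcard q.1).symm q.2) : Finset X)
        then 1 else 0)
    with hcol
  set e : (Fin v ⊕ (Fin (k-1) × Fin p)) ≃ Fin (v + (k-1) * p) :=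
    (Equiv.sumCongr (Equiv.refl (Fin v)) finProdFinEquiv).trans finSumFinEquiv with he
  refine ⟨fun r c => col (e.symm c) r, ?_⟩
  intro i
  set x := eX.symm i with hx
  have hline : ∀ j : Fin (k-1), ∃ l, (l ∈ Cl j ∧ x ∈ l) ∧
      ∀ l', (l' ∈ Cl j ∧ x ∈ l') → l' = l := fun j => hClpart j x
  choose lf hlf hlfu using hline
  have hlfC : ∀ j, lf j ∈ Cl j := fun j => (hlf j).1
  have hlfx : ∀ j, x ∈ lf j := fun j => (hlf j).2
  have hlfne : ∀ j j', j ≠ j' → lf j ≠ lf j' := by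
    intro j j' hjj hleq
    have h1 : lf j ∈ Cl j := hlfC j
    have h2 : lf j ∈ Cl j' := hleq ▸ hlfC j'
    have hll : lf j ∈ cfg.lines := hClsub j h1
    have e1 := hcOfu (lf j) hll (Cl j) ⟨hCmem j, h1⟩
    have e2 := hcOfu (lf j) hll (Cl j') ⟨hCmem j', h2⟩
    exact hClinj j j' hjj (e1.trans e2.symm)
  set idx : Fin (k-1) → Fin p := fun j =>
    Fin.cast (hClcard j) ((Cl j).equivFin ⟨lf j, hlfC j⟩) with hidxdef
  have hidx : ∀ j, (((Cl j).equivFin.symm (Fin.cast (hClcard j).symm (idx j))) : Finset X)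
      = lf j := by
    intro j
    have h : Fin.cast (hClcard j).symm (idx j) = (Cl j).equivFin ⟨lf j, hlfC j⟩ := by
      apply Fin.ext
      simp [hidxdef]
    rw [h, Equiv.symm_apply_apply]
  set Sfun : Fin (k-1) → Finset (Fin v ⊕ (Fin (k-1) × Fin p)) := fun j =>
    insert (Sum.inr (j, idx j)) (((lf j).erase x).image (fun y => Sum.inl (eX y))) with hSfun
  set Rset : Fin k → Finset (Fin v ⊕ (Fin (k-1) × Fin p)) := fun a =>
    if h : (a : ℕ) = 0 then {Sum.inl i}
    else Sfun ⟨(a : ℕ) - 1, by have := a.isLt; omega⟩ with hRset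
  have hd1 : ∀ j, Disjoint ({Sum.inl i} : Finset (Fin v ⊕ (Fin (k-1) × Fin p))) (Sfun j) := by
    intro j
    rw [Finset.disjoint_left]
    intro c hc hc'
    rw [Finset.mem_singleton] at hc
    subst hc
    rw [hSfun] at hc'
    rcases Finset.mem_insert.mp hc' with h | h
    · exact absurd h (by simp)
    · obtain ⟨y, hy, hyy⟩ := Finset.mem_image.mp h
      have hyi : eX y = i := Sum.inl.inj hyy
      have : y = x := by rw [hx, ← hyi, Equiv.symm_apply_apply]
      exact (Finset.mem_erase.mp hy).1 this
  have hd2 : ∀ j j', j ≠ j' → Disjoint (Sfun j) (Sfun j') := by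
    intro j j' hne
    rw [Finset.disjoint_left]
    intro c hc hc'
    rw [hSfun] at hc hc'
    rcases Finset.mem_insert.mp hc with h | h
    · rcases Finset.mem_insert.mp hc' with h' | h'
      · rw [h] at h'
        have : j = j' := by
          have := Sum.inr.inj h'
          exact (Prod.ext_iff.mp this).1
        exact hne this
      · obtain ⟨y, -, hyy⟩ := Finset.mem_image.mp h'
        rw [h] at hyy
        exact absurd hyy (by simp)
    · rcases Finset.mem_insert.mp hc' with h' | h'
      · obtain ⟨y, -, hyy⟩ := Finset.mem_image.mp h
        rw [h'] at hyy
        exact absurd hyy (by simp)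
      · obtain ⟨y, hy, hyc⟩ := Finset.mem_image.mp h
        obtain ⟨y', hy', hyc'⟩ := Finset.mem_image.mp h'
        have hyy : y = y' := by
          apply eX.injective
          apply Sum.inl.inj
          rw [hyc, hyc']
        subst hyy
        obtain ⟨hyx, hyl⟩ := Finset.mem_erase.mp hy
        obtain ⟨-, hyl'⟩ := Finset.mem_erase.mp hy'
        have hlfj := hlfne j j' hne
        have hc2 := hbibd x y (Ne.symm hyx)
        have h1m : lf j ∈ cfg.lines.filter fun l => x ∈ l ∧ y ∈ l :=
          Finset.mem_filter.mpr ⟨hClsub j (hlfC j), hlfx j, hyl⟩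
        have h2m : lf j' ∈ cfg.lines.filter fun l => x ∈ l ∧ y ∈ l :=
          Finset.mem_filter.mpr ⟨hClsub j' (hlfC j'), hlfx j', hyl'⟩
        have := Finset.one_lt_card.mpr ⟨_, h1m, _, h2m, hlfj⟩
        omega
  refine ⟨fun a => (Rset a).map e.toEmbedding, ?_, ?_⟩
  · intro a b hab
    rw [Finset.disjoint_map]
    simp only [hRset]
    by_cases ha : (a : ℕ) = 0 <;> by_cases hb : (b : ℕ) = 0
    · exact absurd (Fin.ext (ha.trans hb.symm)) hab
    · rw [dif_pos ha, dif_neg hb]; exact hd1 _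
    · rw [dif_pos hb, dif_neg ha]; exact (hd1 _).symm
    · rw [dif_neg ha, dif_neg hb]
      refine hd2 _ _ ?_
      intro h
      apply hab
      have hv' : (a:ℕ) - 1 = (b:ℕ) - 1 := congrArg Fin.val h
      exact Fin.ext (by omega)
  · intro a
    rw [Finset.sum_map]
    simp only [Equiv.coe_toEmbedding, Equiv.symm_apply_apply]
    simp only [hRset]
    by_cases ha : (a : ℕ) = 0
    · rw [dif_pos ha, Finset.sum_singleton]
      funext r
      simp only [hcol, Sum.elim_inl, Pi.single_apply]
    · rw [dif_neg ha]
      set j : Fin (k-1) := ⟨(a : ℕ) - 1, by have := a.isLt; omega⟩ with hj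
      simp only [hSfun]
      have hnotin : Sum.inr (j, idx j) ∉
          ((lf j).erase x).image (fun y => Sum.inl (eX y) : X → Fin v ⊕ (Fin (k-1) × Fin p)) := by
        intro h
        obtain ⟨y, -, hyy⟩ := Finset.mem_image.mp h
        exact absurd hyy (by simp)
      rw [Finset.sum_insert hnotin]
      rw [Finset.sum_image (fun y _ y' _ h => eX.injective (Sum.inl.inj h))]
      funext r
      rw [Pi.add_apply, Finset.sum_apply]
      simp only [hcol, Sum.elim_inl, Sum.elim_inr]
      rw [hidx j]
      have hrw : ∀ y : X, (if r = eX y then (1:ZMod 2) else 0)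
          = (if y = eX.symm r then 1 else 0) := by
        intro y
        congr 1
        apply propext
        constructor
        · intro h; rw [h, Equiv.symm_apply_apply]
        · intro h; rw [h, Equiv.apply_symm_apply]
      rw [Finset.sum_congr rfl (fun y _ => hrw y)]
      rw [Finset.sum_ite_eq' ((lf j).erase x) (eX.symm r) (fun _ => (1:ZMod 2))]
      by_cases hri : r = i
      · subst hri
        rw [← hx]
        rw [if_pos (hlfx j), if_neg (by simp), Pi.single_eq_same]
        exact add_zero 1
      · rw [Pi.single_eq_of_ne hri]
        have hxr : eX.symm r ≠ x := by
          rw [hx]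
          exact fun h => hri (eX.symm.injective h)
        by_cases hmem : eX.symm r ∈ lf j
        · rw [if_pos hmem, if_pos (Finset.mem_erase.mpr ⟨hxr, hmem⟩)]
          exact (by decide : (1 : ZMod 2) + 1 = 0)
        · rw [if_neg hmem, if_neg (fun h => hmem (Finset.mem_erase.mp h).2)]
          exact add_zero 0
end

section
/- Every (v_t, b_z)-configuration with z ≥ 2 and t ≥ 1 produces a (t+1)-server PIR [v+b, v]-code. -/
/-- Every `(v_t, b_z)`-configuration with `z ≥ 2` and `t ≥ 1`
produces a `(t+1)`-server PIR `[v+b, v]`-code. -/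
theorem pir_code_of_configuration {X : Type*} [DecidableEq X] [Fintype X]
    (v b t z : ℕ) (cfg : CombConfig X v b t z) (hz : 2 ≤ z) (ht : 1 ≤ t) :
    ExistsPIRCode v (v + b) (t + 1) := by
  classical
  have eX : X ≃ Fin v := Fintype.equivFinOfCardEq cfg.card_points
  have hcard : Fintype.card (X ⊕ ↥cfg.lines) = v + b := by
    simp [Fintype.card_sum, cfg.card_points, Fintype.card_coe, cfg.card_lines]
  have e : (X ⊕ ↥cfg.lines) ≃ Fin (v + b) := Fintype.equivFinOfCardEq hcard
  set G0 : X → (X ⊕ ↥cfg.lines) → ZMod 2 := fun x j =>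
    match j with
    | Sum.inl y => if x = y then 1 else 0
    | Sum.inr l => if x ∈ (l : Finset X) then 1 else 0
    with hG0
  refine ⟨fun i j => G0 (eX.symm i) (e.symm j), fun i => ?_⟩
  set x := eX.symm i with hxdef
  set S := cfg.lines.filter (fun l => x ∈ l) with hS
  have hScard : S.card = t := cfg.point_degree x
  have g : ↥S ≃ Fin t := S.equivFinOfCardEq hScard
  -- line enumeration
  set f : Fin t → Finset X := fun a => (g.symm a : Finset X) with hf
  have hfS : ∀ a, f a ∈ S := fun a => (g.symm a).2
  have hfL : ∀ a, f a ∈ cfg.lines := fun a => (Finset.mem_filter.mp (hfS a)).1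
  have hfx : ∀ a, x ∈ f a := fun a => (Finset.mem_filter.mp (hfS a)).2
  have hfinj : Function.Injective f := by
    intro a a' h
    have : (g.symm a : Finset X) = (g.symm a' : Finset X) := h
    have := Subtype.ext this
    exact g.symm.injective this
  have hftwo : ∀ a a' : Fin t, a ≠ a' →
      ∀ y, y ∈ (f a).erase x → y ∉ (f a').erase x := by
    intro a a' haa y hy hy'
    have hyx : y ≠ x := Finset.ne_of_mem_erase hy
    have h1 : f a ∈ cfg.lines.filter (fun l => x ∈ l ∧ y ∈ l) :=
      Finset.mem_filter.mpr ⟨hfL a, hfx a, Finset.mem_of_mem_erase hy⟩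
    have h2 : f a' ∈ cfg.lines.filter (fun l => x ∈ l ∧ y ∈ l) :=
      Finset.mem_filter.mpr ⟨hfL a', hfx a', Finset.mem_of_mem_erase hy'⟩
    have hne : f a ≠ f a' := fun h => haa (hfinj h)
    have : 1 < (cfg.lines.filter (fun l => x ∈ l ∧ y ∈ l)).card :=
      Finset.one_lt_card.mpr ⟨f a, h1, f a', h2, hne⟩
    exact absurd (cfg.two_points x y hyx.symm) (by omega)
  -- recovery sets
  refine ⟨fun a => Fin.cases ({e (Sum.inl x)} : Finset (Fin (v+b)))
    (fun a' => insert (e (Sum.inr ⟨f a', hfL a'⟩))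
      (((f a').erase x).image (fun y => e (Sum.inl y)))) a, ?_, ?_⟩
  · -- pairwise disjoint
    intro a a' haa
    have key : ∀ c c' : Fin t, c ≠ c' →
        Disjoint (insert (e (Sum.inr ⟨f c, hfL c⟩))
          (((f c).erase x).image (fun y => e (Sum.inl y))))
          (insert (e (Sum.inr ⟨f c', hfL c'⟩))
          (((f c').erase x).image (fun y => e (Sum.inl y)))) := by
      intro c c' hcc
      rw [Finset.disjoint_left]
      intro u hu hu'
      rcases Finset.mem_insert.mp hu with h | h
      · rcases Finset.mem_insert.mp hu' with h' | h'
        · have : (Sum.inr ⟨f c, hfL c⟩ : X ⊕ ↥cfg.lines) = Sum.inr ⟨f c', hfL c'⟩ :=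
            e.injective (h ▸ h')
          have : f c = f c' := by simpa using this
          exact hcc (hfinj this)
        · obtain ⟨y, hy, hy'⟩ := Finset.mem_image.mp h'
          have : (Sum.inl y : X ⊕ ↥cfg.lines) = Sum.inr ⟨f c, hfL c⟩ :=
            e.injective (hy'.trans h)
          simp at this
      · obtain ⟨y, hy, hyu⟩ := Finset.mem_image.mp h
        rcases Finset.mem_insert.mp hu' with h' | h'
        · have : (Sum.inl y : X ⊕ ↥cfg.lines) = Sum.inr ⟨f c', hfL c'⟩ :=
            e.injective (hyu.trans h')
          simp at this
        · obtain ⟨y', hy', hy'u⟩ := Finset.mem_image.mp h'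
          have : (Sum.inl y : X ⊕ ↥cfg.lines) = Sum.inl y' :=
            e.injective (hyu.trans hy'u.symm)
          have hyy : y = y' := by simpa using this
          exact hftwo c c' hcc y hy (hyy ▸ hy')
    have key0 : ∀ c : Fin t,
        Disjoint ({e (Sum.inl x)} : Finset (Fin (v+b)))
          (insert (e (Sum.inr ⟨f c, hfL c⟩))
          (((f c).erase x).image (fun y => e (Sum.inl y)))) := by
      intro c
      rw [Finset.disjoint_left]
      intro u hu hu'
      rw [Finset.mem_singleton] at hu
      subst hu
      rcases Finset.mem_insert.mp hu' with h | h
      · have : (Sum.inl x : X ⊕ ↥cfg.lines) = Sum.inr ⟨f c, hfL c⟩ := e.injective h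
        simp at this
      · obtain ⟨y, hy, hyu⟩ := Finset.mem_image.mp h
        have : (Sum.inl y : X ⊕ ↥cfg.lines) = Sum.inl x := e.injective hyu
        have : y = x := by simpa using this
        exact Finset.ne_of_mem_erase hy this
    induction a using Fin.cases with
    | zero =>
      induction a' using Fin.cases with
      | zero => exact absurd rfl haa
      | succ c => simpa using key0 c
    | succ c =>
      induction a' using Fin.cases with
      | zero => simpa using (key0 c).symm
      | succ c' =>
        have hcc : c ≠ c' := by
          intro h; exact haa (by rw [h])
        simpa using key c c' hcc
  · -- sums
    intro a
    induction a using Fin.cases with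
    | zero =>
      simp only [Fin.cases_zero, Finset.sum_singleton]
      funext r
      simp only [Equiv.symm_apply_apply, hG0]
      rw [Pi.single_apply]
      by_cases h : r = i
      · subst h; simp [hxdef]
      · have : eX.symm r ≠ x := by
          rw [hxdef]; exact fun hc => h (eX.symm.injective hc)
        simp [this, h]
    | succ c =>
      simp only [Fin.cases_succ]
      have hnotmem : e (Sum.inr ⟨f c, hfL c⟩) ∉
          ((f c).erase x).image (fun y => e (Sum.inl y)) := by
        intro h
        obtain ⟨y, _, hy⟩ := Finset.mem_image.mp h
        have : (Sum.inl y : X ⊕ ↥cfg.lines) = Sum.inr ⟨f c, hfL c⟩ := e.injective hy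
        simp at this
      rw [Finset.sum_insert hnotmem]
      have hinj : Set.InjOn (fun y => e (Sum.inl y)) ((f c).erase x) := by
        intro y _ y' _ h
        have : (Sum.inl y : X ⊕ ↥cfg.lines) = Sum.inl y' := e.injective h
        simpa using this
      rw [Finset.sum_image hinj]
      funext r
      simp only [Pi.add_apply, Finset.sum_apply, Equiv.symm_apply_apply, hG0]
      rw [Pi.single_apply]
      have hsum : (∑ y ∈ (f c).erase x, if eX.symm r = y then (1 : ZMod 2) else 0)
          = if eX.symm r ∈ (f c).erase x then 1 else 0 := by
        simp [Finset.sum_ite_eq' ((f c).erase x) (eX.symm r)]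
      rw [hsum]
      by_cases h : r = i
      · subst h
        rw [← hxdef]
        simp [hfx c]
      · have hne : eX.symm r ≠ x := by
          rw [hxdef]; exact fun hc => h (eX.symm.injective hc)
        by_cases hmem : eX.symm r ∈ f c
        · simp only [Finset.mem_erase]
          rw [if_pos hmem, if_pos ⟨hne, hmem⟩, if_neg h]
          rfl
        · simp [hmem, Finset.mem_erase, hne, h]
end

section
/- Every (v_t, b_z)-configuration with z ≥ 2 and t ≥ 2 produces, via its dual incidence structure, a (z+1)-server PIR [v+b, b]-code. -/
/-- Every `(v_t, b_z)`-configuration with `z ≥ 2` and `t ≥ 2`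
produces, via its dual incidence structure, a `(z+1)`-server PIR `[v+b, b]`-code. -/
theorem pir_code_of_dual_configuration {X : Type*} [DecidableEq X] [Fintype X]
    (v b t z : ℕ) (cfg : CombConfig X v b t z) (hz : 2 ≤ z) (ht : 2 ≤ t) :
    ExistsPIRCode b (v + b) (z + 1) := by
  classical
  obtain ⟨lines, hv, hb, hsize, hdeg, htwo⟩ := cfg
  let eX : X ≃ Fin v := Fintype.equivFinOfCardEq hv
  let eL : {l // l ∈ lines} ≃ Fin b :=
    Fintype.equivFinOfCardEq (by rw [Fintype.card_coe, hb])
  let emb : Fin v ⊕ Fin b ≃ Fin (v + b) := finSumFinEquiv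
  set G : Matrix (Fin b) (Fin (v + b)) (ZMod 2) := fun r j =>
    Sum.elim
      (fun jx => if eX.symm jx ∈ (eL.symm r : Finset X) then 1 else 0)
      (fun jl => if jl = r then 1 else 0) (emb.symm j) with hG
  refine ⟨G, fun i => ?_⟩
  set L : {l // l ∈ lines} := eL.symm i with hLdef
  have hLcard : (L : Finset X).card = z := hsize L L.2
  let eP : {x // x ∈ (L : Finset X)} ≃ Fin z :=
    Fintype.equivFinOfCardEq (by rw [Fintype.card_coe, hLcard])
  set T : X → Finset (Finset X) :=
    fun x => (lines.filter fun l => x ∈ l).erase (L : Finset X) with hT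
  have hTmem : ∀ x l, l ∈ T x ↔ l ≠ (L : Finset X) ∧ l ∈ lines ∧ x ∈ l := by
    intro x l
    simp [hT, Finset.mem_erase, Finset.mem_filter, and_assoc]
  set S : X → Finset (Fin (v + b)) := fun x =>
    insert (emb (Sum.inl (eX x)))
      ((T x).attach.image fun l =>
        emb (Sum.inr (eL ⟨l.1, ((hTmem x l.1).1 l.2).2.1⟩))) with hS
  have hSmem : ∀ x j, j ∈ S x ↔ j = emb (Sum.inl (eX x)) ∨
      ∃ l : {l // l ∈ T x},
        j = emb (Sum.inr (eL ⟨l.1, ((hTmem x l.1).1 l.2).2.1⟩)) := by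
    intro x j
    simp [hS, eq_comm]
  have hGinr : ∀ (r : Fin b) (w : Fin b),
      G r (emb (Sum.inr w)) = if w = r then 1 else 0 := by
    intro r w; simp [hG]
  have hGinl : ∀ (r : Fin b) (x : X),
      G r (emb (Sum.inl (eX x))) = if x ∈ (eL.symm r : Finset X) then 1 else 0 := by
    intro r x; simp [hG]
  have hvalne : ∀ r : Fin b, r ≠ i → ((eL.symm r : Finset X) : Finset X) ≠ (L : Finset X) := by
    intro r hr h
    exact hr (by
      have : eL.symm r = L := Subtype.ext h
      rw [hLdef] at this
      exact eL.symm.injective this)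
  -- sum over the recovery set S x
  have hSsum : ∀ x, x ∈ (L : Finset X) →
      (∑ j ∈ S x, fun r => G r j) = Pi.single i (1 : ZMod 2) := by
    intro x hx
    funext r
    rw [Finset.sum_apply]
    have hnot : emb (Sum.inl (eX x)) ∉
        (T x).attach.image fun l =>
          emb (Sum.inr (eL ⟨l.1, ((hTmem x l.1).1 l.2).2.1⟩)) := by
      simp only [Finset.mem_image, not_exists]
      intro l h
      exact absurd (emb.injective h.2) (by simp)
    rw [hS]
    simp only []
    rw [Finset.sum_insert hnot]
    rw [Finset.sum_image (by
      intro p _ q _ hpq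
      have h1 := eL.injective (Sum.inr.inj (emb.injective hpq))
      injection h1 with h2
      exact Subtype.ext h2)]
    have hterm : ∀ p ∈ (T x).attach,
        G r (emb (Sum.inr (eL ⟨p.1, ((hTmem x p.1).1 p.2).2.1⟩)))
          = if p.1 = (eL.symm r : Finset X) then (1 : ZMod 2) else 0 := by
      intro p _
      rw [hGinr]
      simp only [Equiv.apply_eq_iff_eq_symm_apply, Subtype.ext_iff]
    rw [Finset.sum_congr rfl hterm]
    rw [Finset.sum_attach (T x) (fun l => if l = (eL.symm r : Finset X) then (1 : ZMod 2) else 0)]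
    rw [Finset.sum_ite_eq' (T x) ((eL.symm r : Finset X)) (fun _ => (1 : ZMod 2))]
    rw [hGinl]
    rw [Pi.single_apply]
    by_cases hr : r = i
    · subst hr
      rw [← hLdef]
      have h1 : x ∈ (L : Finset X) := hx
      have h2 : (L : Finset X) ∉ T x := by
        rw [hTmem]; tauto
      simp [h1, h2]
    · have h2 : ((eL.symm r : Finset X) ∈ T x) ↔ x ∈ (eL.symm r : Finset X) := by
        rw [hTmem]
        have := hvalne r hr
        have hmem := (eL.symm r).2
        tauto
      rw [if_congr h2 rfl rfl]
      have : ∀ c : Prop, ∀ inst : Decidable c,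
          (if c then (1:ZMod 2) else 0) + (if c then (1:ZMod 2) else 0) = 0 := by
        intro c inst; split <;> decide
      rw [this]
      simp [hr]
  -- disjointness
  have hSdisj : ∀ x y, x ∈ (L : Finset X) → y ∈ (L : Finset X) → x ≠ y →
      Disjoint (S x) (S y) := by
    intro x y hx hy hxy
    rw [Finset.disjoint_left]
    intro j hjx hjy
    rw [hSmem] at hjx hjy
    rcases hjx with h1 | ⟨p, h1⟩ <;> rcases hjy with h2 | ⟨q, h2⟩
    · exact hxy (eX.injective (Sum.inl.inj (emb.injective (h1.symm.trans h2))))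
    · exact absurd (emb.injective (h1.symm.trans h2)) (by simp)
    · exact absurd (emb.injective (h1.symm.trans h2)) (by simp)
    · have h3 := eL.injective (Sum.inr.inj (emb.injective (h1.symm.trans h2)))
      have h4 : p.1 = q.1 := Subtype.ext_iff.1 h3
      obtain ⟨hp1, hp2, hp3⟩ := (hTmem x p.1).1 p.2
      obtain ⟨hq1, hq2, hq3⟩ := (hTmem y q.1).1 q.2
      -- p.1 is a line ≠ L containing both x and y; L also contains both
      have hsub : ({(L : Finset X), p.1} : Finset (Finset X)) ⊆
          lines.filter fun m => x ∈ m ∧ y ∈ m := by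
        intro m hm
        rw [Finset.mem_insert, Finset.mem_singleton] at hm
        rcases hm with rfl | rfl
        · exact Finset.mem_filter.2 ⟨L.2, hx, hy⟩
        · exact Finset.mem_filter.2 ⟨hp2, hp3, h4 ▸ hq3⟩
      have hcard : ({(L : Finset X), p.1} : Finset (Finset X)).card = 2 := by
        rw [Finset.card_insert_of_notMem (by simpa using (Ne.symm hp1))]
        simp
      have := Finset.card_le_card hsub
      rw [hcard] at this
      have := this.trans (htwo x y hxy)
      omega
  have hSsing : ∀ x, Disjoint ({emb (Sum.inr i)} : Finset (Fin (v + b))) (S x) := by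
    intro x
    rw [Finset.disjoint_left]
    intro j hj hjx
    rw [Finset.mem_singleton] at hj
    rw [hSmem] at hjx
    subst hj
    rcases hjx with h1 | ⟨p, h1⟩
    · exact absurd (emb.injective h1) (by simp)
    · have h3 : Sum.inr i = Sum.inr (eL ⟨p.1, ((hTmem x p.1).1 p.2).2.1⟩) :=
        emb.injective h1
      have h4 : i = eL ⟨p.1, ((hTmem x p.1).1 p.2).2.1⟩ := Sum.inr.inj h3
      have h5 : eL.symm i = ⟨p.1, ((hTmem x p.1).1 p.2).2.1⟩ := by
        rw [h4, Equiv.symm_apply_apply]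
      have h6 : p.1 = (L : Finset X) := by
        rw [hLdef, h5]
      exact ((hTmem x p.1).1 p.2).1 h6
  -- recovery sets
  refine ⟨fun a => if h : (a : ℕ) < z then S (eP.symm ⟨a, h⟩ : X) else {emb (Sum.inr i)},
    ?_, ?_⟩
  · intro a a' hne
    dsimp only
    by_cases ha : (a : ℕ) < z <;> by_cases ha' : (a' : ℕ) < z
    · rw [dif_pos ha, dif_pos ha']
      refine hSdisj _ _ (eP.symm ⟨a, ha⟩).2 (eP.symm ⟨a', ha'⟩).2 ?_
      intro h
      apply hne
      have : eP.symm ⟨(a : ℕ), ha⟩ = eP.symm ⟨(a' : ℕ), ha'⟩ := Subtype.ext h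
      have := eP.symm.injective this
      exact Fin.ext (Fin.mk.inj_iff.1 this)
    · rw [dif_pos ha, dif_neg ha']
      exact (hSsing _).symm
    · rw [dif_neg ha, dif_pos ha']
      exact hSsing _
    · exact absurd (Fin.ext (by omega : (a : ℕ) = (a' : ℕ))) hne
  · intro a
    dsimp only
    by_cases ha : (a : ℕ) < z
    · rw [dif_pos ha]
      exact hSsum _ (eP.symm ⟨a, ha⟩).2
    · rw [dif_neg ha]
      funext r
      rw [Finset.sum_apply, Finset.sum_singleton, hGinr, Pi.single_apply]
      simp [eq_comm]
end

section
/- Let q be a prime power, N ≥ 2 an integer, and let k and s be integers with 2 ≤ k ≤ 1 + (q^N−1)/(q−1) − q^{N−1} and 2·q^{N−1} ≤ s ≤ q^N. Then there exists a k-server PIR [m,s]-code with m = s + (k−1)·q^{N−1}. -/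
lemma exists_pir_of_lines (s k t : ℕ) (f : Fin (k-1) → Fin s → Fin t)
    (hf : ∀ b b' : Fin (k-1), b ≠ b' → ∀ i j : Fin s,
      f b i = f b j → f b' i = f b' j → i = j) :
    ExistsPIRCode s (s + (k-1)*t) k := by
  have hcard : Fintype.card (Fin s ⊕ Fin (k-1) × Fin t) = s + (k-1)*t := by
    simp
  let ι : (Fin s ⊕ Fin (k-1) × Fin t) ≃ Fin (s + (k-1)*t) :=
    Fintype.equivFinOfCardEq hcard
  refine ⟨fun r j => match ι.symm j with
    | .inl j' => if r = j' then 1 else 0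
    | .inr (b, c) => if f b r = c then 1 else 0, ?_⟩
  intro i
  refine ⟨fun a => if h : (a : ℕ) = 0 then {ι (.inl i)}
    else
      insert (ι (.inr (⟨a.1 - 1, by omega⟩, f ⟨a.1 - 1, by omega⟩ i)))
        ((Finset.univ.filter (fun j => j ≠ i ∧ f ⟨a.1 - 1, by omega⟩ j = f ⟨a.1 - 1, by omega⟩ i)).image
          (fun j => ι (.inl j))), ?_, ?_⟩
  · -- pairwise disjoint
    intro a a' hne
    rw [Finset.disjoint_left]
    intro x hx hx'
    by_cases ha : (a : ℕ) = 0 <;> by_cases ha' : (a' : ℕ) = 0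
    · exact absurd (Fin.ext (ha.trans ha'.symm)) hne
    · simp only [dif_pos ha] at hx
      simp only [dif_neg ha', Finset.mem_insert, Finset.mem_image, Finset.mem_filter,
        Finset.mem_univ, true_and, Finset.mem_singleton] at hx hx'
      subst hx
      rcases hx' with h | ⟨j, hj, h⟩
      · exact absurd (ι.injective h) (by simp)
      · exact hj.1 (Sum.inl.inj (ι.injective h))
    · simp only [dif_pos ha'] at hx'
      simp only [dif_neg ha, Finset.mem_insert, Finset.mem_image, Finset.mem_filter,
        Finset.mem_univ, true_and, Finset.mem_singleton] at hx hx'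
      subst hx'
      rcases hx with h | ⟨j, hj, h⟩
      · exact absurd (ι.injective h.symm) (by simp)
      · exact hj.1 (Sum.inl.inj (ι.injective h))
    · have hlt : a.1 - 1 < k - 1 := by omega
      have hlt' : a'.1 - 1 < k - 1 := by omega
      have hbb' : (⟨a.1 - 1, hlt⟩ : Fin (k-1)) ≠ ⟨a'.1 - 1, hlt'⟩ := by
        intro h
        apply hne
        have h2 := Fin.mk.inj_iff.mp h
        exact Fin.ext (by omega)
      simp only [dif_neg ha, dif_neg ha', Finset.mem_insert, Finset.mem_image,
        Finset.mem_filter, Finset.mem_univ, true_and] at hx hx'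
      rcases hx with h | ⟨j, hj, h⟩ <;> rcases hx' with h' | ⟨j', hj', h'⟩
      · exact hbb' (congrArg Prod.fst (Sum.inr.inj (ι.injective (h.symm.trans h'))))
      · exact absurd (ι.injective (h'.trans h)) (by simp)
      · exact absurd (ι.injective (h.trans h')) (by simp)
      · have hjj' : j = j' := Sum.inl.inj (ι.injective (h.trans h'.symm))
        subst hjj'
        exact hj.1 (hf _ _ hbb' j i hj.2 hj'.2)
  · -- sum condition
    intro a
    by_cases ha : (a : ℕ) = 0
    · simp only [dif_pos ha, Finset.sum_singleton]
      funext r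
      simp only [Equiv.symm_apply_apply, Pi.single_apply]
    · simp only [dif_neg ha]
      set b : Fin (k-1) := ⟨a.1 - 1, by omega⟩ with hb
      have hnotmem : ι (.inr (b, f b i)) ∉
          ((Finset.univ.filter (fun j => j ≠ i ∧ f b j = f b i)).image (fun j => ι (.inl j))) := by
        simp only [Finset.mem_image, Finset.mem_filter, not_exists]
        rintro j ⟨_, h⟩
        exact absurd (ι.injective h) (by simp)
      rw [Finset.sum_insert hnotmem]
      rw [Finset.sum_image (by intro x _ y _ h; exact Sum.inl.inj (ι.injective h))]
      funext r
      simp only [Pi.add_apply, Finset.sum_apply, Equiv.symm_apply_apply]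
      rw [Finset.sum_ite_eq]
      simp only [Finset.mem_filter, Finset.mem_univ, true_and, Pi.single_apply]
      by_cases hri : r = i
      · subst hri
        rw [if_pos rfl, if_neg (by simp), if_pos rfl, add_zero]
      · by_cases hfr : f b r = f b i
        · rw [if_pos hfr, if_pos ⟨hri, hfr⟩, if_neg hri]
          rfl
        · rw [if_neg hfr, if_neg (fun h => hfr h.2), if_neg hri, add_zero]

/-- Let `q` be a prime power, `N ≥ 2`, and let `k, s` be integers
with `2 ≤ k ≤ 1 + (q^N - 1)/(q - 1) - q^{N-1}` and `2·q^{N-1} ≤ s ≤ q^N`. Then there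
exists a `k`-server PIR `[s + (k-1)·q^{N-1}, s]`-code. -/
theorem pir_code_of_restricted_affine_packing (q N : ℕ) (hq : IsPrimePow q) (hN : 2 ≤ N)
    (k s : ℕ) (hk2 : 2 ≤ k) (hk : k ≤ 1 + (q ^ N - 1) / (q - 1) - q ^ (N - 1))
    (hs1 : 2 * q ^ (N - 1) ≤ s) (hs2 : s ≤ q ^ N) :
    ExistsPIRCode s (s + (k - 1) * q ^ (N - 1)) k := by
  classical
  obtain ⟨p, n, hp, hn, rfl⟩ := hq
  haveI : Fact p.Prime := ⟨Nat.prime_iff.mpr hp⟩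
  set q := p ^ n with hqdef
  have hq2 : 2 ≤ q := Nat.one_lt_pow hn.ne' (Nat.prime_iff.mpr hp).two_le
  set t := q ^ (N - 1) with ht
  -- arithmetic: k ≤ t
  have hqN : q ^ N = t * q := by
    rw [ht, ← pow_succ]
    congr 1
    omega
  have htq : q ≤ t := by
    rw [ht]
    calc q = q ^ 1 := (pow_one q).symm
    _ ≤ q ^ (N - 1) := Nat.pow_le_pow_right (by omega) (by omega)
  have hD : (q ^ N - 1) / (q - 1) ≤ 2 * t - 1 := by
    apply Nat.div_le_of_le_mul
    rw [hqN]
    have h1 : 2 * t + q ≤ t * q + 2 := by nlinarith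
    zify [show 1 ≤ t * q from by nlinarith, show 1 ≤ q from by omega,
      show 1 ≤ 2 * t from by omega]
    zify at h1
    nlinarith [h1]
  have hkt : k ≤ t := by omega
  -- the field and spaces
  set F := GaloisField p n with hF
  haveI : Fintype F := Fintype.ofFinite F
  have hcardF : Fintype.card F = q := by
    rw [← Nat.card_eq_fintype_card, GaloisField.card p n hn.ne']
  set M := N - 1 with hM
  have hcardW : Fintype.card (Fin M → F) = t := by
    simp [hcardF, ht, hM]
  have hcardV : Fintype.card (Fin N → F) = q ^ N := by
    simp [hcardF]
  -- embeddings
  obtain ⟨pt⟩ : Nonempty (Fin s ↪ (Fin N → F)) := by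
    rw [Function.Embedding.nonempty_iff_card_le, Fintype.card_fin, hcardV]
    exact hs2
  obtain ⟨dir⟩ : Nonempty (Fin (k - 1) ↪ (Fin M → F)) := by
    rw [Function.Embedding.nonempty_iff_card_le, Fintype.card_fin, hcardW]
    omega
  let e : (Fin M → F) ≃ Fin t := Fintype.equivFinOfCardEq hcardW
  -- projections along direction (v, 1)
  have hMN : ∀ r : Fin M, (r : ℕ) < N := fun r => by have := r.isLt; omega
  have hNN : N - 1 < N := by omega
  let π : (Fin M → F) → (Fin N → F) → (Fin M → F) := fun v x =>
    fun r => x ⟨r.1, hMN r⟩ - x ⟨N - 1, hNN⟩ * v r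
  have key : ∀ v w : Fin M → F, v ≠ w → ∀ x y : Fin N → F,
      π v x = π v y → π w x = π w y → x = y := by
    intro v w hvw x y h1 h2
    have hd : x ⟨N - 1, hNN⟩ - y ⟨N - 1, hNN⟩ = 0 := by
      by_contra hd
      apply hvw
      funext r
      have e1 := congrFun h1 r
      have e2 := congrFun h2 r
      simp only [π] at e1 e2
      have c1 : x ⟨r.1, hMN r⟩ - y ⟨r.1, hMN r⟩
          = (x ⟨N - 1, hNN⟩ - y ⟨N - 1, hNN⟩) * v r := by rw [sub_mul, sub_eq_sub_iff_sub_eq_sub]; exact e1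
      have c2 : x ⟨r.1, hMN r⟩ - y ⟨r.1, hMN r⟩
          = (x ⟨N - 1, hNN⟩ - y ⟨N - 1, hNN⟩) * w r := by rw [sub_mul, sub_eq_sub_iff_sub_eq_sub]; exact e2
      have := c1.symm.trans c2
      exact mul_left_cancel₀ hd this
    have hlast : x ⟨N - 1, hNN⟩ = y ⟨N - 1, hNN⟩ := sub_eq_zero.mp hd
    funext u
    by_cases hu : (u : ℕ) < N - 1
    · have e1 := congrFun h1 ⟨u.1, by omega⟩
      simp only [π, hlast] at e1
      have : x ⟨u.1, hMN ⟨u.1, by omega⟩⟩ = y ⟨u.1, hMN ⟨u.1, by omega⟩⟩ := by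
        linear_combination e1
      convert this using 2
    · have hu' : u = ⟨N - 1, hNN⟩ := Fin.ext (by show (u : ℕ) = N - 1; have := u.isLt; omega)
      rw [hu', hlast]
  -- build f and conclude
  have := exists_pir_of_lines s k t
    (fun b i => e (π (dir b) (pt i)))
    (by
      intro b b' hbb' i j h1 h2
      apply pt.injective
      exact key (dir b) (dir b') (fun hd => hbb' (dir.injective hd)) (pt i) (pt j)
        (e.injective h1) (e.injective h2))
  exact this
end

section
/- Let h ≥ 2 and ℓ ≥ 2 be integers and let v be an integer with 2 ≤ v ≤ ℓ; set s = v·h^{ℓ−1}. Then there exists an (h+1)-server PIR [m,s]-code with m = s + h^ℓ. -/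
lemma pir_transport {S M : Type} [Fintype S] [Fintype M] [DecidableEq S] {s m k : ℕ}
    (eS : Fin s ≃ S) (eM : Fin m ≃ M) (G : Matrix S M (ZMod 2))
    (H : ∀ i : S, ∃ R : Fin k → Finset M,
      (Pairwise fun a b => Disjoint (R a) (R b)) ∧
      ∀ a : Fin k, (∑ j ∈ R a, fun r => G r j) = Pi.single i (1 : ZMod 2)) :
    ExistsPIRCode s m k := by
  refine ⟨fun r j => G (eS r) (eM j), fun i => ?_⟩
  obtain ⟨R, hdisj, hsum⟩ := H (eS i)
  refine ⟨fun a => (R a).map eM.symm.toEmbedding, fun a b hab =>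
    (Finset.disjoint_map _).mpr (hdisj hab), fun a => ?_⟩
  funext r
  have h1 := congrFun (hsum a) (eS r)
  rw [Finset.sum_apply] at h1
  rw [Finset.sum_apply, Finset.sum_map]
  simp only [Equiv.coe_toEmbedding, Equiv.apply_symm_apply]
  rw [h1, Pi.single_apply, Pi.single_apply]
  exact if_congr eS.injective.eq_iff rfl rfl

/-- The generator matrix: identity part indexed by blocks, incidence part by points. -/
def pirG {h n v : ℕ} (hv : v ≤ n + 1) :
    Matrix (Fin v × (Fin n → Fin h))
      ((Fin v × (Fin n → Fin h)) ⊕ (Fin (n + 1) → Fin h)) (ZMod 2) :=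
  fun b j => Sum.rec (fun b' => if b = b' then 1 else 0)
    (fun p => if (Fin.castLE hv b.1).removeNth p = b.2 then 1 else 0) j

@[simp] lemma pirG_inl {h n v : ℕ} (hv : v ≤ n + 1) (b b' : Fin v × (Fin n → Fin h)) :
    pirG hv b (Sum.inl b') = if b = b' then 1 else 0 := rfl

@[simp] lemma pirG_inr {h n v : ℕ} (hv : v ≤ n + 1) (b : Fin v × (Fin n → Fin h))
    (p : Fin (n + 1) → Fin h) :
    pirG hv b (Sum.inr p) = if (Fin.castLE hv b.1).removeNth p = b.2 then 1 else 0 := rfl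

lemma pir_aux_s19 (h n v : ℕ) (hv : v ≤ n + 1) :
    ExistsPIRCode (v * h ^ n) (v * h ^ n + h ^ (n + 1)) (h + 1) := by
  have hcardB : Fintype.card (Fin v × (Fin n → Fin h)) = v * h ^ n := by simp
  have hcardM : Fintype.card ((Fin v × (Fin n → Fin h)) ⊕ (Fin (n + 1) → Fin h))
      = v * h ^ n + h ^ (n + 1) := by simp
  set c : Fin v → Fin (n + 1) := Fin.castLE hv with hc
  have hcinj : Function.Injective c := Fin.castLE_injective hv
  refine pir_transport (Fintype.equivFinOfCardEq hcardB).symm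
    (Fintype.equivFinOfCardEq hcardM).symm (pirG hv) ?_
  rintro ⟨t, z⟩
  set p : Fin h → (Fin (n + 1) → Fin h) := fun a => (c t).insertNth a z with hp
  have hpval : ∀ a, p a (c t) = a := fun a => Fin.insertNth_apply_same _ _ _
  have hprem : ∀ a, (c t).removeNth (p a) = z := fun a => Fin.removeNth_insertNth _ _ _
  have hpinj : Function.Injective p := fun a b hab => by
    have := congrFun hab (c t); rwa [hpval, hpval] at this
  have key : ∀ t', t' ≠ t → ∀ a b : Fin h,
      (c t').removeNth (p a) = (c t').removeNth (p b) → a = b := by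
    intro t' ht' a b hab
    obtain ⟨j, hj⟩ := Fin.exists_succAbove_eq
      (fun hcc => ht' (hcinj hcc).symm : c t ≠ c t')
    have := congrFun hab j
    simp only [Fin.removeNth, hj, hpval] at this
    exact this
  refine ⟨Fin.cases {Sum.inl (t, z)} (fun a =>
    insert (Sum.inr (p a))
      ((Finset.univ.erase t).image fun t' => Sum.inl (t', (c t').removeNth (p a)))), ?_, ?_⟩
  · -- disjointness
    intro a b hab
    rw [Finset.disjoint_left]
    intro x hxa hxb
    induction a using Fin.cases with
    | zero =>
      induction b using Fin.cases with
      | zero => exact hab rfl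
      | succ b =>
        simp only [Fin.cases_zero, Finset.mem_singleton] at hxa
        simp only [Fin.cases_succ, Finset.mem_insert, Finset.mem_image,
          Finset.mem_erase] at hxb
        subst hxa
        rcases hxb with h1 | ⟨t', ⟨ht', -⟩, h2⟩
        · exact nomatch h1
        · exact ht' (congrArg Prod.fst (Sum.inl.inj h2))
    | succ a =>
      induction b using Fin.cases with
      | zero =>
        simp only [Fin.cases_zero, Finset.mem_singleton] at hxb
        simp only [Fin.cases_succ, Finset.mem_insert, Finset.mem_image,
          Finset.mem_erase] at hxa
        subst hxb
        rcases hxa with h1 | ⟨t', ⟨ht', -⟩, h2⟩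
        · exact nomatch h1
        · exact ht' (congrArg Prod.fst (Sum.inl.inj h2))
      | succ b =>
        have hab' : a ≠ b := fun e => hab (by rw [e])
        simp only [Fin.cases_succ, Finset.mem_insert, Finset.mem_image,
          Finset.mem_erase] at hxa hxb
        rcases hxa with h1 | ⟨t', ⟨ht', -⟩, h2⟩ <;>
          rcases hxb with h3 | ⟨t'', ⟨ht'', -⟩, h4⟩
        · exact hab' (hpinj (Sum.inr.inj (h1.symm.trans h3)))
        · rw [h1] at h4; exact nomatch h4
        · rw [h3] at h2; exact nomatch h2
        · rw [← h2] at h4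
          have he := Sum.inl.inj h4
          have ht : t'' = t' := congrArg Prod.fst he
          subst ht
          exact hab' (key t'' ht'' a b (congrArg Prod.snd he).symm)
  · -- sums
    intro a
    induction a using Fin.cases with
    | zero =>
      funext r
      simp only [Fin.cases_zero, Finset.sum_apply, Finset.sum_singleton, pirG_inl]
      rw [Pi.single_apply]
    | succ a =>
      funext r
      obtain ⟨t', z'⟩ := r
      simp only [Fin.cases_succ, Finset.sum_apply]
      have hnotmem : Sum.inr (p a) ∉
          (Finset.univ.erase t).image fun t' => Sum.inl (t', (c t').removeNth (p a)) := by
        simp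
      rw [Finset.sum_insert hnotmem, Finset.sum_image (by
        intro x _ y _ hxy
        exact congrArg Prod.fst (Sum.inl.inj hxy))]
      simp only [pirG_inl, pirG_inr]
      rcases eq_or_ne t' t with rfl | htt
      · rw [Finset.sum_eq_zero (fun t'' ht'' => by
          rw [if_neg]
          rintro ⟨rfl, -⟩
          exact (Finset.mem_erase.mp ht'').1 rfl)]
        rcases eq_or_ne z' z with rfl | hzz
        · rw [if_pos (hprem a), Pi.single_apply, if_pos rfl, add_zero]
        · rw [if_neg (show ¬(c t').removeNth (p a) = z' from by
              rw [hprem a]; exact fun e => hzz e.symm),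
            Pi.single_apply,
            if_neg (show ¬(t', z') = (t', z) from fun e => hzz (congrArg Prod.snd e)),
            add_zero]
      · rw [Finset.sum_eq_single t'
            (fun t'' _ ht'' => by rw [if_neg]; rintro ⟨rfl, -⟩; exact ht'' rfl)
            (fun habs => absurd (Finset.mem_erase.mpr ⟨htt, Finset.mem_univ t'⟩) habs)]
        have hiff : ((t', z') = (t', (c t').removeNth (p a))) ↔
            ((c t').removeNth (p a) = z') := by
          constructor
          · intro e; exact (congrArg Prod.snd e).symm
          · intro e; rw [e]
        rw [Pi.single_apply, if_congr hiff rfl rfl]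
        rcases eq_or_ne ((c t').removeNth (p a)) z' with he | he
        · rw [if_pos he,
            if_neg (show ¬(t', z') = (t, z) from fun e => htt (congrArg Prod.fst e))]
          exact CharTwo.add_self_eq_zero 1
        · rw [if_neg he,
            if_neg (show ¬(t', z') = (t, z) from fun e => htt (congrArg Prod.fst e)),
            add_zero]

/-- Let `h ≥ 2`, `ℓ ≥ 2`, and `2 ≤ v ≤ ℓ`; set `s = v·h^{ℓ-1}`.
Then there exists an `(h+1)`-server PIR `[s + h^ℓ, s]`-code (from the dual of the
configuration given by `v` coset partitions of `C_h^ℓ`). -/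
theorem pir_code_of_dual_product_packing (h l v : ℕ) (hh : 2 ≤ h) (hl : 2 ≤ l)
    (hv2 : 2 ≤ v) (hvl : v ≤ l) (s : ℕ) (hs : s = v * h ^ (l - 1)) :
    ExistsPIRCode s (s + h ^ l) (h + 1) := by
  obtain ⟨n, rfl⟩ : ∃ n, l = n + 1 := ⟨l - 1, (Nat.succ_pred_eq_of_pos (by omega)).symm⟩
  subst hs
  simpa using pir_aux_s19 h n v hvl
end
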